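/- arXiv:1704.05494 — 4 statements merged into one kernel-verified Lean document; each statement's English description precedes it below -/
import Mathlib

section
/- Let p(m;d) denote the number of admissible pinnacle sets with maximum element m and cardinality d. Then for m - 1 > 2d, p(m;d) = p(m-1;d) + p(m-1;d-1). -/
/-- `i` is a peak of the permutation `w` of `{1,…,n}` (represented on `Fin n`):
`0 < i < n-1` (0-indexed) and `w(i-1) < w(i) > w(i+1)`. -/
def IsPeak {n : ℕ} (w : Equiv.Perm (Fin n)) (i : Fin n) : Prop :=
  0 < i.val ∧ ∃ h : i.val + 1 < n,
    w ⟨i.val - 1, Nat.lt_of_le_of_lt (Nat.sub_le _ _) i.isLt⟩ < w i ∧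
    w ⟨i.val + 1, h⟩ < w i

/-- The pinnacle set of `w`, as a set of values in `{1,…,n}`. -/
def Pin {n : ℕ} (w : Equiv.Perm (Fin n)) : Set ℕ :=
  {v | ∃ i : Fin n, IsPeak w i ∧ v = (w i).val + 1}

/-- `p_S(n)`: the number of permutations in `S_n` with pinnacle set `S`. -/
noncomputable def pcount (n : ℕ) (S : Set ℕ) : ℕ :=
  Nat.card {w : Equiv.Perm (Fin n) // Pin w = S}

/-- `S` is an admissible pinnacle set. -/
def Admissible (S : Finset ℕ) : Prop :=
  ∃ (n : ℕ) (w : Equiv.Perm (Fin n)), Pin w = ↑S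

/-- `𝔭(m;d)`: the number of admissible pinnacle sets with maximum `m` and
cardinality `d`. -/
noncomputable def padm (m d : ℕ) : ℕ :=
  Nat.card {S : Finset ℕ // Admissible S ∧ S.card = d ∧ ∃ h : S.Nonempty, S.max' h = m}



def adm (S : Finset ℕ) : Prop := ∀ x ∈ S, 2 * (S.filter (· ≤ x)).card < x

open Finset in
lemma no_adjacent_peaks {n : ℕ} (w : Equiv.Perm (Fin n)) (p q : Fin n)
    (hp : IsPeak w p) (hq : IsPeak w q) (hpq : q.val = p.val + 1) : False := by
  obtain ⟨hp0, hpn, hl, hr⟩ := hp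
  obtain ⟨hq0, hqn, hl', hr'⟩ := hq
  have h1 : w ⟨p.val + 1, hpn⟩ < w p := hr
  have e : (⟨q.val - 1, Nat.lt_of_le_of_lt (Nat.sub_le _ _) q.isLt⟩ : Fin n) = p := by
    apply Fin.ext; simp [hpq]
  rw [e] at hl'
  have e2 : (⟨p.val + 1, hpn⟩ : Fin n) = q := by apply Fin.ext; simp [hpq]
  rw [e2] at h1
  exact absurd (h1.trans hl') (lt_irrefl _)

open Finset in
lemma adm_of_pin {n : ℕ} (w : Equiv.Perm (Fin n)) (S : Finset ℕ) (hw : Pin w = ↑S) : adm S := by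
  classical
  intro x hx
  set P : Finset (Fin n) := Finset.univ.filter (fun p => IsPeak w p ∧ (w p).val + 1 ≤ x) with hP
  have hmemP : ∀ p : Fin n, p ∈ P ↔ IsPeak w p ∧ (w p).val + 1 ≤ x := by
    intro p; simp [hP]
  have hcard : (S.filter (· ≤ x)).card = P.card := by
    symm
    apply Finset.card_bij (fun (p : Fin n) (_ : p ∈ P) => (w p).val + 1)
    · intro p hp
      rw [hmemP] at hp
      simp only [Finset.mem_filter]
      refine ⟨?_, hp.2⟩
      have : ((w p).val + 1) ∈ Pin w := ⟨p, hp.1, rfl⟩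
      rw [hw] at this; exact_mod_cast this
    · intro p hp p' hp' hee
      have : w p = w p' := Fin.ext (by omega)
      exact w.injective this
    · intro y hy
      simp only [Finset.mem_filter] at hy
      have : y ∈ Pin w := by rw [hw]; exact_mod_cast hy.1
      obtain ⟨p, hpk, hyv⟩ := this
      exact ⟨p, (hmemP p).2 ⟨hpk, by omega⟩, hyv.symm⟩
  -- P is nonempty since x itself is a pinnacle value
  have hPne : P.Nonempty := by
    have : x ∈ Pin w := by rw [hw]; exact_mod_cast hx
    obtain ⟨p, hpk, hxv⟩ := this
    exact ⟨p, (hmemP p).2 ⟨hpk, le_of_eq hxv.symm⟩⟩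
  set P' : Finset ℕ := P.image Fin.val with hP'
  have hP'card : P'.card = P.card := Finset.card_image_of_injective _ Fin.val_injective
  have hP'ne : P'.Nonempty := hPne.image _
  set a : ℕ := P'.min' hP'ne with ha
  have hmemP' : ∀ q, q ∈ P' ↔ ∃ p : Fin n, p ∈ P ∧ p.val = q := by
    intro q; simp [hP', eq_comm]
  have hapos : 0 < a := by
    obtain ⟨p, hp, hpv⟩ := (hmemP' a).1 (P'.min'_mem hP'ne)
    have := ((hmemP p).1 hp).1.1; omega
  have haP' : a ∈ P' := P'.min'_mem hP'ne
  set Q : Finset ℕ := (P' ∪ P'.image (· + 1)) ∪ {a - 1} with hQ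
  have hdisj1 : Disjoint P' (P'.image (· + 1)) := by
    rw [Finset.disjoint_left]
    intro q hq hq'
    obtain ⟨p0, hp0, hp0v⟩ := Finset.mem_image.1 hq'
    obtain ⟨p, hp, hpv⟩ := (hmemP' q).1 hq
    obtain ⟨p', hp', hp'v⟩ := (hmemP' p0).1 hp0
    exact no_adjacent_peaks w p' p ((hmemP p').1 hp').1 ((hmemP p).1 hp).1 (by omega)
  have hdisj2 : Disjoint (P' ∪ P'.image (· + 1)) {a - 1} := by
    rw [Finset.disjoint_right]
    intro q hq
    rw [Finset.mem_singleton] at hq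
    subst hq
    intro hmem
    rcases Finset.mem_union.1 hmem with hc | hc
    · exact absurd (P'.min'_le _ hc) (by omega)
    · obtain ⟨p0, hp0, hp0v⟩ := Finset.mem_image.1 hc
      have := P'.min'_le _ hp0; omega
  have hQcard : Q.card = 2 * P.card + 1 := by
    rw [hQ, Finset.card_union_of_disjoint hdisj2, Finset.card_union_of_disjoint hdisj1,
      Finset.card_image_of_injective _ (add_left_injective 1), Finset.card_singleton, hP'card]
    ring
  -- every element of Q is < n and its w-value is < x
  have hQprop : ∀ q ∈ Q, ∃ hq : q < n, (w ⟨q, hq⟩).val < x := by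
    intro q hq
    rcases Finset.mem_union.1 hq with hq1 | hq1
    · rcases Finset.mem_union.1 hq1 with hq2 | hq2
      · obtain ⟨p, hp, hpv⟩ := (hmemP' q).1 hq2
        obtain ⟨hpk, hpx⟩ := (hmemP p).1 hp
        have hqlt : q < n := by omega
        refine ⟨hqlt, ?_⟩
        have e : (⟨q, hqlt⟩ : Fin n) = p := Fin.ext (by simp [hpv])
        rw [e]; omega
      · obtain ⟨p0, hp0, hp0v⟩ := Finset.mem_image.1 hq2
        obtain ⟨p, hp, hpv⟩ := (hmemP' p0).1 hp0
        obtain ⟨hpk, hpx⟩ := (hmemP p).1 hp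
        obtain ⟨h0, hn, hl, hr⟩ := hpk
        have hqlt : q < n := by omega
        refine ⟨hqlt, ?_⟩
        have e : (⟨q, hqlt⟩ : Fin n) = ⟨p.val + 1, hn⟩ := Fin.ext (by simp; omega)
        rw [e]
        have := Fin.lt_iff_val_lt_val.1 hr; omega
    · rw [Finset.mem_singleton] at hq1
      subst hq1
      obtain ⟨p, hp, hpv⟩ := (hmemP' a).1 haP'
      obtain ⟨hpk, hpx⟩ := (hmemP p).1 hp
      obtain ⟨h0, hn, hl, hr⟩ := hpk
      have hqlt : a - 1 < n := by omega
      refine ⟨hqlt, ?_⟩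
      have e : (⟨a - 1, hqlt⟩ : Fin n) = ⟨p.val - 1, Nat.lt_of_le_of_lt (Nat.sub_le _ _) p.isLt⟩ :=
        Fin.ext (by simp [hpv])
      rw [e]
      have := Fin.lt_iff_val_lt_val.1 hl; omega
  have hinj : Q.card ≤ (Finset.range x).card := by
    apply Finset.card_le_card_of_injOn (fun q => if hq : q < n then (w ⟨q, hq⟩).val else 0)
    · intro q hq
      obtain ⟨h1, h2⟩ := hQprop q hq
      simp only [h1, dif_pos, Finset.mem_range]
      exact Finset.mem_coe.2 (Finset.mem_range.2 h2)
    · intro q hq q' hq' heq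
      obtain ⟨h1, _⟩ := hQprop q (by simpa using hq)
      obtain ⟨h1', _⟩ := hQprop q' (by simpa using hq')
      simp only [h1, h1', dif_pos] at heq
      have : w ⟨q, h1⟩ = w ⟨q', h1'⟩ := Fin.ext heq
      have := w.injective this
      simpa using congrArg Fin.val this
  rw [Finset.card_range] at hinj
  rw [hcard]
  omega


lemma sorted_eq_of_mem_iff {l1 l2 : List ℕ} (h1 : l1.Pairwise (· < ·)) (h2 : l2.Pairwise (· < ·))
    (h : ∀ x, x ∈ l1 ↔ x ∈ l2) : l1 = l2 := by
  haveI : Std.Antisymm (α := ℕ) (· < ·) := ⟨fun a b ha hb => absurd hb (lt_asymm ha)⟩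
  refine List.Perm.eq_of_pairwise' h1 h2 ?_
  refine List.perm_of_nodup_nodup_toFinset_eq h1.nodup h2.nodup ?_
  ext x; simp [List.mem_toFinset, h x]

lemma L3 {l : List ℕ} (hl : l.Pairwise (· < ·)) (v : ℕ) :
    ∀ j, j < (l.filter (fun y => y < v)).length → l.getD j 0 < v := by
  induction l with
  | nil => simp
  | cons a l ih =>
    intro j hj
    by_cases ha : a < v
    · rw [List.filter_cons_of_pos (by simpa using ha)] at hj
      cases j with
      | zero => simpa using ha
      | succ j =>
        simp only [List.length_cons, Nat.succ_lt_succ_iff] at hj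
        simpa using ih (List.Pairwise.of_cons hl) j hj
    · exfalso
      have : List.filter (fun y => y < v) (a :: l) = [] := by
        rw [List.filter_eq_nil_iff]
        intro b hb
        rcases List.mem_cons.1 hb with rfl | hb'
        · simpa using ha
        · have : a < b := (List.pairwise_cons.1 hl).1 b hb'
          simp only [decide_eq_true_eq]; omega
      rw [this] at hj; simp at hj

lemma L1 {l : List ℕ} (hl : l.Pairwise (· < ·)) : ∀ k (h : k < l.length),
    l.filter (fun y => y < l[k]) = l.take k := by
  induction l with
  | nil => simp
  | cons a l ih =>
    intro k hk
    cases k with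
    | zero =>
      simp only [List.getElem_cons_zero, List.take_zero]
      rw [List.filter_eq_nil_iff]
      intro b hb
      rcases List.mem_cons.1 hb with rfl | hb'
      · simp
      · have : a < b := (List.pairwise_cons.1 hl).1 b hb'
        simp only [decide_eq_true_eq]; omega
    | succ k =>
      simp only [List.getElem_cons_succ, List.take_succ_cons]
      have hk' : k < l.length := by simpa using hk
      have ha : a < l[k] := (List.pairwise_cons.1 hl).1 _ (List.getElem_mem hk')
      rw [List.filter_cons_of_pos (by simpa using ha), ih (List.Pairwise.of_cons hl) k hk']

lemma L2 {l : List ℕ} (hl : l.Pairwise (· < ·)) : ∀ k (h : k < l.length),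
    l.filter (fun y => y ≤ l[k]) = l.take (k+1) := by
  induction l with
  | nil => simp
  | cons a l ih =>
    intro k hk
    cases k with
    | zero =>
      simp only [List.getElem_cons_zero]
      rw [List.filter_cons_of_pos (by simp)]
      have : List.filter (fun y => y ≤ a) l = [] := by
        rw [List.filter_eq_nil_iff]
        intro b hb
        have : a < b := (List.pairwise_cons.1 hl).1 b hb
        simp only [decide_eq_true_eq]; omega
      rw [this]; simp
    | succ k =>
      simp only [List.getElem_cons_succ, List.take_succ_cons]
      have hk' : k < l.length := by simpa using hk
      have ha : a < l[k] := (List.pairwise_cons.1 hl).1 _ (List.getElem_mem hk')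
      rw [List.filter_cons_of_pos (by simp only [decide_eq_true_eq]; omega),
        ih (List.Pairwise.of_cons hl) k hk']

lemma card_filter_sort (S : Finset ℕ) (p : ℕ → Prop) [DecidablePred p] :
    (S.filter p).card = ((S.sort (·≤·)).filter (fun y => decide (p y))).length := by
  have h1 : ((S.sort (·≤·)).filter (fun y => decide (p y))).length
      = (S.toList.filter (fun y => decide (p y))).length :=
    ((Finset.sort_perm_toList S (·≤·)).filter _).length_eq
  rw [h1, Finset.card_def, Finset.filter_val, ← Finset.coe_toList S, Multiset.filter_coe,
    Multiset.coe_card]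

lemma admissible_of_adm {S : Finset ℕ} (hS : adm S) : Admissible S := by
  classical
  rcases S.eq_empty_or_nonempty with rfl | hne
  · refine ⟨0, 1, ?_⟩
    ext v
    constructor
    · rintro ⟨i, _⟩; exact i.elim0
    · intro hv; simp at hv
  · set d := S.card with hd
    set m := S.max' hne with hm
    set n := m with hn
    set t' := S.sort (·≤·) with ht'
    have ht'sorted : t'.Pairwise (· < ·) := (Finset.sortedLT_sort S).pairwise
    have hlen : t'.length = d := S.length_sort _
    have hmemt' : ∀ y, y ∈ t' ↔ y ∈ S := fun y => Finset.mem_sort _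
    have hpos : ∀ y ∈ S, 3 ≤ y := by
      intro y hy
      have h1 := hS y hy
      have h2 : y ∈ S.filter (· ≤ y) := Finset.mem_filter.2 ⟨hy, le_refl y⟩
      have h3 : 1 ≤ (S.filter (· ≤ y)).card := Finset.card_pos.2 ⟨y, h2⟩
      omega
    have hmax : ∀ y ∈ S, y ≤ m := fun y hy => S.le_max' y hy
    have hnd : 2 * d < n := by
      have h1 := hS m (S.max'_mem hne)
      have h2 : S.filter (· ≤ m) = S := by
        apply Finset.filter_true_of_mem
        intro y hy; exact hmax y hy
      rw [h2] at h1
      exact h1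
    -- adm in index form
    have hidx : ∀ k (hk : k < d), 2 * (k + 1) < t'[k]'(by omega) := by
      intro k hk
      have hkl : k < t'.length := by omega
      have hx : t'[k] ∈ S := (hmemt' _).1 (List.getElem_mem hkl)
      have h1 := hS _ hx
      have h2 : (S.filter (· ≤ t'[k])).card = k + 1 := by
        rw [card_filter_sort, ← ht', L2 ht'sorted k hkl, List.length_take]
        omega
      rw [h2] at h1
      exact h1
    set t : List ℕ := (List.range n).filter (fun y => decide (y + 1 ∈ S)) with htdef
    set cw : List ℕ := (List.range n).filter (fun y => !decide (y + 1 ∈ S)) with hcdef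
    have htsorted : t.Pairwise (· < ·) := (List.pairwise_lt_range (n := n)).filter _
    have hcsorted : cw.Pairwise (· < ·) := (List.pairwise_lt_range (n := n)).filter _
    have hmemt : ∀ y, y ∈ t ↔ y < n ∧ y + 1 ∈ S := by
      intro y; simp [htdef, List.mem_filter, List.mem_range]
    have hmemc : ∀ y, y ∈ cw ↔ y < n ∧ y + 1 ∉ S := by
      intro y; simp [hcdef, List.mem_filter, List.mem_range]
    have ht : t = t'.map (· - 1) := by
      apply sorted_eq_of_mem_iff htsorted
      · exact List.pairwise_map.mpr (List.Pairwise.imp_of_mem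
          (fun {a b} ha hb hab => by
            have := hpos a ((hmemt' a).1 ha); omega) ht'sorted)
      · intro x
        rw [hmemt]
        simp only [List.mem_map]
        constructor
        · rintro ⟨hx1, hx2⟩
          exact ⟨x + 1, (hmemt' _).2 hx2, by omega⟩
        · rintro ⟨s, hs, rfl⟩
          have hs' := (hmemt' s).1 hs
          have h3 := hpos s hs'
          have h4 := hmax s hs'
          constructor
          · omega
          · have : s - 1 + 1 = s := by omega
            rw [this]; exact hs'
    have htlen : t.length = d := by rw [ht, List.length_map, hlen]
    have htk : ∀ k (hk : k < d), t[k]'(by omega) = t'[k]'(by omega) - 1 := by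
      intro k hk
      simp [ht]
    have htgeq : ∀ k (hk : k < d), 2 * k + 2 ≤ t[k]'(by omega) := by
      intro k hk
      have h1 := hidx k hk
      have h2 := htk k hk
      omega
    have hclen : cw.length = n - d := by
      have h0 := List.length_eq_length_filter_add (l := List.range n)
        (fun y => decide (y + 1 ∈ S))
      rw [List.length_range] at h0
      have e1 : (List.range n).filter (fun a => !(fun y => decide (y + 1 ∈ S)) a) = cw := by
        rw [hcdef]
      rw [e1, ← htdef, htlen] at h0
      omega
    -- getD versions of facts
    have htbound : ∀ k, k < d → t.getD k 0 < n := by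
      intro k hk
      have h1 : t.getD k 0 = t[k]'(by omega) := List.getD_eq_getElem _ _ (by omega)
      rw [h1]
      exact ((hmemt _).1 (List.getElem_mem _)).1
    have htmemD : ∀ k, k < d → t.getD k 0 + 1 ∈ S := by
      intro k hk
      have h1 : t.getD k 0 = t[k]'(by omega) := List.getD_eq_getElem _ _ (by omega)
      rw [h1]
      exact ((hmemt _).1 (List.getElem_mem _)).2
    have hcmemD : ∀ j, j < cw.length → cw.getD j 0 + 1 ∉ S := by
      intro j hj
      have h1 : cw.getD j 0 = cw[j]'hj := List.getD_eq_getElem _ _ hj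
      rw [h1]
      exact ((hmemc _).1 (List.getElem_mem _)).2
    have hcbound : ∀ j, j < cw.length → cw.getD j 0 < n := by
      intro j hj
      have h1 : cw.getD j 0 = cw[j]'hj := List.getD_eq_getElem _ _ hj
      rw [h1]
      exact ((hmemc _).1 (List.getElem_mem _)).1
    have htkD : ∀ k, k < d → t.getD k 0 = t'.getD k 0 - 1 := by
      intro k hk
      rw [List.getD_eq_getElem _ _ (show k < t.length by omega),
        List.getD_eq_getElem _ _ (show k < t'.length by omega)]
      exact htk k hk
    have htgeqD : ∀ k, k < d → 2 * k + 2 ≤ t.getD k 0 := by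
      intro k hk
      rw [List.getD_eq_getElem _ _ (show k < t.length by omega)]
      exact htgeq k hk
    have hcmono : ∀ j j', j < j' → j' < cw.length → cw.getD j 0 < cw.getD j' 0 := by
      intro j j' hjj hj'
      rw [List.getD_eq_getElem _ _ (by omega), List.getD_eq_getElem _ _ hj']
      exact List.pairwise_iff_getElem.1 hcsorted _ _ _ _ hjj
    have htmono : ∀ k k', k < k' → k' < d → t.getD k 0 < t.getD k' 0 := by
      intro k k' hkk hk'
      rw [List.getD_eq_getElem _ _ (by omega), List.getD_eq_getElem _ _ (by omega)]
      exact List.pairwise_iff_getElem.1 htsorted _ _ _ _ hkk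
    -- the key inequality
    have hkey : ∀ k, k < d → ∀ j, j ≤ k + 1 → cw.getD j 0 < t.getD k 0 := by
      intro k hk j hj
      apply L3 hcsorted
      have hvn : t.getD k 0 < n := htbound k hk
      have e1 : cw.filter (fun y => y < t.getD k 0)
          = (List.range (t.getD k 0)).filter (fun y => !decide (y + 1 ∈ S)) := by
        apply sorted_eq_of_mem_iff (hcsorted.filter _) (List.pairwise_lt_range.filter _)
        intro x
        simp only [List.mem_filter, List.mem_range, decide_eq_true_eq, Bool.not_eq_true',
          decide_eq_false_iff_not, hmemc x]
        constructor
        · rintro ⟨⟨hx1, hx2⟩, hx3⟩; exact ⟨hx3, hx2⟩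
        · rintro ⟨hx1, hx2⟩; exact ⟨⟨by omega, hx2⟩, hx1⟩
      have e2 : (List.range (t.getD k 0)).filter (fun y => decide (y + 1 ∈ S))
          = t.filter (fun y => y < t.getD k 0) := by
        apply sorted_eq_of_mem_iff (List.pairwise_lt_range.filter _) (htsorted.filter _)
        intro x
        simp only [List.mem_filter, List.mem_range, decide_eq_true_eq, hmemt x]
        constructor
        · rintro ⟨hx1, hx2⟩; exact ⟨⟨by omega, hx2⟩, hx1⟩
        · rintro ⟨⟨hx1, hx2⟩, hx3⟩; exact ⟨hx3, hx2⟩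
      have e3 : t.filter (fun y => y < t.getD k 0) = t.take k := by
        have := L1 htsorted k (show k < t.length by omega)
        rw [List.getD_eq_getElem _ _ (show k < t.length by omega)]
        exact this
      have hlen2 := List.length_eq_length_filter_add (l := List.range (t.getD k 0))
        (fun y => decide (y + 1 ∈ S))
      rw [List.length_range] at hlen2
      have e4 : (List.range (t.getD k 0)).filter
          (fun a => !(fun y => decide (y + 1 ∈ S)) a)
          = (List.range (t.getD k 0)).filter (fun y => !decide (y + 1 ∈ S)) := rfl
      rw [e4, ← e1, e2, e3, List.length_take] at hlen2
      have := htgeqD k hk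
      omega
    -- the permutation
    set fv : ℕ → ℕ := fun i =>
      if i % 2 = 1 ∧ i < 2 * d then t.getD (i / 2) 0
      else cw.getD (if i ≤ 2 * d then i / 2 else i - d) 0 with hfv
    have hfvlt : ∀ i, i < n → fv i < n := by
      intro i hi
      simp only [hfv]
      split_ifs with h1 h2
      · exact htbound _ (by omega)
      · exact hcbound _ (by omega)
      · exact hcbound _ (by omega)
    set f : Fin n → Fin n := fun i => ⟨fv i.val, hfvlt i.val i.isLt⟩ with hf
    have hinj : Function.Injective f := by
      intro i j hij
      have hij' : fv i.val = fv j.val := congrArg Fin.val hij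
      apply Fin.ext
      by_cases h1 : i.val % 2 = 1 ∧ i.val < 2 * d <;>
        by_cases h2 : j.val % 2 = 1 ∧ j.val < 2 * d
      · simp only [hfv] at hij'
        simp only [if_pos h1, if_pos h2] at hij'
        have h3 : i.val / 2 = j.val / 2 := by
          by_contra hne
          rcases lt_or_gt_of_ne hne with hlt | hgt
          · exact absurd hij' (ne_of_lt (htmono _ _ hlt (by omega)))
          · exact absurd hij' (ne_of_gt (htmono _ _ hgt (by omega)))
        omega
      · exfalso
        simp only [hfv] at hij'
        simp only [if_pos h1, if_neg h2] at hij'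
        have hjb : (if j.val ≤ 2 * d then j.val / 2 else j.val - d) < cw.length := by
          have := j.isLt
          rw [hclen]; split_ifs <;> omega
        exact hcmemD _ hjb (hij' ▸ htmemD (i.val / 2) (by omega))
      · exfalso
        simp only [hfv] at hij'
        simp only [if_neg h1, if_pos h2] at hij'
        have hib : (if i.val ≤ 2 * d then i.val / 2 else i.val - d) < cw.length := by
          have := i.isLt
          rw [hclen]; split_ifs <;> omega
        exact hcmemD _ hib (hij'.symm ▸ htmemD (j.val / 2) (by omega))
      · simp only [hfv] at hij'
        simp only [if_neg h1, if_neg h2] at hij'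
        have hib : (if i.val ≤ 2 * d then i.val / 2 else i.val - d) < cw.length := by
          have := i.isLt
          rw [hclen]; split_ifs <;> omega
        have hjb : (if j.val ≤ 2 * d then j.val / 2 else j.val - d) < cw.length := by
          have := j.isLt
          rw [hclen]; split_ifs <;> omega
        have h3 : (if i.val ≤ 2 * d then i.val / 2 else i.val - d)
            = (if j.val ≤ 2 * d then j.val / 2 else j.val - d) := by
          by_contra hne
          rcases lt_or_gt_of_ne hne with hlt | hgt
          · exact absurd hij' (ne_of_lt (hcmono _ _ hlt hjb))
          · exact absurd hij' (ne_of_gt (hcmono _ _ hgt hib))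
        have hcl := hclen
        have hii := i.isLt
        have hjj := j.isLt
        split_ifs at h3 <;> omega
    have hbij := (Finite.injective_iff_bijective).1 hinj
    refine ⟨n, Equiv.ofBijective f hbij, ?_⟩
    have hwapp : ∀ i : Fin n, (Equiv.ofBijective f hbij) i = f i := fun _ => rfl
    -- non-pinnacle positions increase
    have hstep : ∀ i : Fin n, ¬(i.val % 2 = 1 ∧ i.val < 2 * d) → ∀ h1 : i.val + 1 < n,
        (f i).val < (f ⟨i.val + 1, h1⟩).val := by
      intro i hi h1
      simp only [hf]
      simp only [hfv]
      simp only [if_neg hi]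
      by_cases hcase : i.val < 2 * d
      · have hieven : i.val % 2 = 0 := by omega
        rw [if_pos (show (i.val + 1) % 2 = 1 ∧ i.val + 1 < 2 * d by omega)]
        rw [if_pos (show i.val ≤ 2 * d by omega)]
        have e : (i.val + 1) / 2 = i.val / 2 := by omega
        rw [e]
        exact hkey (i.val / 2) (by omega) (i.val / 2) (by omega)
      · rw [if_neg (show ¬((i.val + 1) % 2 = 1 ∧ i.val + 1 < 2 * d) by omega)]
        apply hcmono
        · split_ifs <;> omega
        · rw [hclen]; split_ifs <;> omega
    have hpeakpos : ∀ i : Fin n, i.val % 2 = 1 → i.val < 2 * d →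
        IsPeak (Equiv.ofBijective f hbij) i := by
      intro i hodd hlt
      have hi1 : i.val + 1 < n := by omega
      refine ⟨by omega, hi1, ?_, ?_⟩
      · rw [Fin.lt_def, hwapp, hwapp]
        simp only [hf]
        simp only [hfv]
        rw [if_neg (show ¬((i.val - 1) % 2 = 1 ∧ i.val - 1 < 2 * d) by omega),
          if_pos (show i.val % 2 = 1 ∧ i.val < 2 * d from ⟨hodd, hlt⟩),
          if_pos (show i.val - 1 ≤ 2 * d by omega)]
        have e : (i.val - 1) / 2 = i.val / 2 := by omega
        rw [e]
        exact hkey (i.val / 2) (by omega) (i.val / 2) (by omega)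
      · rw [Fin.lt_def, hwapp, hwapp]
        simp only [hf]
        simp only [hfv]
        rw [if_neg (show ¬((i.val + 1) % 2 = 1 ∧ i.val + 1 < 2 * d) by omega),
          if_pos (show i.val % 2 = 1 ∧ i.val < 2 * d from ⟨hodd, hlt⟩),
          if_pos (show i.val + 1 ≤ 2 * d by omega)]
        have e : (i.val + 1) / 2 = i.val / 2 + 1 := by omega
        rw [e]
        exact hkey (i.val / 2) (by omega) (i.val / 2 + 1) (by omega)
    have hpeakneg : ∀ i : Fin n, ¬(i.val % 2 = 1 ∧ i.val < 2 * d) →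
        ¬ IsPeak (Equiv.ofBijective f hbij) i := by
      intro i hi hpk
      obtain ⟨h0, hn1, hL, hR⟩ := hpk
      have h2 := hstep i hi hn1
      rw [hwapp, hwapp, Fin.lt_def] at hR
      omega
    ext v
    simp only [Pin, Set.mem_setOf_eq, Finset.mem_coe]
    constructor
    · rintro ⟨i, hpk, rfl⟩
      have hio : i.val % 2 = 1 ∧ i.val < 2 * d := by
        by_contra hni
        exact hpeakneg i hni hpk
      have e : ((Equiv.ofBijective f hbij) i).val = t.getD (i.val / 2) 0 := by
        rw [hwapp]
        simp only [hf]
        simp only [hfv]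
        simp only [if_pos hio]
      rw [e]
      exact htmemD (i.val / 2) (by omega)
    · intro hv
      have hvt' : v ∈ t' := (hmemt' v).2 hv
      obtain ⟨k, hk, hvk⟩ := List.getElem_of_mem hvt'
      have hkd : k < d := by omega
      have hvkD : t'.getD k 0 = v := by
        rw [List.getD_eq_getElem _ _ hk]; exact hvk
      have hi1 : 2 * k + 1 < n := by omega
      refine ⟨⟨2 * k + 1, hi1⟩, hpeakpos _ (by simp only [Fin.val_mk]; omega) (by simp only [Fin.val_mk]; omega), ?_⟩
      have e : ((Equiv.ofBijective f hbij) ⟨2 * k + 1, hi1⟩).val = t.getD k 0 := by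
        rw [hwapp]
        simp only [hf]
        simp only [hfv]
        rw [if_pos (show (2 * k + 1) % 2 = 1 ∧ 2 * k + 1 < 2 * d by omega)]
        have e2 : (2 * k + 1) / 2 = k := by omega
        rw [e2]
      rw [e]
      have h3 := htkD k hkd
      have h4 := hpos v hv
      omega


lemma admissible_iff_adm (S : Finset ℕ) : Admissible S ↔ adm S := by
  constructor
  · rintro ⟨n, w, hw⟩
    exact adm_of_pin w S hw
  · exact admissible_of_adm

lemma adm_subset {S T : Finset ℕ} (hTS : T ⊆ S) (hS : adm S) : adm T := by
  intro x hx
  have h1 : (T.filter (· ≤ x)).card ≤ (S.filter (· ≤ x)).card :=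
    Finset.card_le_card (Finset.filter_subset_filter _ hTS)
  have h2 := hS x (hTS hx)
  omega

lemma adm_insert {T : Finset ℕ} (M : ℕ) (hadm : adm T) (hlt : ∀ y ∈ T, y < M)
    (hM : 2 * T.card + 2 < M) : adm (insert M T) := by
  classical
  intro x hx
  rcases Finset.mem_insert.1 hx with rfl | hxT
  · have hMT : x ∉ T := fun hc => lt_irrefl x (hlt x hc)
    have e : (insert x T).filter (· ≤ x) = insert x T := by
      apply Finset.filter_true_of_mem
      intro y hy
      rcases Finset.mem_insert.1 hy with h' | hyT
      · omega
      · exact le_of_lt (hlt y hyT)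
    rw [e, Finset.card_insert_of_notMem hMT]
    omega
  · have hxM : x < M := hlt x hxT
    rw [Finset.filter_insert, if_neg (by omega)]
    have h2 := hadm x hxT
    exact h2

lemma max'_spec {T : Finset ℕ} {M : ℕ} (hM : M ∈ T) (hub : ∀ y ∈ T, y ≤ M) :
    ∃ h : T.Nonempty, T.max' h = M :=
  ⟨⟨M, hM⟩, le_antisymm (Finset.max'_le _ _ _ hub) (Finset.le_max' _ _ hM)⟩

lemma max'_spec' {T : Finset ℕ} {M : ℕ} (h : ∃ h : T.Nonempty, T.max' h = M) :
    M ∈ T ∧ ∀ y ∈ T, y ≤ M := by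
  obtain ⟨hne, hmax⟩ := h
  constructor
  · rw [← hmax]; exact T.max'_mem hne
  · intro y hy
    have : y ≤ T.max' hne := T.le_max' y hy
    omega

lemma finA (m d : ℕ) :
    Finite {S : Finset ℕ // Admissible S ∧ S.card = d ∧ ∃ h : S.Nonempty, S.max' h = m} := by
  classical
  apply Finite.of_injective
    (f := fun x : {S : Finset ℕ // Admissible S ∧ S.card = d ∧ ∃ h : S.Nonempty, S.max' h = m} =>
      (⟨x.1, by
        rw [Finset.mem_powerset]
        intro y hy
        rw [Finset.mem_range]
        have := (max'_spec' x.2.2.2).2 y hy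
        omega⟩ : {T : Finset ℕ // T ∈ (Finset.range (m + 1)).powerset}))
  intro a b hab
  simp only [Subtype.mk.injEq] at hab
  exact Subtype.ext hab

section steps

variable {m d : ℕ}

lemma stepA (hd : 1 ≤ d) (hmd : 2 * d < m - 1) (S : Finset ℕ)
    (hS : Admissible S ∧ S.card = d ∧ ∃ h : S.Nonempty, S.max' h = m) (hc : m - 1 ∈ S) :
    Admissible (S.erase m) ∧ (S.erase m).card = d - 1 ∧
      ∃ h' : (S.erase m).Nonempty, (S.erase m).max' h' = m - 1 := by
  classical
  obtain ⟨hadm, hcard, hmx⟩ := hS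
  rw [admissible_iff_adm] at hadm ⊢
  obtain ⟨hmS, hub⟩ := max'_spec' hmx
  refine ⟨adm_subset (Finset.erase_subset _ _) hadm, ?_, ?_⟩
  · rw [Finset.card_erase_of_mem hmS, hcard]
  · apply max'_spec
    · exact Finset.mem_erase.2 ⟨by omega, hc⟩
    · intro y hy
      obtain ⟨hy1, hy2⟩ := Finset.mem_erase.1 hy
      have := hub y hy2
      omega

lemma stepB (hd : 1 ≤ d) (hmd : 2 * d < m - 1) (S : Finset ℕ)
    (hS : Admissible S ∧ S.card = d ∧ ∃ h : S.Nonempty, S.max' h = m) (hc : m - 1 ∉ S) :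
    Admissible (insert (m - 1) (S.erase m)) ∧ (insert (m - 1) (S.erase m)).card = d ∧
      ∃ h' : (insert (m - 1) (S.erase m)).Nonempty,
        (insert (m - 1) (S.erase m)).max' h' = m - 1 := by
  classical
  obtain ⟨hadm, hcard, hmx⟩ := hS
  rw [admissible_iff_adm] at hadm ⊢
  obtain ⟨hmS, hub⟩ := max'_spec' hmx
  have hnm : m - 1 ∉ S.erase m := fun hx => hc (Finset.mem_of_mem_erase hx)
  have hcard' : (S.erase m).card = d - 1 := by rw [Finset.card_erase_of_mem hmS, hcard]
  refine ⟨?_, ?_, ?_⟩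
  · apply adm_insert
    · exact adm_subset (Finset.erase_subset _ _) hadm
    · intro y hy
      obtain ⟨hy1, hy2⟩ := Finset.mem_erase.1 hy
      have h3 := hub y hy2
      have h4 : y ≠ m - 1 := fun he => hc (he ▸ hy2)
      omega
    · omega
  · rw [Finset.card_insert_of_notMem hnm, hcard']
    omega
  · apply max'_spec
    · exact Finset.mem_insert_self _ _
    · intro y hy
      rcases Finset.mem_insert.1 hy with rfl | hy2
      · exact le_refl _
      · obtain ⟨hy3, hy4⟩ := Finset.mem_erase.1 hy2
        have := hub y hy4
        omega

lemma stepC (hd : 1 ≤ d) (hmd : 2 * d < m - 1) (T : Finset ℕ)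
    (hT : Admissible T ∧ T.card = d ∧ ∃ h : T.Nonempty, T.max' h = m - 1) :
    Admissible (insert m (T.erase (m - 1))) ∧ (insert m (T.erase (m - 1))).card = d ∧
      ∃ h' : (insert m (T.erase (m - 1))).Nonempty,
        (insert m (T.erase (m - 1))).max' h' = m := by
  classical
  obtain ⟨hadm, hcard, hmx⟩ := hT
  rw [admissible_iff_adm] at hadm ⊢
  obtain ⟨hmT, hub⟩ := max'_spec' hmx
  have hnm : m ∉ T.erase (m - 1) := by
    intro hx
    have := hub m (Finset.mem_of_mem_erase hx)
    omega
  have hcard' : (T.erase (m - 1)).card = d - 1 := by rw [Finset.card_erase_of_mem hmT, hcard]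
  refine ⟨?_, ?_, ?_⟩
  · apply adm_insert
    · exact adm_subset (Finset.erase_subset _ _) hadm
    · intro y hy
      obtain ⟨hy1, hy2⟩ := Finset.mem_erase.1 hy
      have := hub y hy2
      omega
    · omega
  · rw [Finset.card_insert_of_notMem hnm, hcard']
    omega
  · apply max'_spec
    · exact Finset.mem_insert_self _ _
    · intro y hy
      rcases Finset.mem_insert.1 hy with rfl | hy2
      · exact le_refl _
      · obtain ⟨hy3, hy4⟩ := Finset.mem_erase.1 hy2
        have := hub y hy4
        omega

lemma stepD (hd : 1 ≤ d) (hmd : 2 * d < m - 1) (T : Finset ℕ)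
    (hT : Admissible T ∧ T.card = d - 1 ∧ ∃ h : T.Nonempty, T.max' h = m - 1) :
    Admissible (insert m T) ∧ (insert m T).card = d ∧
      ∃ h' : (insert m T).Nonempty, (insert m T).max' h' = m := by
  classical
  obtain ⟨hadm, hcard, hmx⟩ := hT
  rw [admissible_iff_adm] at hadm ⊢
  obtain ⟨hmT, hub⟩ := max'_spec' hmx
  have hnm : m ∉ T := by
    intro hx
    have := hub m hx
    omega
  refine ⟨?_, ?_, ?_⟩
  · apply adm_insert
    · exact hadm
    · intro y hy
      have := hub y hy
      omega
    · omega
  · rw [Finset.card_insert_of_notMem hnm, hcard]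
    omega
  · apply max'_spec
    · exact Finset.mem_insert_self _ _
    · intro y hy
      rcases Finset.mem_insert.1 hy with rfl | hy2
      · exact le_refl _
      · have := hub y hy2
        omega

end steps

theorem padm_recurrence (m d : ℕ) (hd : 1 ≤ d) (h : 2 * d < m - 1) :
    padm m d = padm (m - 1) d + padm (m - 1) (d - 1) := by
  classical
  haveI := finA m d
  haveI := finA (m - 1) d
  haveI := finA (m - 1) (d - 1)
  rw [padm, padm, padm, ← Nat.card_sum]
  apply Nat.card_congr
  refine ⟨fun S => if hc : m - 1 ∈ S.1 then Sum.inr ⟨S.1.erase m, stepA hd h S.1 S.2 hc⟩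
      else Sum.inl ⟨insert (m - 1) (S.1.erase m), stepB hd h S.1 S.2 hc⟩,
    fun x => x.rec (fun T => ⟨insert m (T.1.erase (m - 1)), stepC hd h T.1 T.2⟩)
      (fun T => ⟨insert m T.1, stepD hd h T.1 T.2⟩), ?_, ?_⟩
  · intro S
    obtain ⟨hmS, hub⟩ := max'_spec' S.2.2.2
    by_cases hc : m - 1 ∈ S.1
    · simp only [dif_pos hc]
      apply Subtype.ext
      simp only
      exact Finset.insert_erase hmS
    · simp only [dif_neg hc]
      apply Subtype.ext
      simp only
      have hnm : m - 1 ∉ S.1.erase m := fun hx => hc (Finset.mem_of_mem_erase hx)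
      rw [Finset.erase_insert hnm]
      exact Finset.insert_erase hmS
  · intro x
    rcases x with T | T
    · obtain ⟨hmT, hub⟩ := max'_spec' T.2.2.2
      have hm4 : 4 ≤ m := by omega
      have hc : m - 1 ∉ insert m (T.1.erase (m - 1)) := by
        rw [Finset.mem_insert]
        push_neg
        exact ⟨by omega, fun hx => (Finset.mem_erase.1 hx).1 rfl⟩
      simp only [dif_neg hc]
      congr 1
      apply Subtype.ext
      simp only
      have hnm : m ∉ T.1.erase (m - 1) := by
        intro hx
        have := hub m (Finset.mem_of_mem_erase hx)
        omega
      rw [Finset.erase_insert hnm]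
      exact Finset.insert_erase hmT
    · obtain ⟨hmT, hub⟩ := max'_spec' T.2.2.2
      have hm4 : 4 ≤ m := by omega
      have hc : m - 1 ∈ insert m T.1 := Finset.mem_insert_of_mem hmT
      simp only [dif_pos hc]
      congr 1
      apply Subtype.ext
      simp only
      have hnm : m ∉ T.1 := by
        intro hx
        have := hub m hx
        omega
      rw [Finset.erase_insert hnm]
end

section
/- For every d ≥ 1, the number of admissible pinnacle sets with maximum element 2d+1 and cardinality d equals the Catalan number C_d = binomial(2d,d)/(d+1). -/
set_option maxHeartbeats 1000000

lemma card_filter_lt_orderIsoOfFin (A : Finset ℕ) {m : ℕ} (h : A.card = m) (k : Fin m) :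
    (A.filter (fun x => x < (A.orderIsoOfFin h k : ℕ))).card = k := by
  have heq : A.filter (fun x => x < (A.orderIsoOfFin h k : ℕ))
      = Finset.image (fun j => (A.orderIsoOfFin h j : ℕ)) (Finset.Iio k) := by
    ext x
    simp only [Finset.mem_filter, Finset.mem_image, Finset.mem_Iio]
    constructor
    · rintro ⟨hxA, hlt⟩
      refine ⟨(A.orderIsoOfFin h).symm ⟨x, hxA⟩, ?_, by simp⟩
      rw [← (A.orderIsoOfFin h).lt_iff_lt]
      rw [OrderIso.apply_symm_apply]; exact hlt
    · rintro ⟨j, hj, rfl⟩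
      exact ⟨Finset.coe_mem _, by exact_mod_cast (A.orderIsoOfFin h).lt_iff_lt.2 hj⟩
  rw [heq, Finset.card_image_of_injective _ (fun a b hab => ?_), Fin.card_Iio]
  exact (A.orderIsoOfFin h).injective (Subtype.ext hab)

lemma orderIsoOfFin_lt_of_card (A : Finset ℕ) {m : ℕ} (h : A.card = m) (k : Fin m) (b : ℕ)
    (hb : (k : ℕ) < (A.filter (fun x => x < b)).card) : (A.orderIsoOfFin h k : ℕ) < b := by
  by_contra hle
  push_neg at hle
  have hsub : A.filter (fun x => x < b) ⊆ A.filter (fun x => x < (A.orderIsoOfFin h k : ℕ)) := by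
    intro x hx
    rw [Finset.mem_filter] at hx ⊢
    exact ⟨hx.1, lt_of_lt_of_le hx.2 hle⟩
  have := Finset.card_le_card hsub
  rw [card_filter_lt_orderIsoOfFin A h k] at this
  omega

lemma good_admissible (S : Finset ℕ) (d : ℕ) (hcard : S.card = d)
    (hub : ∀ s ∈ S, s ≤ 2 * d + 1)
    (hgood : ∀ s ∈ S, 2 * (S.filter (fun t => t ≤ s)).card < s) : Admissible S := by
  classical
  have h3 : ∀ s ∈ S, 3 ≤ s := by
    intro s hs
    have h1 : 1 ≤ (S.filter (fun t => t ≤ s)).card :=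
      Finset.card_pos.2 ⟨s, Finset.mem_filter.2 ⟨hs, le_refl s⟩⟩
    have := hgood s hs
    omega
  set P : Finset ℕ := S.image (fun s => s - 1) with hP
  have hPinj : Set.InjOn (fun s => s - 1) S := by
    intro a ha b hb hab
    have := h3 a ha; have := h3 b hb
    simp only at hab; omega
  have hPcard : P.card = d := by rw [hP, Finset.card_image_of_injOn hPinj, hcard]
  have hPsub : P ⊆ Finset.range (2*d+1) := by
    intro p hp
    rw [hP, Finset.mem_image] at hp
    obtain ⟨s, hs, rfl⟩ := hp
    have := hub s hs
    simp only [Finset.mem_range]; omega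
  set T : Finset ℕ := Finset.range (2*d+1) \ P with hT
  have hTcard : T.card = d + 1 := by
    rw [hT, Finset.card_sdiff_of_subset hPsub, Finset.card_range, hPcard]; omega
  set sIso := S.orderIsoOfFin hcard with hsIso
  set tIso := T.orderIsoOfFin hTcard with htIso
  have hsmem : ∀ k : Fin d, (sIso k : ℕ) ∈ S := fun k => (sIso k).2
  have htmem : ∀ j : Fin (d+1), (tIso j : ℕ) ∈ T := fun j => (tIso j).2
  have hs3 : ∀ k : Fin d, 3 ≤ (sIso k : ℕ) := fun k => h3 _ (hsmem k)
  have htbound : ∀ j : Fin (d+1), (tIso j : ℕ) < 2*d+1 := by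
    intro j
    have h' : (tIso j : ℕ) ∈ Finset.range (2*d+1) \ P := htmem j
    have := (Finset.mem_sdiff.1 h').1
    exact Finset.mem_range.1 this
  have htnotP : ∀ j : Fin (d+1), (tIso j : ℕ) ∉ P := by
    intro j
    have h' : (tIso j : ℕ) ∈ Finset.range (2*d+1) \ P := htmem j
    exact (Finset.mem_sdiff.1 h').2
  -- key counting facts
  have key : ∀ (k : Fin d) (j : Fin (d+1)), (j : ℕ) ≤ (k : ℕ) + 1 →
      (tIso j : ℕ) < (sIso k : ℕ) - 1 := by
    intro k j hj
    set s := (sIso k : ℕ) with hs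
    have hsS : s ∈ S := hsmem k
    have hk1 : (S.filter (fun x => x < s)).card = k := card_filter_lt_orderIsoOfFin S hcard k
    have hfe : (S.filter (fun t => t ≤ s)).card = (k : ℕ) + 1 := by
      have : S.filter (fun t => t ≤ s) = insert s (S.filter (fun x => x < s)) := by
        ext t
        simp only [Finset.mem_filter, Finset.mem_insert]
        constructor
        · rintro ⟨htS, hts⟩
          rcases lt_or_eq_of_le hts with h | h
          · exact Or.inr ⟨htS, h⟩
          · exact Or.inl h
        · rintro (rfl | ⟨htS, hts⟩)
          · exact ⟨hsS, le_refl _⟩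
          · exact ⟨htS, le_of_lt hts⟩
      rw [this, Finset.card_insert_of_notMem, hk1]
      simp
    have hsge : 2 * ((k:ℕ) + 1) < s := by rw [← hfe]; exact hgood s hsS
    have hPfilter : (P.filter (fun x => x < s - 1)).card = k := by
      have himg : P.filter (fun x => x < s - 1)
          = (S.filter (fun x => x < s)).image (fun t => t - 1) := by
        ext x
        simp only [hP, Finset.mem_filter, Finset.mem_image]
        constructor
        · rintro ⟨⟨t, htS, rfl⟩, hlt⟩
          have := h3 t htS; have := h3 s hsS
          exact ⟨t, ⟨htS, by omega⟩, rfl⟩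
        · rintro ⟨t, ⟨htS, hlt⟩, rfl⟩
          have := h3 t htS; have := h3 s hsS
          exact ⟨⟨t, htS, rfl⟩, by omega⟩
      rw [himg, Finset.card_image_of_injOn (fun a ha b hb hab =>
        hPinj (Finset.mem_filter.1 ha).1 (Finset.mem_filter.1 hb).1 hab), hk1]
    have hrange : (Finset.range (2*d+1)).filter (fun x => x < s - 1) = Finset.range (s-1) := by
      have hsle := hub s hsS
      ext x
      simp only [Finset.mem_filter, Finset.mem_range]
      omega
    have hTfilter : (T.filter (fun x => x < s - 1)).card = s - 1 - k := by
      have hsd : T.filter (fun x => x < s - 1)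
          = (Finset.range (2*d+1)).filter (fun x => x < s - 1) \ P.filter (fun x => x < s - 1) := by
        rw [hT]
        ext x
        simp only [Finset.mem_filter, Finset.mem_sdiff]
        tauto
      rw [hsd, Finset.card_sdiff_of_subset (Finset.filter_subset_filter _ hPsub), hrange,
        Finset.card_range, hPfilter]
    apply orderIsoOfFin_lt_of_card T hTcard j (s-1)
    rw [hTfilter]
    omega
  -- the permutation
  set f : Fin (2*d+1) → Fin (2*d+1) := fun i =>
    if h : i.val % 2 = 1 then
      ⟨(sIso ⟨i.val / 2, by omega⟩ : ℕ) - 1, by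
        have := hub _ (hsmem ⟨i.val / 2, by omega⟩); omega⟩
    else
      ⟨(tIso ⟨i.val / 2, by omega⟩ : ℕ), htbound _⟩ with hf
  have hfodd : ∀ (i : Fin (2*d+1)) (h : i.val % 2 = 1),
      (f i : ℕ) = (sIso ⟨i.val / 2, by omega⟩ : ℕ) - 1 := by
    intro i h
    simp only [hf, dif_pos h]
  have hfeven : ∀ (i : Fin (2*d+1)) (h : i.val % 2 = 0),
      (f i : ℕ) = (tIso ⟨i.val / 2, by omega⟩ : ℕ) := by
    intro i h
    have h' : ¬ (i.val % 2 = 1) := by omega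
    simp only [hf, dif_neg h']
  have hfinj : Function.Injective f := by
    intro a b hab
    have hv : (f a : ℕ) = (f b : ℕ) := by rw [hab]
    rcases Nat.even_or_odd a.val with ha | ha <;> rcases Nat.even_or_odd b.val with hb | hb
    · -- both even
      have ha' : a.val % 2 = 0 := Nat.even_iff.1 ha
      have hb' : b.val % 2 = 0 := Nat.even_iff.1 hb
      rw [hfeven a ha', hfeven b hb'] at hv
      have := tIso.injective (Subtype.ext hv)
      have : a.val / 2 = b.val / 2 := congrArg Fin.val this
      exact Fin.ext (by omega)
    · -- a even, b odd
      exfalso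
      have ha' : a.val % 2 = 0 := Nat.even_iff.1 ha
      have hb' : b.val % 2 = 1 := Nat.odd_iff.1 hb
      rw [hfeven a ha', hfodd b hb'] at hv
      apply htnotP ⟨a.val / 2, by omega⟩
      rw [hv]
      exact Finset.mem_image.2 ⟨_, hsmem ⟨b.val / 2, by omega⟩, rfl⟩
    · -- a odd, b even
      exfalso
      have ha' : a.val % 2 = 1 := Nat.odd_iff.1 ha
      have hb' : b.val % 2 = 0 := Nat.even_iff.1 hb
      rw [hfodd a ha', hfeven b hb'] at hv
      apply htnotP ⟨b.val / 2, by omega⟩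
      rw [← hv]
      exact Finset.mem_image.2 ⟨_, hsmem ⟨a.val / 2, by omega⟩, rfl⟩
    · -- both odd
      have ha' : a.val % 2 = 1 := Nat.odd_iff.1 ha
      have hb' : b.val % 2 = 1 := Nat.odd_iff.1 hb
      rw [hfodd a ha', hfodd b hb'] at hv
      have h3a := hs3 ⟨a.val / 2, by omega⟩
      have h3b := hs3 ⟨b.val / 2, by omega⟩
      have hv' : (sIso ⟨a.val / 2, by omega⟩ : ℕ) = (sIso ⟨b.val / 2, by omega⟩ : ℕ) := by omega
      have := sIso.injective (Subtype.ext hv')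
      have : a.val / 2 = b.val / 2 := congrArg Fin.val this
      exact Fin.ext (by omega)
  set w : Equiv.Perm (Fin (2*d+1)) :=
    Equiv.ofBijective f (Finite.injective_iff_bijective.mp hfinj) with hw
  have hwf : ∀ i, w i = f i := fun i => rfl
  -- peaks are exactly odd positions
  have hpeak_odd : ∀ i : Fin (2*d+1), i.val % 2 = 1 → IsPeak w i := by
    intro i hi
    have hi1 : 0 < i.val := by omega
    have hilt : i.val < 2*d+1 := i.isLt
    have hi2 : i.val + 1 < 2*d+1 := by omega
    refine ⟨hi1, hi2, ?_, ?_⟩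
    · -- left neighbor
      rw [hwf, hwf]
      have hm1 : (i.val - 1) % 2 = 0 := by omega
      rw [Fin.lt_def, hfodd i hi, hfeven ⟨i.val - 1, by omega⟩ hm1]
      have : (i.val - 1) / 2 = i.val / 2 := by omega
      have hk := key ⟨i.val / 2, by omega⟩ ⟨(i.val - 1) / 2, by omega⟩ (by simp; omega)
      exact hk
    · rw [hwf, hwf]
      have hp1 : (i.val + 1) % 2 = 0 := by omega
      rw [Fin.lt_def, hfodd i hi, hfeven ⟨i.val + 1, hi2⟩ hp1]
      have hk := key ⟨i.val / 2, by omega⟩ ⟨(i.val + 1) / 2, by omega⟩ (by simp; omega)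
      exact hk
  have hpeak_even : ∀ i : Fin (2*d+1), i.val % 2 = 0 → ¬ IsPeak w i := by
    rintro i hi ⟨hpos, hlt, _, h2⟩
    rw [hwf, hwf, Fin.lt_def] at h2
    have hp1 : (i.val + 1) % 2 = 1 := by omega
    rw [hfodd ⟨i.val + 1, hlt⟩ hp1, hfeven i hi] at h2
    have hk := key ⟨(i.val + 1) / 2, by omega⟩ ⟨i.val / 2, by omega⟩ (by simp; omega)
    simp only at h2 hk
    have : (i.val + 1) / 2 = i.val / 2 := by omega
    omega
  refine ⟨2*d+1, w, ?_⟩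
  ext v
  simp only [Pin, Set.mem_setOf_eq, Finset.coe_sort_coe, Finset.mem_coe]
  constructor
  · rintro ⟨i, hip, rfl⟩
    rcases Nat.even_or_odd i.val with he | ho
    · exact absurd hip (hpeak_even i (Nat.even_iff.1 he))
    · have hi' : i.val % 2 = 1 := Nat.odd_iff.1 ho
      rw [hwf, hfodd i hi']
      have := hs3 ⟨i.val / 2, by omega⟩
      have : (sIso ⟨i.val / 2, by omega⟩ : ℕ) - 1 + 1 = (sIso ⟨i.val / 2, by omega⟩ : ℕ) := by omega
      rw [this]
      exact hsmem _
  · intro hv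
    set k := sIso.symm ⟨v, hv⟩ with hk
    have hkv : (sIso k : ℕ) = v := by rw [hk]; simp
    have hklt : (k : ℕ) < d := k.isLt
    refine ⟨⟨2*(k:ℕ)+1, by omega⟩, hpeak_odd _ (by simp), ?_⟩
    rw [hwf, hfodd ⟨2*(k:ℕ)+1, by omega⟩ (by simp)]
    have hdiv : (2*(k:ℕ)+1) / 2 = (k:ℕ) := by omega
    have hcast : (⟨(2*(k:ℕ)+1)/2, by omega⟩ : Fin d) = k := Fin.ext hdiv
    rw [hcast, hkv]
    have : 3 ≤ v := h3 v hv
    omega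

lemma peaks_nonadjacent {n : ℕ} (w : Equiv.Perm (Fin n)) (p : Fin n) (q : Fin n)
    (hp : IsPeak w p) (hq : IsPeak w q) (h : q.val = p.val + 1) : False := by
  obtain ⟨hp0, hpn, hpl, hpr⟩ := hp
  obtain ⟨hq0, hqn, hql, hqr⟩ := hq
  -- w (p+1) < w p  and  w (q-1) < w q, with q = p+1, q-1 = p
  have h1 : w ⟨p.val + 1, hpn⟩ < w p := hpr
  have h2 : w ⟨q.val - 1, _⟩ < w q := hql
  have e1 : (⟨p.val + 1, hpn⟩ : Fin n) = q := Fin.ext (show p.val + 1 = q.val by omega)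
  have e2 : (⟨q.val - 1, Nat.lt_of_le_of_lt (Nat.sub_le _ _) q.isLt⟩ : Fin n) = p :=
    Fin.ext (show q.val - 1 = p.val by omega)
  rw [e1] at h1
  rw [e2] at h2
  exact absurd (h1.trans h2) (lt_irrefl _)

lemma admissible_good {n : ℕ} (w : Equiv.Perm (Fin n)) (S : Finset ℕ) (hPin : Pin w = ↑S) :
    ∀ s ∈ S, 2 * (S.filter (fun t => t ≤ s)).card < s := by
  classical
  intro s hs
  set P : Finset (Fin n) := Finset.univ.filter (fun p => IsPeak w p ∧ (w p).val + 1 ≤ s) with hPdef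
  have hmemP : ∀ p : Fin n, p ∈ P ↔ IsPeak w p ∧ (w p).val + 1 ≤ s := by
    intro p; rw [hPdef, Finset.mem_filter]; simp
  -- card of filter = card P
  have hcardeq : (S.filter (fun t => t ≤ s)).card = P.card := by
    symm
    apply Finset.card_bij (fun p _ => (w p).val + 1)
    · intro p hp
      rw [hmemP] at hp
      refine Finset.mem_filter.2 ⟨?_, hp.2⟩
      have : ((w p).val + 1) ∈ Pin w := ⟨p, hp.1, rfl⟩
      rw [hPin] at this
      exact this
    · intro a ha b hb hab
      rw [hmemP] at ha hb
      exact w.injective (Fin.ext (by omega))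
    · intro t ht
      rw [Finset.mem_filter] at ht
      have : t ∈ Pin w := by rw [hPin]; exact ht.1
      obtain ⟨p, hp, rfl⟩ := this
      exact ⟨p, (hmemP p).2 ⟨hp, ht.2⟩, rfl⟩
  -- P nonempty
  have hPne : P.Nonempty := by
    have : s ∈ Pin w := by rw [hPin]; exact hs
    obtain ⟨p, hp, hv⟩ := this
    exact ⟨p, (hmemP p).2 ⟨hp, le_of_eq hv.symm⟩⟩
  set P' : Finset ℕ := P.image Fin.val with hP'def
  have hmemP' : ∀ q : ℕ, q ∈ P' → ∃ p : Fin n, p ∈ P ∧ p.val = q := by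
    intro q hq
    rw [hP'def, Finset.mem_image] at hq
    obtain ⟨p, hp, rfl⟩ := hq
    exact ⟨p, hp, rfl⟩
  have hP'card : P'.card = P.card := Finset.card_image_of_injective _ Fin.val_injective
  have hP'ne : P'.Nonempty := hPne.image _
  have hP'pos : ∀ q ∈ P', 1 ≤ q ∧ q + 1 < n := by
    intro q hq
    obtain ⟨p, hp, rfl⟩ := hmemP' q hq
    obtain ⟨⟨h0, hn, _⟩, _⟩ := (hmemP p).1 hp
    exact ⟨h0, hn⟩
  set N : Finset ℕ := (P' ∪ P'.image (· + 1)) ∪ P'.image (· - 1) with hNdef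
  -- value map
  have hNlt : ∀ q ∈ N, q < n := by
    intro q hq
    rw [hNdef, Finset.mem_union, Finset.mem_union] at hq
    rcases hq with (hq | hq) | hq
    · have := (hP'pos _ hq).2; omega
    · rw [Finset.mem_image] at hq
      obtain ⟨q', hq', rfl⟩ := hq
      exact (hP'pos _ hq').2
    · rw [Finset.mem_image] at hq
      obtain ⟨q', hq', rfl⟩ := hq
      have := (hP'pos _ hq').2
      omega
  -- upper bound : N.card ≤ s
  have hval : ∀ q (hq : q ∈ N), (w ⟨q, hNlt q hq⟩).val + 1 ≤ s := by
    intro q hq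
    have hq' := hq
    rw [hNdef, Finset.mem_union, Finset.mem_union] at hq'
    rcases hq' with (hq' | hq') | hq'
    · obtain ⟨p, hp, rfl⟩ := hmemP' q hq'
      have := ((hmemP p).1 hp).2
      have he : (⟨p.val, hNlt _ hq⟩ : Fin n) = p := Fin.ext rfl
      rw [he]
      exact this
    · rw [Finset.mem_image] at hq'
      obtain ⟨q', hq', rfl⟩ := hq'
      obtain ⟨p, hp, rfl⟩ := hmemP' q' hq'
      obtain ⟨⟨h0, hn, hl, hr⟩, hle⟩ := (hmemP p).1 hp
      have he : (⟨p.val + 1, hNlt _ hq⟩ : Fin n) = ⟨p.val + 1, hn⟩ := Fin.ext rfl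
      rw [he]
      have : (w ⟨p.val + 1, hn⟩).val < (w p).val := hr
      omega
    · rw [Finset.mem_image] at hq'
      obtain ⟨q', hq', rfl⟩ := hq'
      obtain ⟨p, hp, rfl⟩ := hmemP' q' hq'
      obtain ⟨⟨h0, hn, hl, hr⟩, hle⟩ := (hmemP p).1 hp
      have he : (⟨p.val - 1, hNlt _ hq⟩ : Fin n)
          = ⟨p.val - 1, Nat.lt_of_le_of_lt (Nat.sub_le _ _) p.isLt⟩ := Fin.ext rfl
      rw [he]
      have : (w ⟨p.val - 1, Nat.lt_of_le_of_lt (Nat.sub_le _ _) p.isLt⟩).val < (w p).val := hl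
      omega
  have hNcard_le : N.card ≤ s := by
    classical
    have hle : N.card ≤ (Finset.Icc 1 s).card := by
      apply Finset.card_le_card_of_injOn (fun q => if h : q < n then (w ⟨q, h⟩).val + 1 else 0)
      · intro q hq
        have h1 := hNlt q hq
        have h2 := hval q hq
        simp only [dif_pos h1, Finset.mem_coe, Finset.mem_Icc]
        omega
      · intro a ha b hb hab
        have h1 := hNlt a ha
        have h2 := hNlt b hb
        dsimp only at hab
        rw [dif_pos h1, dif_pos h2] at hab
        have : w ⟨a, h1⟩ = w ⟨b, h2⟩ := Fin.ext (by omega)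
        have := w.injective this
        exact congrArg Fin.val this
    rwa [Nat.card_Icc, Nat.add_sub_cancel] at hle
  -- lower bound : 2 * P.card + 1 ≤ N.card
  have hadj : ∀ q ∈ P', q + 1 ∉ P' := by
    intro q hq hq1
    obtain ⟨p, hp, hpv⟩ := hmemP' q hq
    obtain ⟨p1, hp1, hp1v⟩ := hmemP' (q+1) hq1
    exact peaks_nonadjacent w p p1 ((hmemP p).1 hp).1 ((hmemP p1).1 hp1).1 (by omega)
  have hMdisj : Disjoint P' (P'.image (· + 1)) := by
    rw [Finset.disjoint_right]
    intro q hqimg hqP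
    rw [Finset.mem_image] at hqimg
    obtain ⟨q', hq'', rfl⟩ := hqimg
    exact hadj q' hq'' hqP
  have hMcard : (P' ∪ P'.image (· + 1)).card = 2 * P.card := by
    have h1 : (P'.image (· + 1)).card = P'.card :=
      Finset.card_image_of_injective _ (fun a b h => by omega)
    rw [Finset.card_union_of_disjoint hMdisj, h1, hP'card]
    omega
  set m := P'.min' hP'ne with hm
  have hmmem : m ∈ P' := P'.min'_mem hP'ne
  have hm1 : 1 ≤ m := (hP'pos m hmmem).1
  have hmN : m - 1 ∈ N := by
    rw [hNdef]
    refine Finset.mem_union_right _ (Finset.mem_image.2 ⟨m, hmmem, rfl⟩)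
  have hmnotM : m - 1 ∉ P' ∪ P'.image (· + 1) := by
    rw [Finset.mem_union]
    rintro (h | h)
    · have := P'.min'_le _ h
      omega
    · rw [Finset.mem_image] at h
      obtain ⟨q, hq, hqe⟩ := h
      have := P'.min'_le _ hq
      omega
  have hsubN : insert (m - 1) (P' ∪ P'.image (· + 1)) ⊆ N := by
    intro x hx
    rw [Finset.mem_insert] at hx
    rcases hx with rfl | hx
    · exact hmN
    · rw [hNdef]; exact Finset.mem_union_left _ hx
  have hNcard_ge : 2 * P.card + 1 ≤ N.card := by
    have := Finset.card_le_card hsubN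
    rw [Finset.card_insert_of_notMem hmnotM, hMcard] at this
    omega
  rw [hcardeq]
  omega

open DyckStep

def wordList (d : ℕ) (S : Finset ℕ) : List DyckStep :=
  (List.range (2*d)).map (fun j => if j + 2 ∈ S then DyckStep.D else DyckStep.U)

lemma countP_range (q : ℕ → Prop) [DecidablePred q] (m : ℕ) :
    (List.range m).countP (fun j => decide (q j)) = ((Finset.range m).filter q).card := by
  induction m with
  | zero => simp
  | succ m ih =>
    rw [List.range_succ, List.countP_append, Finset.range_add_one, Finset.filter_insert]
    by_cases h : q m
    · rw [if_pos h, Finset.card_insert_of_notMem (by simp)]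
      simp [h, ih]
    · rw [if_neg h]
      simp [h, ih]

lemma wordList_length (d : ℕ) (S : Finset ℕ) : (wordList d S).length = 2*d := by
  simp [wordList]

lemma count_D_take (d : ℕ) (S : Finset ℕ) (m : ℕ) :
    (List.take m (wordList d S)).count D
      = ((Finset.range (min m (2*d))).filter (fun j => j + 2 ∈ S)).card := by
  rw [wordList, ← List.map_take, List.take_range, List.count_eq_countP, List.countP_map,
    ← countP_range (fun j => j + 2 ∈ S)]
  apply List.countP_congr
  intro j _
  by_cases h : j + 2 ∈ S <;> simp [h]

lemma count_U_take (d : ℕ) (S : Finset ℕ) (m : ℕ) :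
    (List.take m (wordList d S)).count U
      = min m (2*d) - (List.take m (wordList d S)).count D := by
  have hlen : (List.take m (wordList d S)).length = min m (2*d) := by
    rw [List.length_take, wordList_length]
  have hsum := List.length_eq_countP_add_countP (fun x => x == D) (l := List.take m (wordList d S))
  have hU : (List.take m (wordList d S)).count U
      = (List.take m (wordList d S)).countP (fun a => decide ¬(a == D) = true) := by
    rw [List.count_eq_countP]
    apply List.countP_congr
    intro a _
    cases a <;> simp
  rw [hU]
  rw [hlen] at hsum
  rw [List.count_eq_countP]
  omega

lemma card_shift (S : Finset ℕ) (h3 : ∀ s ∈ S, 3 ≤ s) (m : ℕ) :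
    ((Finset.range m).filter (fun j => j + 2 ∈ S)).card
      = (S.filter (fun t => t ≤ m + 1)).card := by
  apply Finset.card_bij (fun j _ => j + 2)
  · intro j hj
    rw [Finset.mem_filter, Finset.mem_range] at hj
    exact Finset.mem_filter.2 ⟨hj.2, by omega⟩
  · intro a _ b _ hab; omega
  · intro t ht
    rw [Finset.mem_filter] at ht
    have := h3 t ht.1
    exact ⟨t - 2, Finset.mem_filter.2 ⟨Finset.mem_range.2 (by omega), by
      have : t - 2 + 2 = t := by omega
      rw [this]; exact ht.1⟩, by omega⟩

lemma good_filter_le (S : Finset ℕ)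
    (hgood : ∀ s ∈ S, 2 * (S.filter (fun t => t ≤ s)).card < s) (m : ℕ) :
    2 * (S.filter (fun t => t ≤ m + 1)).card ≤ m := by
  by_cases hc : (S.filter (fun t => t ≤ m + 1)).Nonempty
  · set s := (S.filter (fun t => t ≤ m + 1)).max' hc with hsdef
    have hsmem := (S.filter (fun t => t ≤ m + 1)).max'_mem hc
    rw [Finset.mem_filter] at hsmem
    have hsub : S.filter (fun t => t ≤ m + 1) ⊆ S.filter (fun t => t ≤ s) := by
      intro t ht
      rw [Finset.mem_filter] at ht ⊢
      exact ⟨ht.1, Finset.le_max' _ _ (Finset.mem_filter.2 ht)⟩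
    have h1 := Finset.card_le_card hsub
    have h2 := hgood s hsmem.1
    have h3 := hsmem.2
    omega
  · rw [Finset.not_nonempty_iff_eq_empty] at hc
    rw [hc]
    simp

def toW (d : ℕ) (S : Finset ℕ) (h3 : ∀ s ∈ S, 3 ≤ s) (hub : ∀ s ∈ S, s ≤ 2*d+1)
    (hgood : ∀ s ∈ S, 2 * (S.filter (fun t => t ≤ s)).card < s) (hcard : S.card = d) :
    DyckWord where
  toList := wordList d S
  count_U_eq_count_D := by
    have h1 : wordList d S = List.take (2*d) (wordList d S) := by
      rw [← wordList_length d S, List.take_length]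
    rw [h1, count_U_take, count_D_take, min_self, card_shift S h3,
        Finset.filter_true_of_mem (fun x hx => by have := hub x hx; omega), hcard]
    omega
  count_D_le_count_U := by
    intro i
    rw [count_U_take, count_D_take, card_shift S h3]
    have := good_filter_le S hgood (min i (2*d))
    omega

lemma toW_semilength (d : ℕ) (S : Finset ℕ) (h3 : ∀ s ∈ S, 3 ≤ s)
    (hub : ∀ s ∈ S, s ≤ 2*d+1)
    (hgood : ∀ s ∈ S, 2 * (S.filter (fun t => t ≤ s)).card < s) (hcard : S.card = d) :
    (toW d S h3 hub hgood hcard).semilength = d := by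
  have h1 : wordList d S = List.take (2*d) (wordList d S) := by
    rw [← wordList_length d S, List.take_length]
  have hD : (wordList d S).count D = d := by
    rw [h1, count_D_take, min_self, card_shift S h3,
        Finset.filter_true_of_mem (fun x hx => by have := hub x hx; omega), hcard]
  rw [DyckWord.semilength_eq_count_D]
  exact hD

def fromW (d : ℕ) (p : DyckWord) : Finset ℕ :=
  ((Finset.range (2*d)).filter (fun j => p.toList.getD j U = D)).image (fun j => j + 2)

lemma toList_eq_map (p : DyckWord) (d : ℕ) (hlen : p.toList.length = 2*d) :
    p.toList = (List.range (2*d)).map (fun j => p.toList.getD j U) := by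
  apply List.ext_getElem (by simp [hlen])
  intro n h1 h2
  rw [List.getElem_map, List.getElem_range, List.getD_eq_getElem _ _ (by omega)]

lemma count_D_take' (p : DyckWord) (d : ℕ) (hlen : p.toList.length = 2*d) (m : ℕ) :
    (p.toList.take m).count D
      = ((Finset.range (min m (2*d))).filter (fun j => p.toList.getD j U = D)).card := by
  conv_lhs => rw [toList_eq_map p d hlen]
  rw [← List.map_take, List.take_range, List.count_eq_countP, List.countP_map,
    ← countP_range (fun j => p.toList.getD j U = D)]
  apply List.countP_congr
  intro j _
  by_cases h : p.toList.getD j U = D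
  · simp [h]
  · rcases DyckStep.dichotomy (p.toList.getD j U) with h' | h'
    · simp [h', h]
    · exact absurd h' h

lemma count_UD (l : List DyckStep) : l.count D + l.count U = l.length := by
  induction l with
  | nil => simp
  | cons a l ih =>
    cases a <;> simp [List.count_cons] <;> omega

lemma dyck_length (p : DyckWord) (d : ℕ) (hsem : p.semilength = d) :
    p.toList.length = 2*d := by
  rw [← DyckWord.two_mul_semilength_eq_length, hsem]

lemma dyck_count_D (p : DyckWord) (d : ℕ) (hsem : p.semilength = d) :
    p.toList.count D = d := by
  rw [← DyckWord.semilength_eq_count_D, hsem]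

lemma last_D (p : DyckWord) (d : ℕ) (hd : 1 ≤ d) (hsem : p.semilength = d) :
    p.toList.getD (2*d-1) U = D := by
  have hlen := dyck_length p d hsem
  by_contra h
  have hU : p.toList.getD (2*d-1) U = U := by
    rcases DyckStep.dichotomy (p.toList.getD (2*d-1) U) with h' | h'
    · exact h'
    · exact absurd h' h
  have hdrop : p.toList.drop (2*d-1) = [p.toList[2*d-1]'(by omega)] := by
    rw [List.drop_eq_getElem_cons (by omega)]
    congr 1
    apply List.drop_eq_nil_of_le
    omega
  have hgetd : p.toList[2*d-1]'(by omega) = U := by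
    rw [← List.getD_eq_getElem _ U (by omega)]
    exact hU
  have hsplit : p.toList.count D
      = (p.toList.take (2*d-1)).count D + (p.toList.drop (2*d-1)).count D := by
    conv_lhs => rw [← List.take_append_drop (2*d-1) p.toList]
    rw [List.count_append]
  rw [hdrop, hgetd] at hsplit
  have h0 : List.count D [U] = 0 := by decide
  rw [h0] at hsplit
  have hDfull := dyck_count_D p d hsem
  have hpre := p.count_D_le_count_U (2*d-1)
  have hsum := count_UD (p.toList.take (2*d-1))
  rw [List.length_take, hlen] at hsum
  omega

lemma mem_fromW (d : ℕ) (p : DyckWord) (x : ℕ) :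
    x ∈ fromW d p ↔ ∃ j, j < 2*d ∧ p.toList.getD j U = D ∧ x = j + 2 := by
  rw [fromW, Finset.mem_image]
  constructor
  · rintro ⟨j, hj, rfl⟩
    rw [Finset.mem_filter, Finset.mem_range] at hj
    exact ⟨j, hj.1, hj.2, rfl⟩
  · rintro ⟨j, h1, h2, rfl⟩
    exact ⟨j, Finset.mem_filter.2 ⟨Finset.mem_range.2 h1, h2⟩, rfl⟩

lemma fromW_card (d : ℕ) (p : DyckWord) (hsem : p.semilength = d) :
    (fromW d p).card = d := by
  have hlen := dyck_length p d hsem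
  rw [fromW, Finset.card_image_of_injective _ (fun a b h => by omega)]
  have h1 : p.toList.take (2*d) = p.toList := by
    rw [← hlen, List.take_length]
  have h2 := count_D_take' p d hlen (2*d)
  rw [h1, min_self, dyck_count_D p d hsem] at h2
  omega

lemma fromW_mem_top (d : ℕ) (p : DyckWord) (hd : 1 ≤ d) (hsem : p.semilength = d) :
    2*d+1 ∈ fromW d p := by
  rw [mem_fromW]
  exact ⟨2*d-1, by omega, last_D p d hd hsem, by omega⟩

lemma fromW_bound (d : ℕ) (p : DyckWord) : ∀ x ∈ fromW d p, x ≤ 2*d+1 := by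
  intro x hx
  rw [mem_fromW] at hx
  obtain ⟨j, h1, _, rfl⟩ := hx
  omega

lemma fromW_good (d : ℕ) (p : DyckWord) (hsem : p.semilength = d) :
    ∀ s ∈ fromW d p, 2 * ((fromW d p).filter (fun t => t ≤ s)).card < s := by
  have hlen := dyck_length p d hsem
  intro s hs
  rw [mem_fromW] at hs
  obtain ⟨j0, hj0, hD, rfl⟩ := hs
  have hstep : (fromW d p).filter (fun t => t ≤ j0 + 2)
      = ((Finset.range (j0+1)).filter (fun j => p.toList.getD j U = D)).image (fun j => j + 2) := by
    ext x
    rw [Finset.mem_filter, mem_fromW, Finset.mem_image]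
    constructor
    · rintro ⟨⟨j, h1, h2, rfl⟩, h3⟩
      exact ⟨j, Finset.mem_filter.2 ⟨Finset.mem_range.2 (by omega), h2⟩, rfl⟩
    · rintro ⟨j, hj, rfl⟩
      rw [Finset.mem_filter, Finset.mem_range] at hj
      exact ⟨⟨j, by omega, hj.2, rfl⟩, by omega⟩
  rw [hstep, Finset.card_image_of_injective _ (fun a b h => by omega)]
  have h2 := count_D_take' p d hlen (j0+1)
  have hmin : min (j0+1) (2*d) = j0+1 := by omega
  rw [hmin] at h2
  have hpre := p.count_D_le_count_U (j0+1)
  have hsum := count_UD (p.toList.take (j0+1))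
  rw [List.length_take, hlen] at hsum
  omega

lemma good_three (S : Finset ℕ)
    (hgood : ∀ s ∈ S, 2 * (S.filter (fun t => t ≤ s)).card < s) :
    ∀ s ∈ S, 3 ≤ s := by
  intro s hs
  have h1 : 1 ≤ (S.filter (fun t => t ≤ s)).card :=
    Finset.card_pos.2 ⟨s, Finset.mem_filter.2 ⟨hs, le_refl s⟩⟩
  have := hgood s hs
  omega

lemma getD_wordList (d : ℕ) (S : Finset ℕ) (j : ℕ) (hj : j < 2*d) :
    (wordList d S).getD j U = if j + 2 ∈ S then D else U := by
  rw [List.getD_eq_getElem _ _ (by rw [wordList_length]; omega)]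
  simp only [wordList, List.getElem_map, List.getElem_range]

lemma fromW_toW (d : ℕ) (S : Finset ℕ) (h3 : ∀ s ∈ S, 3 ≤ s) (hub : ∀ s ∈ S, s ≤ 2*d+1)
    (hgood : ∀ s ∈ S, 2 * (S.filter (fun t => t ≤ s)).card < s) (hcard : S.card = d) :
    fromW d (toW d S h3 hub hgood hcard) = S := by
  ext x
  rw [mem_fromW]
  constructor
  · rintro ⟨j, h1, h2, rfl⟩
    rw [show (toW d S h3 hub hgood hcard).toList = wordList d S from rfl,
      getD_wordList d S j h1] at h2
    by_cases h : j + 2 ∈ S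
    · exact h
    · rw [if_neg h] at h2; exact absurd h2 (by decide)
  · intro hx
    have hx3 := h3 x hx
    have hxu := hub x hx
    refine ⟨x - 2, by omega, ?_, by omega⟩
    rw [show (toW d S h3 hub hgood hcard).toList = wordList d S from rfl,
      getD_wordList d S (x-2) (by omega)]
    rw [if_pos (by rwa [show x - 2 + 2 = x by omega])]

lemma toW_fromW (d : ℕ) (p : DyckWord) (hsem : p.semilength = d)
    (h3 : ∀ s ∈ fromW d p, 3 ≤ s) (hub : ∀ s ∈ fromW d p, s ≤ 2*d+1)
    (hgood : ∀ s ∈ fromW d p, 2 * ((fromW d p).filter (fun t => t ≤ s)).card < s)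
    (hcard : (fromW d p).card = d) :
    toW d (fromW d p) h3 hub hgood hcard = p := by
  have hlen := dyck_length p d hsem
  apply DyckWord.ext
  show wordList d (fromW d p) = p.toList
  apply List.ext_getElem (by rw [wordList_length, hlen])
  intro n h1 h2
  simp only [wordList, List.getElem_map, List.getElem_range]
  rw [wordList_length] at h1
  by_cases h : p.toList.getD n U = D
  · rw [if_pos (by rw [mem_fromW]; exact ⟨n, h1, h, rfl⟩)]
    rw [← List.getD_eq_getElem _ U (by omega)]
    exact h.symm
  · rw [if_neg ?_]
    · rcases DyckStep.dichotomy (p.toList.getD n U) with h' | h'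
      · rw [← List.getD_eq_getElem _ U (by omega)]
        exact h'.symm
      · exact absurd h' h
    · rw [mem_fromW]
      rintro ⟨j, hj1, hj2, hj3⟩
      have : j = n := by omega
      rw [this] at hj2
      exact h hj2


theorem count_admissible_catalan (d : ℕ) (hd : 1 ≤ d) :
    Nat.card {S : Finset ℕ //
        Admissible S ∧ S.card = d ∧ ∃ h : S.Nonempty, S.max' h = 2 * d + 1} =
      Nat.choose (2 * d) d / (d + 1) := by
  classical
  have hiff : ∀ S : Finset ℕ,
      (Admissible S ∧ S.card = d ∧ ∃ h : S.Nonempty, S.max' h = 2 * d + 1) ↔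
      ((∀ s ∈ S, 2 * (S.filter (fun t => t ≤ s)).card < s) ∧ S.card = d ∧
        ((2*d+1 ∈ S) ∧ ∀ x ∈ S, x ≤ 2*d+1)) := by
    intro S
    constructor
    · rintro ⟨⟨n, w, hPin⟩, hcard, hne, hmax⟩
      refine ⟨admissible_good w S hPin, hcard, ?_, ?_⟩
      · rw [← hmax]; exact S.max'_mem hne
      · intro x hx; rw [← hmax]; exact S.le_max' x hx
    · rintro ⟨hgood, hcard, hmem, hub⟩
      have hne : S.Nonempty := ⟨2*d+1, hmem⟩
      refine ⟨good_admissible S d hcard hub hgood, hcard, hne, ?_⟩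
      exact le_antisymm (Finset.max'_le _ _ _ hub) (Finset.le_max' _ _ hmem)
  rw [Nat.card_congr (Equiv.subtypeEquivRight hiff)]
  have e2 : {S : Finset ℕ // (∀ s ∈ S, 2 * (S.filter (fun t => t ≤ s)).card < s) ∧ S.card = d ∧
        ((2*d+1 ∈ S) ∧ ∀ x ∈ S, x ≤ 2*d+1)} ≃ {p : DyckWord // p.semilength = d} :=
    { toFun := fun x => ⟨toW d x.1 (good_three x.1 x.2.1) x.2.2.2.2 x.2.1 x.2.2.1,
        toW_semilength d x.1 (good_three x.1 x.2.1) x.2.2.2.2 x.2.1 x.2.2.1⟩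
      invFun := fun p => ⟨fromW d p.1, fromW_good d p.1 p.2, fromW_card d p.1 p.2,
        fromW_mem_top d p.1 hd p.2, fromW_bound d p.1⟩
      left_inv := fun x => Subtype.ext
        (fromW_toW d x.1 (good_three x.1 x.2.1) x.2.2.2.2 x.2.1 x.2.2.1)
      right_inv := fun p => Subtype.ext
        (toW_fromW d p.1 p.2 (good_three _ (fromW_good d p.1 p.2)) (fromW_bound d p.1)
          (fromW_good d p.1 p.2) (fromW_card d p.1 p.2)) }
  rw [Nat.card_congr e2, Nat.card_eq_fintype_card,
    DyckWord.card_dyckWord_semilength_eq_catalan, catalan_eq_centralBinom_div]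
  rfl
end

section
/- For l ≥ 3 and n ≥ l, the number of permutations in S_n with pinnacle set {l} equals 2^{n-2}·(2^{l-2} - 1). -/
/-- peak at index i of list L -/
def peakAt (L : List ℕ) (i : ℕ) : Prop :=
  0 < i ∧ i + 1 < L.length ∧ L.getD (i-1) 0 < L.getD i 0 ∧ L.getD (i+1) 0 < L.getD i 0

/-- pinnacle set of a list -/
def pins (L : List ℕ) : Set ℕ := {v | ∃ i, peakAt L i ∧ v = L.getD i 0}

lemma pins_nil : pins [] = ∅ := by
  ext v; simp only [pins, peakAt, Set.mem_setOf_eq, Set.mem_empty_iff_false, iff_false]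
  rintro ⟨i, ⟨h1, h2, _⟩, _⟩; simp at h2

lemma pins_single (a : ℕ) : pins [a] = ∅ := by
  ext v; simp only [pins, peakAt, Set.mem_setOf_eq, Set.mem_empty_iff_false, iff_false]
  rintro ⟨i, ⟨h1, h2, _⟩, _⟩; simp at h2

lemma pins_pair (a b : ℕ) : pins [a,b] = ∅ := by
  ext v; simp only [pins, peakAt, Set.mem_setOf_eq, Set.mem_empty_iff_false, iff_false]
  rintro ⟨i, ⟨h1, h2, _⟩, _⟩; simp at h2; omega

lemma peakAt_cons_two (x : ℕ) (L : List ℕ) (j : ℕ) :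
    peakAt (x :: L) (j+2) ↔ peakAt L (j+1) := by
  unfold peakAt
  simp only [List.length_cons, List.getD_cons_succ]
  constructor
  · rintro ⟨-, h2, h3, h4⟩
    refine ⟨by omega, by omega, ?_, h4⟩
    rw [show j+2-1 = j+1 from rfl, List.getD_cons_succ] at h3
    rwa [show j+1-1 = j from rfl]
  · rintro ⟨-, h2, h3, h4⟩
    refine ⟨by omega, by omega, ?_, h4⟩
    rw [show j+2-1 = j+1 from rfl, List.getD_cons_succ]
    rwa [show j+1-1 = j from rfl] at h3

lemma peakAt_cons_one (x a b : ℕ) (t : List ℕ) :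
    peakAt (x :: a :: b :: t) 1 ↔ (x < a ∧ b < a) := by
  unfold peakAt
  simp [List.getD_cons_succ]

/-- master cons lemma -/
lemma pins_cons (x a b : ℕ) (t : List ℕ) :
    pins (x :: a :: b :: t) = pins (a :: b :: t) ∪ (if x < a ∧ b < a then {a} else ∅) := by
  ext v
  simp only [pins, Set.mem_setOf_eq, Set.mem_union]
  constructor
  · rintro ⟨i, hp, hv⟩
    match i with
    | 0 => exact absurd hp.1 (by omega)
    | 1 =>
      right
      rw [peakAt_cons_one] at hp
      simp only [List.getD_cons_succ, List.getD_cons_zero] at hv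
      simp [hp, hv]
    | (j+2) =>
      left
      rw [peakAt_cons_two] at hp
      exact ⟨j+1, hp, by simpa using hv⟩
  · rintro (⟨i, hp, hv⟩ | hv)
    · match i with
      | 0 => exact absurd hp.1 (by omega)
      | (j+1) =>
        exact ⟨j+2, (peakAt_cons_two x _ j).2 hp, by simpa using hv⟩
    · split_ifs at hv with h
      · exact ⟨1, (peakAt_cons_one x a b t).2 h, by simpa using hv.symm ▸ rfl⟩
      · simp at hv

lemma pins_cons_of_ge (x : ℕ) (L : List ℕ) (h : L.getD 0 0 ≤ x) :
    pins (x :: L) = pins L := by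
  match L with
  | [] => rw [pins_single, pins_nil]
  | [a] => rw [pins_pair, pins_single]
  | a :: b :: t =>
    rw [pins_cons]
    have : ¬ (x < a ∧ b < a) := by
      simp only [List.getD_cons_zero] at h; omega
    simp [this]

lemma getD_reverse (L : List ℕ) (i : ℕ) (h : i < L.length) :
    L.reverse.getD i 0 = L.getD (L.length - 1 - i) 0 := by
  rw [List.getD_eq_getElem _ _ (by simpa using h),
      List.getD_eq_getElem _ _ (by omega), List.getElem_reverse]

lemma pins_reverse_subset (L : List ℕ) : pins L.reverse ⊆ pins L := by
  rintro v ⟨i, ⟨h1, h2, h3, h4⟩, hv⟩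
  have hlen : i + 1 < L.length := by simpa using h2
  refine ⟨L.length - 1 - i, ⟨by omega, by omega, ?_, ?_⟩, ?_⟩
  · rw [show L.length - 1 - i - 1 = L.length - 1 - (i+1) by omega,
        ← getD_reverse L (i+1) (by omega), ← getD_reverse L i (by omega)]
    exact h4
  · rw [show L.length - 1 - i + 1 = L.length - 1 - (i-1) by omega,
        ← getD_reverse L (i-1) (by omega), ← getD_reverse L i (by omega)]
    exact h3
  · rw [← getD_reverse L i (by omega)]; exact hv

lemma pins_reverse (L : List ℕ) : pins L.reverse = pins L := by
  refine le_antisymm (pins_reverse_subset L) ?_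
  have := pins_reverse_subset L.reverse
  rwa [List.reverse_reverse] at this

lemma mem_of_mem_pins {L : List ℕ} {v : ℕ} (h : v ∈ pins L) : v ∈ L := by
  obtain ⟨i, ⟨h1, h2, _, _⟩, hv⟩ := h
  rw [hv, List.getD_eq_getElem _ _ (by omega)]
  exact List.getElem_mem _

lemma pins_map {L : List ℕ} {f : ℕ → ℕ} (hf : ∀ a ∈ L, ∀ b ∈ L, (a < b ↔ f a < f b)) :
    pins (L.map f) = f '' pins L := by
  have key : ∀ i, i < L.length → (L.map f).getD i 0 = f (L.getD i 0) := by
    intro i hi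
    rw [List.getD_eq_getElem _ _ (by simpa using hi), List.getD_eq_getElem _ _ hi,
        List.getElem_map]
  ext v
  constructor
  · rintro ⟨i, ⟨h1, h2, h3, h4⟩, hv⟩
    have hlen : i + 1 < L.length := by simpa using h2
    rw [key _ (by omega), key _ (by omega)] at h3
    rw [key _ (by omega), key _ (by omega)] at h4
    have m1 : L.getD (i-1) 0 ∈ L := by
      rw [List.getD_eq_getElem _ _ (by omega)]; exact List.getElem_mem _
    have m2 : L.getD i 0 ∈ L := by
      rw [List.getD_eq_getElem _ _ (by omega)]; exact List.getElem_mem _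
    have m3 : L.getD (i+1) 0 ∈ L := by
      rw [List.getD_eq_getElem _ _ (by omega)]; exact List.getElem_mem _
    refine ⟨L.getD i 0, ⟨i, ⟨h1, hlen, ?_, ?_⟩, rfl⟩, ?_⟩
    · exact (hf _ m1 _ m2).2 h3
    · exact (hf _ m3 _ m2).2 h4
    · rw [hv, key _ (by omega)]
  · rintro ⟨w, ⟨i, ⟨h1, h2, h3, h4⟩, hw⟩, hv⟩
    refine ⟨i, ⟨h1, by simpa using h2, ?_, ?_⟩, ?_⟩
    · rw [key _ (by omega), key _ (by omega)]
      have m1 : L.getD (i-1) 0 ∈ L := by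
        rw [List.getD_eq_getElem _ _ (by omega)]; exact List.getElem_mem _
      have m2 : L.getD i 0 ∈ L := by
        rw [List.getD_eq_getElem _ _ (by omega)]; exact List.getElem_mem _
      exact (hf _ m1 _ m2).1 h3
    · rw [key _ (by omega), key _ (by omega)]
      have m3 : L.getD (i+1) 0 ∈ L := by
        rw [List.getD_eq_getElem _ _ (by omega)]; exact List.getElem_mem _
      have m2 : L.getD i 0 ∈ L := by
        rw [List.getD_eq_getElem _ _ (by omega)]; exact List.getElem_mem _
      exact (hf _ m3 _ m2).1 h4
    · rw [← hv, hw, key _ (by omega)]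

lemma pins_cons' (x : ℕ) (M : List ℕ) :
    pins (x :: M) = pins M ∪
      (if 2 ≤ M.length ∧ x < M.getD 0 0 ∧ M.getD 1 0 < M.getD 0 0 then {M.getD 0 0} else ∅) := by
  match M with
  | [] => simp [pins_nil, pins_single]
  | [a] => simp [pins_single, pins_pair]
  | a :: b :: t =>
    rw [pins_cons]
    congr 1
    simp only [List.getD_cons_zero, List.getD_cons_succ, List.length_cons]
    by_cases h : x < a ∧ b < a
    · rw [if_pos h, if_pos ⟨by omega, h⟩]
    · rw [if_neg h, if_neg (by tauto)]

lemma pins_insert_before (x y : ℕ) (hxy : x < y) :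
    ∀ (A B : List ℕ) (hA : A ≠ []), A.getLast hA < x →
      pins (A ++ x :: y :: B) = pins (A ++ y :: B)
  | [], _, hA, _ => absurd rfl hA
  | [a], B, _, ha => by
    simp only [List.getLast_singleton] at ha
    simp only [List.cons_append, List.nil_append]
    rw [pins_cons' a, pins_cons' a, pins_cons' x (y :: B)]
    simp only [List.getD_cons_zero, List.length_cons, List.getD_cons_succ]
    have hx : ¬ (2 ≤ B.length + 1 + 1 ∧ a < x ∧ y < x) := by omega
    rw [if_neg hx, Set.union_empty]
    congr 1
    by_cases hB : 2 ≤ B.length + 1 ∧ B.getD 0 0 < y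
    · rw [if_pos ⟨hB.1, hxy, hB.2⟩, if_pos ⟨hB.1, by omega, hB.2⟩]
    · rw [if_neg (by tauto), if_neg (by tauto)]
  | (a :: c :: A'), B, _, ha => by
    have hA' : (c :: A') ≠ [] := by simp
    rw [List.getLast_cons hA'] at ha
    have IH := pins_insert_before x y hxy (c :: A') B hA' ha
    simp only [List.cons_append] at IH ⊢
    rw [pins_cons' a, pins_cons' a, IH]
    congr 1
    match A' with
    | [] =>
      simp only [List.getLast_singleton] at ha
      simp only [List.nil_append, List.cons_append, List.getD_cons_zero, List.getD_cons_succ,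
        List.length_cons]
      have h1 : ¬ ((2:ℕ) ≤ B.length + 1 + 1 ∧ a < c ∧ y < c) := by omega
      have h2 : ¬ ((2:ℕ) ≤ B.length + 1 + 1 + 1 ∧ a < c ∧ x < c) := by omega
      rw [if_neg h1, if_neg h2]
    | d :: A'' =>
      have h2 : 2 ≤ (c :: d :: A'').length := by simp
      have e0 : ∀ (Z : List ℕ), ((c :: d :: A'') ++ Z).getD 0 0 = c := by intro Z; simp
      have e1 : ∀ (Z : List ℕ), ((c :: d :: A'') ++ Z).getD 1 0 = d := by intro Z; simp
      simp only [List.cons_append] at e0 e1 ⊢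
      rw [e0, e1, e0, e1]
      simp only [List.length_cons, List.length_append]
      by_cases h : a < c ∧ d < c
      · rw [if_pos ⟨by omega, h⟩, if_pos ⟨by omega, h⟩]
      · rw [if_neg (by tauto), if_neg (by tauto)]

/-- The set of lists that are permutations of `[1,…,n]` with pinnacle set `S`. -/
def PP (n : ℕ) (S : Set ℕ) : Set (List ℕ) :=
  {L | L.Perm (List.range' 1 n) ∧ pins L = S}

lemma PP_finite (n : ℕ) (S : Set ℕ) : (PP n S).Finite := by
  apply Set.Finite.subset (List.finite_toSet (List.range' 1 n).permutations)
  intro L hL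
  simpa [List.mem_permutations] using hL.1

lemma mem_range'_perm {n : ℕ} {L : List ℕ} (h : L.Perm (List.range' 1 n)) :
    ∀ v ∈ L, 1 ≤ v ∧ v ≤ n := by
  intro v hv
  have := h.mem_iff.1 hv
  rw [List.mem_range'_1] at this
  omega

lemma nodup_of_perm_range' {n : ℕ} {L : List ℕ} (h : L.Perm (List.range' 1 n)) : L.Nodup :=
  h.nodup_iff.2 (List.nodup_range' (s := 1) (n := n))

lemma range'_perm_cons (n : ℕ) (hn : 1 ≤ n) :
    (List.range' 1 n).Perm (n :: List.range' 1 (n-1)) := by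
  have : List.range' 1 n = List.range' 1 (n-1) ++ [n] := by
    have := List.range'_concat (step := 1) (s := 1) (n := n-1)
    rw [show n - 1 + 1 = n by omega] at this
    rw [this, show 1 + 1 * (n-1) = n by omega]
  rw [this]
  exact List.perm_append_comm.trans (by rfl)

lemma perm_cons_top {n : ℕ} {L : List ℕ} (hn : 1 ≤ n) :
    (n :: L).Perm (List.range' 1 n) ↔ L.Perm (List.range' 1 (n-1)) := by
  constructor
  · intro h
    exact (h.trans (range'_perm_cons n hn)).cons_inv
  · intro h
    exact ((h.cons n).trans (range'_perm_cons n hn).symm)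

/-- if n is not a pinnacle then n is at the front or the back -/
lemma top_at_end {n : ℕ} {L : List ℕ} (hn : 1 ≤ n) (hL : L.Perm (List.range' 1 n))
    (hS : n ∉ pins L) : L.getD 0 0 = n ∨ L.getD (L.length - 1) 0 = n := by
  have hlen : L.length = n := by simpa using hL.length_eq
  have hmem : n ∈ L := hL.mem_iff.2 (by rw [List.mem_range'_1]; omega)
  obtain ⟨p, hp, hpn⟩ := List.getElem_of_mem hmem
  have hnd := nodup_of_perm_range' hL
  by_cases h0 : p = 0
  · left; subst h0; rw [List.getD_eq_getElem _ _ (by omega)]; exact hpn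
  by_cases h1 : p = L.length - 1
  · right; subst h1; rw [List.getD_eq_getElem _ _ (by omega)]; exact hpn
  exfalso
  apply hS
  have e0 : L.getD p 0 = n := by rw [List.getD_eq_getElem _ _ hp]; exact hpn
  refine ⟨p, ⟨by omega, by omega, ?_, ?_⟩, e0.symm⟩
  · rw [e0, List.getD_eq_getElem _ _ (show p - 1 < L.length by omega)]
    have hle := (mem_range'_perm hL _ (List.getElem_mem (by omega : p - 1 < L.length))).2
    have hne : L[p-1] ≠ n := by
      intro he
      have := (hnd.getElem_inj_iff).1 (he.trans hpn.symm)
      omega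
    omega
  · rw [e0, List.getD_eq_getElem _ _ (show p + 1 < L.length by omega)]
    have hle := (mem_range'_perm hL _ (List.getElem_mem (by omega : p + 1 < L.length))).2
    have hne : L[p+1] ≠ n := by
      intro he
      have := (hnd.getElem_inj_iff).1 (he.trans hpn.symm)
      omega
    omega

lemma PP_reverse_mem {n : ℕ} {S : Set ℕ} {L : List ℕ} (h : L ∈ PP n S) :
    L.reverse ∈ PP n S :=
  ⟨(List.reverse_perm L).trans h.1, by rw [pins_reverse]; exact h.2⟩

lemma card_step (n : ℕ) (S : Set ℕ) (hn : 2 ≤ n) (hS : n ∉ S) :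
    (PP n S).ncard = 2 * (PP (n-1) S).ncard := by
  classical
  set X := (fun L => n :: L) '' PP (n-1) S with hX
  set Y := List.reverse '' X with hY
  have hsubX : X ⊆ PP n S := by
    rintro _ ⟨L, hL, rfl⟩
    refine ⟨(perm_cons_top (by omega)).2 hL.1, ?_⟩
    rw [pins_cons_of_ge, hL.2]
    cases L with
    | nil => simp
    | cons a t =>
      have := (mem_range'_perm hL.1 a (by simp)).2
      simp only [List.getD_cons_zero]
      omega
  have hsubY : Y ⊆ PP n S := by
    rintro _ ⟨M, hM, rfl⟩
    exact PP_reverse_mem (hsubX hM)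
  have hhead : ∀ L ∈ PP n S, L.getD 0 0 = n → L ∈ X := by
    intro L hL h0
    have hlen : L.length = n := by simpa using hL.1.length_eq
    cases L with
    | nil => simp at hlen; omega
    | cons a t =>
      simp only [List.getD_cons_zero] at h0
      subst h0
      refine ⟨t, ⟨(perm_cons_top (by omega)).1 hL.1, ?_⟩, rfl⟩
      rw [← hL.2]
      symm
      apply pins_cons_of_ge
      cases t with
      | nil => simp
      | cons b t' =>
        have := (mem_range'_perm hL.1 b (by simp)).2
        simp only [List.getD_cons_zero]
        omega
  have cover : PP n S = X ∪ Y := by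
    apply Set.Subset.antisymm
    · intro L hL
      rcases top_at_end (by omega) hL.1 (by rw [hL.2]; exact hS) with h | h
      · exact Or.inl (hhead L hL h)
      · right
        refine ⟨L.reverse, hhead L.reverse (PP_reverse_mem hL) ?_, by simp⟩
        have hlen : L.length = n := by simpa using hL.1.length_eq
        rw [getD_reverse _ _ (by omega)]
        simpa using h
    · exact Set.union_subset hsubX hsubY
  have disj : Disjoint X Y := by
    rw [Set.disjoint_left]
    rintro L ⟨L', hL', rfl⟩ ⟨M, hM, hrev⟩
    obtain ⟨M', hM', rfl⟩ := hM
    have hnd : (n :: L').Nodup := nodup_of_perm_range' (hsubX ⟨L', hL', rfl⟩).1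
    have hlen' : L'.length = n - 1 := by simpa using hL'.1.length_eq
    have hne : L' ≠ [] := by intro h; rw [h] at hlen'; simp at hlen'; omega
    beta_reduce at hrev
    have h1 : (n :: L').getLast? = some n := by
      rw [← hrev, List.getLast?_reverse]; rfl
    have h3 := List.getLast?_eq_getLast_of_ne_nil (l := n :: L') (by simp)
    rw [List.getLast_cons hne] at h3
    rw [h1] at h3
    have h4 : n = L'.getLast hne := by simpa using h3
    have : n ∈ L' := h4 ▸ List.getLast_mem hne
    exact (List.nodup_cons.1 hnd).1 this
  have hfinX : X.Finite := (PP_finite n S).subset hsubX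
  have hfinY : Y.Finite := (PP_finite n S).subset hsubY
  rw [cover, Set.ncard_union_eq disj hfinX hfinY]
  have hcX : X.ncard = (PP (n-1) S).ncard := by
    apply Set.ncard_image_of_injective
    intro a b hab
    simpa using hab
  have hcY : Y.ncard = X.ncard := Set.ncard_image_of_injective _ List.reverse_injective
  omega

lemma card_nopeak : ∀ n : ℕ, 1 ≤ n → (PP n ∅).ncard = 2 ^ (n - 1) := by
  intro n
  induction n with
  | zero => omega
  | succ m ih =>
    intro _
    by_cases hm : m = 0
    · subst hm
      have : PP 1 ∅ = {[1]} := by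
        ext L
        constructor
        · rintro ⟨h1, h2⟩
          have : L.Perm [1] := by simpa using h1
          simpa using List.perm_singleton.1 this
        · rintro rfl
          exact ⟨by simp, pins_single 1⟩
      rw [this]
      simp
    · have h2 : 2 ≤ m + 1 := by omega
      rw [card_step (m+1) ∅ h2 (Set.notMem_empty _), show m + 1 - 1 = m from rfl,
        ih (by omega)]
      have h3 : m - 1 + 1 = m := by omega
      calc 2 * 2 ^ (m - 1) = 2 ^ (m - 1 + 1) := by ring
        _ = 2 ^ m := by rw [h3]

lemma pins_three (a b c : ℕ) :
    pins [a, b, c] = if a < b ∧ c < b then {b} else ∅ := by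
  rw [show [a,b,c] = a :: b :: c :: [] from rfl, pins_cons, pins_pair]
  simp

lemma card_q3 : (PP 3 ({3} : Set ℕ)).ncard = 2 := by
  have : PP 3 ({3} : Set ℕ) = {[1,3,2], [2,3,1]} := by
    ext L
    constructor
    · rintro ⟨h1, h2⟩
      have hlen : L.length = 3 := by simpa using h1.length_eq
      obtain ⟨a, b, c, rfl⟩ := List.length_eq_three.1 hlen
      rw [pins_three] at h2
      have hcond : a < b ∧ c < b := by
        by_contra h
        rw [if_neg h] at h2
        exact (Set.singleton_ne_empty 3 h2.symm).elim
      rw [if_pos hcond] at h2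
      have hb : b = 3 := by
        have := Set.singleton_eq_singleton_iff.1 h2
        omega
      have hmema := mem_range'_perm h1 a (by simp)
      have hmemc := mem_range'_perm h1 c (by simp)
      have hnd := nodup_of_perm_range' h1
      simp only [List.nodup_cons, List.mem_cons, List.not_mem_nil] at hnd
      have hac : a ≠ c := by tauto
      have : (a = 1 ∧ c = 2) ∨ (a = 2 ∧ c = 1) := by omega
      rcases this with ⟨rfl, rfl⟩ | ⟨rfl, rfl⟩
      · subst hb; left; rfl
      · subst hb; right; rfl
    · rintro (rfl | rfl)
      · refine ⟨by decide, ?_⟩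
        rw [pins_three]; norm_num
      · refine ⟨by decide, ?_⟩
        rw [pins_three]; norm_num
  rw [this]
  rw [Set.ncard_pair (by simp)]

/-! ### helpers for the main recursion -/

lemma pins_ne_ends {L : List ℕ} {v : ℕ} (hnd : L.Nodup) (hv : v ∈ pins L) :
    L.getD 0 0 ≠ v ∧ L.getD (L.length - 1) 0 ≠ v := by
  obtain ⟨p, ⟨hp0, hp1, _, _⟩, hpv⟩ := hv
  have hplen : p < L.length := by omega
  rw [List.getD_eq_getElem _ _ hplen] at hpv
  constructor
  · rw [List.getD_eq_getElem _ _ (by omega)]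
    intro h
    have := (hnd.getElem_inj_iff).1 (h.trans hpv)
    omega
  · rw [List.getD_eq_getElem _ _ (by omega)]
    intro h
    have := (hnd.getElem_inj_iff).1 (h.trans hpv)
    omega

lemma flatMap_eq_self (A : List ℕ) (g : ℕ → List ℕ) (h : ∀ a ∈ A, g a = [a]) :
    A.flatMap g = A := by
  induction A with
  | nil => simp
  | cons a t ih =>
    rw [List.flatMap_cons, h a (by simp), ih (fun x hx => h x (by simp [hx]))]
    rfl

lemma getD_append_left (P T : List ℕ) (i : ℕ) (h : i < P.length) :
    (P ++ T).getD i 0 = P.getD i 0 := List.getD_append _ _ _ _ h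

lemma getD_append_mid (P : List ℕ) (x : ℕ) (T : List ℕ) :
    (P ++ x :: T).getD P.length 0 = x := by
  rw [List.getD_eq_getElem _ _ (by simp), List.getElem_append_right (le_refl _)]
  simp

lemma getD_append_mid1 (P : List ℕ) (x c : ℕ) (T : List ℕ) :
    (P ++ x :: c :: T).getD (P.length + 1) 0 = c := by
  rw [List.getD_eq_getElem _ _ (by simp),
      List.getElem_append_right (by omega)]
  simp

lemma getD_last (P : List ℕ) (hP : P ≠ []) :
    P.getD (P.length - 1) 0 = P.getLast hP := by
  rw [List.getD_eq_getElem _ _ (by simp [List.length_pos_iff.2 hP]),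
      List.getLast_eq_getElem]

/-- raise `l-1` to `l` -/
def bmp (l : ℕ) : ℕ → ℕ := fun v => if v = l - 1 then l else v
/-- lower `l` to `l-1` -/
def unb (l : ℕ) : ℕ → ℕ := fun v => if v = l then l - 1 else v

lemma bmp_mono {l a b : ℕ} (hl : 1 ≤ l) (ha : a ≤ l - 1) (hb : b ≤ l - 1) :
    a < b ↔ bmp l a < bmp l b := by
  unfold bmp; split_ifs <;> omega

lemma unb_mono {l a b : ℕ} (hl : 1 ≤ l) (ha : a ≤ l) (ha' : a ≠ l - 1)
    (hb : b ≤ l) (hb' : b ≠ l - 1) : a < b ↔ unb l a < unb l b := by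
  unfold unb; split_ifs <;> omega

lemma unb_bmp {l v : ℕ} (hl : 1 ≤ l) (hv : v ≤ l - 1) : unb l (bmp l v) = v := by
  unfold bmp unb; split_ifs <;> omega

lemma bmp_unb {l v : ℕ} (hl : 1 ≤ l) (hv : v ≤ l) (hv' : v ≠ l - 1) :
    bmp l (unb l v) = v := by
  unfold bmp unb; split_ifs <;> omega

lemma range'_eq_concat (m : ℕ) (hm : 1 ≤ m) :
    List.range' 1 m = List.range' 1 (m-1) ++ [m] := by
  have := List.range'_concat (step := 1) (s := 1) (n := m-1)
  rw [show m - 1 + 1 = m by omega] at this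
  rw [this, show 1 + 1 * (m-1) = m by omega]

lemma bmp_range' {l : ℕ} (hl : 2 ≤ l) :
    (List.range' 1 (l-1)).map (bmp l) = List.range' 1 (l-2) ++ [l] := by
  rw [range'_eq_concat (l-1) (by omega), List.map_append, show (l:ℕ)-1-1 = l-2 by omega]
  congr 1
  · rw [List.map_congr_left (g := id), List.map_id]
    intro a ha
    have := List.mem_range'_1.1 ha
    unfold bmp; simp only [id]
    rw [if_neg (by omega)]
  · unfold bmp; simp

lemma unb_range' {l : ℕ} (hl : 2 ≤ l) :
    (List.range' 1 (l-2) ++ [l]).map (unb l) = List.range' 1 (l-1) := by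
  rw [range'_eq_concat (l-1) (by omega), List.map_append, show (l:ℕ)-1-1 = l-2 by omega]
  congr 1
  · rw [List.map_congr_left (g := id), List.map_id]
    intro a ha
    have := List.mem_range'_1.1 ha
    unfold unb; simp only [id]
    rw [if_neg (by omega)]
  · unfold unb; simp

/-- facts about an `M` on the value set `{1,…,l-2} ∪ {l}` -/
lemma M_vals {l : ℕ} {M : List ℕ} (hM : M.Perm (List.range' 1 (l-2) ++ [l])) :
    ∀ v ∈ M, (1 ≤ v ∧ v ≤ l - 2) ∨ v = l := by
  intro v hv
  have := hM.mem_iff.1 hv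
  simp only [List.mem_append, List.mem_range'_1, List.mem_singleton] at this
  omega

lemma M_nodup {l : ℕ} (hl : 1 ≤ l) {M : List ℕ} (hM : M.Perm (List.range' 1 (l-2) ++ [l])) :
    M.Nodup := by
  refine hM.nodup_iff.2 (List.Nodup.append (List.nodup_range' (s := 1) (n := l-2)) (by simp) ?_)
  intro a ha hb
  simp only [List.mem_singleton] at hb
  subst hb
  have := List.mem_range'_1.1 ha
  omega

lemma M_mem_top {l : ℕ} {M : List ℕ} (hM : M.Perm (List.range' 1 (l-2) ++ [l])) : l ∈ M :=
  hM.mem_iff.2 (by simp)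

lemma M_not_mem {l : ℕ} (hl : 2 ≤ l) {M : List ℕ}
    (hM : M.Perm (List.range' 1 (l-2) ++ [l])) : l - 1 ∉ M := by
  intro h
  have := M_vals hM _ h
  omega

lemma L'_vals {l : ℕ} {L' : List ℕ} (hL' : L'.Perm (List.range' 1 (l-1))) :
    ∀ v ∈ L', 1 ≤ v ∧ v ≤ l - 1 := mem_range'_perm hL'

lemma bmp_list_perm {l : ℕ} (hl : 2 ≤ l) {L' : List ℕ}
    (hL' : L'.Perm (List.range' 1 (l-1))) :
    (L'.map (bmp l)).Perm (List.range' 1 (l-2) ++ [l]) := by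
  rw [← bmp_range' hl]
  exact hL'.map _

lemma unb_list_perm {l : ℕ} (hl : 2 ≤ l) {M : List ℕ}
    (hM : M.Perm (List.range' 1 (l-2) ++ [l])) :
    (M.map (unb l)).Perm (List.range' 1 (l-1)) := by
  rw [← unb_range' hl]
  exact hM.map _

lemma unb_bmp_list {l : ℕ} (hl : 1 ≤ l) {L' : List ℕ} (h : ∀ v ∈ L', v ≤ l - 1) :
    (L'.map (bmp l)).map (unb l) = L' := by
  rw [List.map_map, List.map_congr_left (g := id), List.map_id]
  intro a ha
  exact unb_bmp hl (h a ha)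

lemma bmp_unb_list {l : ℕ} (hl : 1 ≤ l) {M : List ℕ}
    (h : ∀ v ∈ M, v ≤ l ∧ v ≠ l - 1) :
    (M.map (unb l)).map (bmp l) = M := by
  rw [List.map_map, List.map_congr_left (g := id), List.map_id]
  intro a ha
  exact bmp_unb hl (h a ha).1 (h a ha).2

lemma pins_bmp {l : ℕ} (hl : 1 ≤ l) {L' : List ℕ} (h : ∀ v ∈ L', v ≤ l - 1) :
    pins (L'.map (bmp l)) = bmp l '' pins L' := by
  apply pins_map
  intro a ha b hb
  exact bmp_mono hl (h a ha) (h b hb)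

lemma pins_unb {l : ℕ} (hl : 1 ≤ l) {M : List ℕ} (h : ∀ v ∈ M, v ≤ l ∧ v ≠ l - 1) :
    pins (M.map (unb l)) = unb l '' pins M := by
  apply pins_map
  intro a ha b hb
  exact unb_mono hl (h a ha).1 (h a ha).2 (h b hb).1 (h b hb).2

/-! ### the three insertion maps -/

/-- insert `l-1` at the front (after bumping) -/
def fA (l : ℕ) (L' : List ℕ) : List ℕ := (l-1) :: L'.map (bmp l)
/-- insert `l-1` immediately before `l` (after bumping) -/
def fC (l : ℕ) (L' : List ℕ) : List ℕ :=
  (L'.map (bmp l)).flatMap (fun v => if v = l then [l-1, l] else [v])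
/-- prepend `l-1, l` -/
def fE (l : ℕ) (t : List ℕ) : List ℕ := (l-1) :: l :: t

lemma pins_bmp_Q' {l : ℕ} (hl : 2 ≤ l) {L' : List ℕ} (hL' : L' ∈ PP (l-1) ({l-1} : Set ℕ)) :
    pins (L'.map (bmp l)) = {l} := by
  rw [pins_bmp (by omega) (fun v hv => (L'_vals hL'.1 v hv).2), hL'.2, Set.image_singleton]
  unfold bmp; simp

lemma range'_top (l : ℕ) (hl : 2 ≤ l) :
    List.range' 1 l = List.range' 1 (l-2) ++ ((l-1) :: [l]) := by
  rw [range'_eq_concat l (by omega), range'_eq_concat (l-1) (by omega),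
    show (l:ℕ)-1-1 = l-2 by omega, List.append_assoc]
  rfl

lemma cons_top_perm {l : ℕ} (hl : 2 ≤ l) {M : List ℕ}
    (hM : M.Perm (List.range' 1 (l-2) ++ [l])) :
    ((l-1) :: M).Perm (List.range' 1 l) := by
  rw [range'_top l hl]
  exact (hM.cons (l-1)).trans List.perm_middle.symm

lemma flatMap_split {l : ℕ} {A B : List ℕ} (hA : ∀ a ∈ A, a ≠ l) :
    (A ++ l :: B).flatMap (fun v => if v = l then [l-1, l] else [v]) =
      A ++ (l-1) :: l :: (B.flatMap (fun v => if v = l then [l-1, l] else [v])) := by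
  rw [List.flatMap_append, List.flatMap_cons,
      flatMap_eq_self A _ (fun a ha => by rw [if_neg (hA a ha)]), if_pos rfl]
  rfl

/-- splitting an `M` at its unique occurrence of `l` -/
lemma M_split {l : ℕ} (hl : 4 ≤ l) {M : List ℕ}
    (hM : M.Perm (List.range' 1 (l-2) ++ [l])) (hpins : pins M = {l}) :
    ∃ A B : List ℕ, M = A ++ l :: B ∧ A ≠ [] ∧ B ≠ [] ∧
      (∀ v ∈ A, 1 ≤ v ∧ v ≤ l-2) ∧ (∀ v ∈ B, 1 ≤ v ∧ v ≤ l-2) := by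
  obtain ⟨A, B, rfl⟩ := List.append_of_mem (M_mem_top hM)
  have hnd := M_nodup (by omega) hM
  have hlA : l ∉ A := fun h => (List.disjoint_of_nodup_append hnd) h (by simp)
  have hlB : l ∉ B := by
    have := (hnd.of_append_right)
    exact (List.nodup_cons.1 this).1
  have hends := pins_ne_ends hnd (show l ∈ pins (A ++ l :: B) by rw [hpins]; rfl)
  have hAne : A ≠ [] := by
    intro h
    subst h
    simp only [List.nil_append, List.getD_cons_zero] at hends
    exact hends.1 rfl
  have hBne : B ≠ [] := by
    intro h
    subst h
    apply hends.2
    have : (A ++ [l]).length - 1 = A.length := by simp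
    rw [this, getD_append_mid]
  refine ⟨A, B, rfl, hAne, hBne, ?_, ?_⟩
  · intro v hv
    have := M_vals hM v (by simp [hv])
    rcases this with h | h
    · exact h
    · exact absurd (h ▸ hv) hlA
  · intro v hv
    have := M_vals hM v (by simp [hv])
    rcases this with h | h
    · exact h
    · exact absurd (h ▸ hv) hlB

lemma fA_mem {l : ℕ} (hl : 4 ≤ l) {L' : List ℕ} (hL' : L' ∈ PP (l-1) ({l-1} : Set ℕ)) :
    fA l L' ∈ PP l ({l} : Set ℕ) := by
  have hM := bmp_list_perm (show 2 ≤ l by omega) hL'.1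
  have hpins := pins_bmp_Q' (show 2 ≤ l by omega) hL'
  refine ⟨cons_top_perm (by omega) hM, ?_⟩
  unfold fA
  rw [pins_cons_of_ge, hpins]
  have hends := pins_ne_ends (M_nodup (by omega) hM)
    (show l ∈ pins (L'.map (bmp l)) by rw [hpins]; rfl)
  cases hc : L'.map (bmp l) with
  | nil => simp
  | cons a t =>
    have ha : a ∈ L'.map (bmp l) := by rw [hc]; simp
    rcases M_vals hM a ha with h | h
    · simp only [List.getD_cons_zero]; omega
    · exfalso
      apply hends.1
      rw [hc, List.getD_cons_zero, h]

lemma fC_eq_split {l : ℕ} (hl : 4 ≤ l) {L' A B : List ℕ}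
    (hsplit : L'.map (bmp l) = A ++ l :: B)
    (hA : ∀ v ∈ A, 1 ≤ v ∧ v ≤ l-2) (hB : ∀ v ∈ B, 1 ≤ v ∧ v ≤ l-2) :
    fC l L' = A ++ (l-1) :: l :: B := by
  unfold fC
  rw [hsplit, flatMap_split (fun a ha => by have := hA a ha; omega),
      flatMap_eq_self B _ (fun b hb => by have := hB b hb; rw [if_neg (by omega)])]

lemma fC_mem {l : ℕ} (hl : 4 ≤ l) {L' : List ℕ} (hL' : L' ∈ PP (l-1) ({l-1} : Set ℕ)) :
    fC l L' ∈ PP l ({l} : Set ℕ) := by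
  have hM := bmp_list_perm (show 2 ≤ l by omega) hL'.1
  have hpins := pins_bmp_Q' (show 2 ≤ l by omega) hL'
  obtain ⟨A, B, hsplit, hAne, hBne, hA, hB⟩ := M_split hl hM hpins
  rw [fC_eq_split hl hsplit hA hB]
  constructor
  · refine (List.perm_middle).trans ?_
    apply cons_top_perm (by omega)
    rw [← hsplit]
    exact hM
  · have hlast : A.getLast hAne < l - 1 := by
      have := hA _ (List.getLast_mem hAne)
      omega
    rw [pins_insert_before (l-1) l (by omega) A B hAne hlast, ← hsplit, hpins]

lemma fE_mem {l : ℕ} (hl : 4 ≤ l) {t : List ℕ} (ht : t ∈ PP (l-2) (∅ : Set ℕ)) :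
    fE l t ∈ PP l ({l} : Set ℕ) := by
  have htlen : t.length = l - 2 := by simpa using ht.1.length_eq
  have htne : t ≠ [] := by
    intro h; rw [h] at htlen; simp at htlen; omega
  constructor
  · unfold fE
    rw [range'_top l (by omega)]
    have h2 : (l :: t).Perm (List.range' 1 (l-2) ++ [l]) := by
      refine (ht.1.cons l).trans ?_
      have := (List.perm_middle (a := l) (l₁ := List.range' 1 (l-2)) (l₂ := [])).symm
      simpa using this
    exact (h2.cons (l-1)).trans List.perm_middle.symm
  · unfold fE
    rw [pins_cons']
    have h1 : pins (l :: t) = pins t := by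
      apply pins_cons_of_ge
      cases hc : t with
      | nil => simp
      | cons a s =>
        have : a ∈ t := by rw [hc]; simp
        have := mem_range'_perm ht.1 a this
        simp only [List.getD_cons_zero]; omega
    rw [h1, ht.2]
    simp only [List.getD_cons_zero]
    have hcond : 2 ≤ (l :: t).length ∧ l - 1 < l ∧ (l :: t).getD 1 0 < l := by
      refine ⟨by simp only [List.length_cons]; omega, by omega, ?_⟩
      cases hc : t with
      | nil => exact absurd hc htne
      | cons a s =>
        have : a ∈ t := by rw [hc]; simp
        have := mem_range'_perm ht.1 a this
        simp only [List.getD_cons_succ, List.getD_cons_zero]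
        omega
    rw [if_pos hcond]
    simp

lemma getD_append_plus (P T : List ℕ) (m : ℕ) (hm : m < T.length) :
    (P ++ T).getD (P.length + m) 0 = T.getD m 0 := by
  rw [List.getD_eq_getElem _ _ (by simp; omega), List.getD_eq_getElem _ _ hm,
      List.getElem_append_right (by omega)]
  congr 1
  omega

/-- before-relation -/
def BRel (l : ℕ) (L : List ℕ) : Prop :=
  ∃ i j, i < j ∧ j < L.length ∧ L.getD i 0 = l - 1 ∧ L.getD j 0 = l

lemma rel_of_split {l : ℕ} {L P T : List ℕ} (h : L = P ++ (l-1) :: T) (hT : l ∈ T) :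
    BRel l L := by
  subst h
  obtain ⟨k, hk, hkl⟩ := List.getElem_of_mem hT
  refine ⟨P.length, P.length + (k+1), by omega, by simp; omega, getD_append_mid P _ T, ?_⟩
  rw [getD_append_plus P _ _ (by simp; omega), List.getD_cons_succ,
      List.getD_eq_getElem _ _ hk, hkl]

lemma rel_reverse {l : ℕ} {L : List ℕ} (h : BRel l L) :
    ∃ i j, i < j ∧ j < L.reverse.length ∧ L.reverse.getD i 0 = l ∧ L.reverse.getD j 0 = l - 1 := by
  obtain ⟨i, j, hij, hj, hi1, hj1⟩ := h
  refine ⟨L.length - 1 - j, L.length - 1 - i, by omega, by simp; omega, ?_, ?_⟩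
  · rw [getD_reverse _ _ (by omega), show L.length - 1 - (L.length - 1 - j) = j by omega]
    exact hj1
  · rw [getD_reverse _ _ (by omega), show L.length - 1 - (L.length - 1 - i) = i by omega]
    exact hi1

lemma not_rel_both {l : ℕ} (hl : 1 ≤ l) {L : List ℕ} (hnd : L.Nodup) (h : BRel l L)
    (h' : ∃ i j, i < j ∧ j < L.length ∧ L.getD i 0 = l ∧ L.getD j 0 = l - 1) : False := by
  obtain ⟨i, j, hij, hj, hi1, hj1⟩ := h
  obtain ⟨i', j', hij', hj', hi1', hj1'⟩ := h'
  rw [List.getD_eq_getElem _ _ (by omega)] at hi1 hi1'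
  rw [List.getD_eq_getElem _ _ (by omega)] at hj1 hj1'
  have e1 : i = j' := (hnd.getElem_inj_iff).1 (hi1.trans hj1'.symm)
  have e2 : j = i' := (hnd.getElem_inj_iff).1 (hj1.trans hi1'.symm)
  omega

lemma rel_fA {l : ℕ} (hl : 4 ≤ l) {L' : List ℕ} (hL' : L' ∈ PP (l-1) ({l-1} : Set ℕ)) :
    BRel l (fA l L') :=
  rel_of_split (P := []) (by rfl) (M_mem_top (bmp_list_perm (by omega) hL'.1))

lemma rel_fC {l : ℕ} (hl : 4 ≤ l) {L' : List ℕ} (hL' : L' ∈ PP (l-1) ({l-1} : Set ℕ)) :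
    BRel l (fC l L') := by
  obtain ⟨A, B, hsplit, hAne, hBne, hA, hB⟩ :=
    M_split hl (bmp_list_perm (by omega) hL'.1) (pins_bmp_Q' (by omega) hL')
  exact rel_of_split (fC_eq_split hl hsplit hA hB) (by simp)

lemma rel_fE {l : ℕ} {t : List ℕ} : BRel l (fE l t) :=
  rel_of_split (P := []) (by rfl) (by simp)

/-! ### injectivity -/

lemma fA_injOn {l : ℕ} (hl : 4 ≤ l) :
    Set.InjOn (fA l) (PP (l-1) ({l-1} : Set ℕ)) := by
  intro L1 h1 L2 h2 he
  unfold fA at he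
  have hm : L1.map (bmp l) = L2.map (bmp l) := by
    exact List.tail_eq_of_cons_eq he
  have r1 := unb_bmp_list (l := l) (by omega) (fun v hv => (L'_vals h1.1 v hv).2)
  have r2 := unb_bmp_list (l := l) (by omega) (fun v hv => (L'_vals h2.1 v hv).2)
  rw [← r1, ← r2, hm]

lemma erase_fC {l : ℕ} (hl : 4 ≤ l) {L' : List ℕ} (hL' : L' ∈ PP (l-1) ({l-1} : Set ℕ)) :
    (fC l L').erase (l-1) = L'.map (bmp l) := by
  obtain ⟨A, B, hsplit, hAne, hBne, hA, hB⟩ :=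
    M_split hl (bmp_list_perm (by omega) hL'.1) (pins_bmp_Q' (by omega) hL')
  rw [fC_eq_split hl hsplit hA hB, List.erase_append_right _
    (fun h => by have := hA _ h; omega), List.erase_cons_head, hsplit]

lemma fC_injOn {l : ℕ} (hl : 4 ≤ l) :
    Set.InjOn (fC l) (PP (l-1) ({l-1} : Set ℕ)) := by
  intro L1 h1 L2 h2 he
  have hm : L1.map (bmp l) = L2.map (bmp l) := by
    rw [← erase_fC hl h1, ← erase_fC hl h2, he]
  have r1 := unb_bmp_list (l := l) (by omega) (fun v hv => (L'_vals h1.1 v hv).2)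
  have r2 := unb_bmp_list (l := l) (by omega) (fun v hv => (L'_vals h2.1 v hv).2)
  rw [← r1, ← r2, hm]

lemma fE_injOn {l : ℕ} : Set.InjOn (fE l) (PP (l-2) (∅ : Set ℕ)) := by
  intro t1 _ t2 _ he
  unfold fE at he
  simpa using he

/-! ### discriminators -/

lemma fA_getD0 {l : ℕ} (L' : List ℕ) : (fA l L').getD 0 0 = l - 1 := rfl

lemma fE_getD0 {l : ℕ} (t : List ℕ) : (fE l t).getD 0 0 = l - 1 := rfl

lemma fE_getD1 {l : ℕ} (t : List ℕ) : (fE l t).getD 1 0 = l := rfl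

lemma fA_getD1_ne {l : ℕ} (hl : 4 ≤ l) {L' : List ℕ}
    (hL' : L' ∈ PP (l-1) ({l-1} : Set ℕ)) : (fA l L').getD 1 0 ≠ l := by
  have hM := bmp_list_perm (show 2 ≤ l by omega) hL'.1
  have hpins := pins_bmp_Q' (show 2 ≤ l by omega) hL'
  have hends := pins_ne_ends (M_nodup (by omega) hM)
    (show l ∈ pins (L'.map (bmp l)) by rw [hpins]; rfl)
  unfold fA
  rw [List.getD_cons_succ]
  exact hends.1

lemma fC_getD0_ne {l : ℕ} (hl : 4 ≤ l) {L' : List ℕ}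
    (hL' : L' ∈ PP (l-1) ({l-1} : Set ℕ)) : (fC l L').getD 0 0 ≠ l - 1 := by
  obtain ⟨A, B, hsplit, hAne, hBne, hA, hB⟩ :=
    M_split hl (bmp_list_perm (by omega) hL'.1) (pins_bmp_Q' (by omega) hL')
  rw [fC_eq_split hl hsplit hA hB,
      getD_append_left _ _ _ (List.length_pos_iff.2 hAne)]
  cases hc : A with
  | nil => exact absurd hc hAne
  | cons a s =>
    have := hA a (by rw [hc]; simp)
    simp only [List.getD_cons_zero]
    omega

/-! ### the covering lemma -/

lemma cover_X {l : ℕ} (hl : 4 ≤ l) {L : List ℕ} (hL : L ∈ PP l ({l} : Set ℕ))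
    {P T : List ℕ} (hsplit : L = P ++ (l-1) :: T)
    (hcase : P = [] ∨ ∃ B, T = l :: B) :
    L ∈ fA l '' (PP (l-1) ({l-1} : Set ℕ)) ∪ fC l '' (PP (l-1) ({l-1} : Set ℕ)) ∪
      fE l '' (PP (l-2) (∅ : Set ℕ)) := by
  have hnd : L.Nodup := nodup_of_perm_range' hL.1
  have hvals := mem_range'_perm hL.1
  have hndPT : (P ++ (l-1) :: T).Nodup := hsplit ▸ hnd
  have hP : l - 1 ∉ P := fun h => (List.disjoint_of_nodup_append hndPT) h (by simp)
  have hT : l - 1 ∉ T := (List.nodup_cons.1 hndPT.of_append_right).1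
  have hperm1 : ((l-1) :: (P ++ T)).Perm (List.range' 1 l) :=
    (List.perm_middle.symm.trans (hsplit ▸ hL.1 : (P ++ (l-1) :: T).Perm _))
  have hperm2 : (P ++ T).Perm (List.range' 1 (l-2) ++ [l]) := by
    have h2 : ((l-1) :: (P ++ T)).Perm ((l-1) :: (List.range' 1 (l-2) ++ [l])) := by
      refine hperm1.trans ?_
      rw [range'_top l (by omega)]
      exact List.perm_middle
    exact h2.cons_inv
  rcases hcase with rfl | ⟨B, rfl⟩
  · -- l-1 at the front, L = (l-1) :: T
    simp only [List.nil_append] at hsplit hperm2 ⊢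
    by_cases hhead : T.getD 0 0 = l
    · -- fE case
      right
      obtain ⟨t, rfl⟩ : ∃ t, T = l :: t := by
        cases hc : T with
        | nil => rw [hc] at hhead; simp at hhead; omega
        | cons a s =>
          rw [hc] at hhead
          simp only [List.getD_cons_zero] at hhead
          exact ⟨s, by rw [hhead]⟩
      have htperm : t.Perm (List.range' 1 (l-2)) := by
        have : (l :: t).Perm (l :: List.range' 1 (l-2)) := by
          refine hperm2.trans ?_
          have := (List.perm_middle (a := l) (l₁ := List.range' 1 (l-2)) (l₂ := [])).symm
          simpa using this.symm
        exact this.cons_inv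
      have htvals := mem_range'_perm htperm
      have hpinsT : pins ((l:ℕ) :: t) = pins t := by
        apply pins_cons_of_ge
        cases hc : t with
        | nil => simp
        | cons a s =>
          have := htvals a (by rw [hc]; simp)
          simp only [List.getD_cons_zero]
          omega
      have hpinst : pins t = ∅ := by
        have hsub : pins t ⊆ {l} := by
          intro v hv
          have h3 : pins L = pins (l :: t) ∪ _ := hsplit ▸ pins_cons' (l-1) (l :: t)
          rw [hL.2, hpinsT] at h3
          rw [h3]
          left
          exact hv
        ext v
        simp only [Set.mem_empty_iff_false, iff_false]
        intro hv
        have h4 := hsub hv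
        have h5 := htvals v (mem_of_mem_pins hv)
        simp only [Set.mem_singleton_iff] at h4
        omega
      exact ⟨t, ⟨htperm, hpinst⟩, hsplit.symm⟩
    · -- fA case
      left; left
      set L'0 := T.map (unb l) with hL'0
      have hTvals : ∀ v ∈ T, v ≤ l ∧ v ≠ l - 1 := by
        intro v hv
        exact ⟨(hvals v (by rw [hsplit]; simp [hv])).2, fun h => hT (h ▸ hv)⟩
      have hTperm : T.Perm (List.range' 1 (l-2) ++ [l]) := by simpa using hperm2
      have hL'perm : L'0.Perm (List.range' 1 (l-1)) := unb_list_perm (by omega) hTperm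
      have hpinsT : pins T = {l} := by
        rw [← hL.2, hsplit]
        symm
        apply pins_cons_of_ge
        cases hc : T with
        | nil => simp
        | cons a s =>
          have h6 := hTvals a (by rw [hc]; simp)
          rw [hc] at hhead
          simp only [List.getD_cons_zero] at hhead ⊢
          omega
      have hpinsL' : pins L'0 = {l-1} := by
        rw [hL'0, pins_unb (by omega) hTvals, hpinsT, Set.image_singleton]
        unfold unb
        simp
      refine ⟨L'0, ⟨hL'perm, hpinsL'⟩, ?_⟩
      unfold fA
      rw [hL'0, bmp_unb_list (by omega) hTvals, hsplit]
  · -- l-1 immediately before l : L = P ++ (l-1) :: l :: B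
    by_cases hPnil : P = []
    ·
      right
      subst hPnil
      simp only [List.nil_append] at hsplit hperm2
      have htperm : B.Perm (List.range' 1 (l-2)) := by
        have : (l :: B).Perm (l :: List.range' 1 (l-2)) := by
          refine hperm2.trans ?_
          have := (List.perm_middle (a := l) (l₁ := List.range' 1 (l-2)) (l₂ := [])).symm
          simpa using this.symm
        exact this.cons_inv
      have htvals := mem_range'_perm htperm
      have hpinsT : pins ((l:ℕ) :: B) = pins B := by
        apply pins_cons_of_ge
        cases hc : B with
        | nil => simp
        | cons a s =>
          have := htvals a (by rw [hc]; simp)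
          simp only [List.getD_cons_zero]
          omega
      have hpinst : pins B = ∅ := by
        have hsub : pins B ⊆ {l} := by
          intro v hv
          have h3 : pins L = pins (l :: B) ∪ _ := hsplit ▸ pins_cons' (l-1) (l :: B)
          rw [hL.2, hpinsT] at h3
          rw [h3]
          left
          exact hv
        ext v
        simp only [Set.mem_empty_iff_false, iff_false]
        intro hv
        have h4 := hsub hv
        have h5 := htvals v (mem_of_mem_pins hv)
        simp only [Set.mem_singleton_iff] at h4
        omega
      exact ⟨B, ⟨htperm, hpinst⟩, hsplit.symm⟩
    · -- fC case
      left; right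
      have hlP : l ∉ P := by
        intro h
        exact (List.disjoint_of_nodup_append hndPT) h (by simp)
      have hlB : l ∉ B := by
        have h7 := hndPT.of_append_right
        have h8 := (List.nodup_cons.1 h7).2
        exact (List.nodup_cons.1 h8).1
      have hBl1 : l - 1 ∉ B := fun h => hT (by simp [h])
      have hM0vals : ∀ v ∈ P ++ l :: B, v ≤ l ∧ v ≠ l - 1 := by
        intro v hv
        simp only [List.mem_append, List.mem_cons] at hv
        rcases hv with h | h | h
        · exact ⟨(hvals v (by rw [hsplit]; simp [h])).2, fun he => hP (he ▸ h)⟩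
        · constructor <;> omega
        · exact ⟨(hvals v (by rw [hsplit]; simp [h])).2, fun he => hBl1 (he ▸ h)⟩
      set L'0 := (P ++ l :: B).map (unb l) with hL'0
      have hL'perm : L'0.Perm (List.range' 1 (l-1)) := unb_list_perm (by omega) hperm2
      have hPvals : ∀ v ∈ P, 1 ≤ v ∧ v ≤ l - 2 := by
        intro v hv
        have h1 := hvals v (by rw [hsplit]; simp [hv])
        have h2 := (hM0vals v (by simp [hv])).2
        have h3 : v ≠ l := fun he => hlP (he ▸ hv)
        omega
      have hBvals : ∀ v ∈ B, 1 ≤ v ∧ v ≤ l - 2 := by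
        intro v hv
        have h1 := hvals v (by rw [hsplit]; simp [hv])
        have h2 : v ≠ l - 1 := fun he => hBl1 (he ▸ hv)
        have h3 : v ≠ l := fun he => hlB (he ▸ hv)
        omega
      have hlast : P.getLast hPnil < l - 1 := by
        have := hPvals _ (List.getLast_mem hPnil)
        omega
      have hpinsM0 : pins (P ++ l :: B) = {l} := by
        rw [← pins_insert_before (l-1) l (by omega) P B hPnil hlast, ← hsplit, hL.2]
      have hpinsL' : pins L'0 = {l-1} := by
        rw [hL'0, pins_unb (by omega) hM0vals, hpinsM0, Set.image_singleton]
        unfold unb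
        simp
      refine ⟨L'0, ⟨hL'perm, hpinsL'⟩, ?_⟩
      rw [fC_eq_split hl (by rw [hL'0, bmp_unb_list (by omega) hM0vals]) hPvals hBvals,
        hsplit]

lemma cover_main {l : ℕ} (hl : 4 ≤ l) {L : List ℕ} (hL : L ∈ PP l ({l} : Set ℕ)) :
    (∃ P T, L = P ++ (l-1) :: T ∧ (P = [] ∨ ∃ B, T = l :: B)) ∨
    (∃ P T, L.reverse = P ++ (l-1) :: T ∧ (P = [] ∨ ∃ B, T = l :: B)) := by
  have hnd : L.Nodup := nodup_of_perm_range' hL.1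
  have hvals := mem_range'_perm hL.1
  have hmem : l - 1 ∈ L := hL.1.mem_iff.2 (by rw [List.mem_range'_1]; omega)
  obtain ⟨P, T, hsplit⟩ := List.append_of_mem hmem
  have hndPT : (P ++ (l-1) :: T).Nodup := hsplit ▸ hnd
  have hP : l - 1 ∉ P := fun h => (List.disjoint_of_nodup_append hndPT) h (by simp)
  have hT : l - 1 ∉ T := (List.nodup_cons.1 hndPT.of_append_right).1
  by_cases hPnil : P = []
  · exact Or.inl ⟨P, T, hsplit, Or.inl hPnil⟩
  cases hTc : T with
  | nil =>
    right
    refine ⟨[], P.reverse, ?_, Or.inl rfl⟩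
    rw [hsplit, hTc]
    simp [List.reverse_append]
  | cons c t' =>
    by_cases hc : c = l
    · exact Or.inl ⟨P, T, hsplit, Or.inr ⟨t', by rw [hTc, hc]⟩⟩
    -- last of P must be l
    have hlastP : P.getLast hPnil = l := by
      by_contra hlast
      have hpk : peakAt L P.length := by
        refine ⟨List.length_pos_iff.2 hPnil, ?_, ?_, ?_⟩
        · rw [hsplit, hTc]; simp
        · rw [hsplit, hTc, getD_append_left _ _ _ (by have := List.length_pos_iff.2 hPnil; omega),
            getD_last P hPnil, getD_append_mid]
          have h1 := hvals _ (by rw [hsplit]; exact List.mem_append_left _ (List.getLast_mem hPnil))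
          have h2 : P.getLast hPnil ≠ l - 1 := fun h => hP (h ▸ List.getLast_mem hPnil)
          omega
        · rw [hsplit, hTc, getD_append_mid1, getD_append_mid]
          have h1 := hvals c (by rw [hsplit, hTc]; simp)
          have h2 : c ≠ l - 1 := fun h => hT (by rw [hTc, h]; simp)
          omega
      have : l - 1 ∈ pins L := ⟨P.length, hpk, by rw [hsplit, getD_append_mid]⟩
      rw [hL.2] at this
      simp only [Set.mem_singleton_iff] at this
      omega
    right
    refine ⟨T.reverse, l :: P.dropLast.reverse, ?_, Or.inr ⟨P.dropLast.reverse, rfl⟩⟩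
    have hrev : P.reverse = l :: P.dropLast.reverse := by
      conv_lhs => rw [← List.dropLast_append_getLast hPnil]
      rw [List.reverse_append, hlastP]
      rfl
    rw [hsplit, List.reverse_append, List.reverse_cons, List.append_assoc, hrev]
    rfl

lemma card_q_step (l : ℕ) (hl : 4 ≤ l) :
    (PP l ({l} : Set ℕ)).ncard =
      4 * (PP (l-1) ({l-1} : Set ℕ)).ncard + 2 * (PP (l-2) (∅ : Set ℕ)).ncard := by
  classical
  set Q' := PP (l-1) ({l-1} : Set ℕ) with hQ'
  set Z := PP (l-2) (∅ : Set ℕ) with hZ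
  set Xa := fA l '' Q' with hXa
  set Xc := fC l '' Q' with hXc
  set Xe := fE l '' Z with hXe
  set X := Xa ∪ Xc ∪ Xe with hX
  set Y := List.reverse '' X with hY
  have hXaQ : Xa ⊆ PP l ({l} : Set ℕ) := by
    rintro _ ⟨L', hL', rfl⟩; exact fA_mem hl hL'
  have hXcQ : Xc ⊆ PP l ({l} : Set ℕ) := by
    rintro _ ⟨L', hL', rfl⟩; exact fC_mem hl hL'
  have hXeQ : Xe ⊆ PP l ({l} : Set ℕ) := by
    rintro _ ⟨t, ht, rfl⟩; exact fE_mem hl ht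
  have hXQ : X ⊆ PP l ({l} : Set ℕ) := by
    rw [hX]
    exact Set.union_subset (Set.union_subset hXaQ hXcQ) hXeQ
  have hYQ : Y ⊆ PP l ({l} : Set ℕ) := by
    rintro _ ⟨M, hM, rfl⟩; exact PP_reverse_mem (hXQ hM)
  have cover : PP l ({l} : Set ℕ) = X ∪ Y := by
    apply Set.Subset.antisymm
    · intro L hL
      rcases cover_main hl hL with ⟨P, T, hsplit, hcase⟩ | ⟨P, T, hsplit, hcase⟩
      · exact Or.inl (cover_X hl hL hsplit hcase)
      · right
        exact ⟨L.reverse, cover_X hl (PP_reverse_mem hL) hsplit hcase, by simp⟩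
    · exact Set.union_subset hXQ hYQ
  have relX : ∀ L ∈ X, BRel l L := by
    rintro L ((⟨L', hL', rfl⟩ | ⟨L', hL', rfl⟩) | ⟨t, ht, rfl⟩)
    · exact rel_fA hl hL'
    · exact rel_fC hl hL'
    · exact rel_fE (l := l)
  have disjXY : Disjoint X Y := by
    rw [Set.disjoint_left]
    rintro L hLX ⟨M, hMX, rfl⟩
    exact not_rel_both (by omega) (nodup_of_perm_range' (hYQ ⟨M, hMX, rfl⟩).1)
      (relX _ hLX) (rel_reverse (relX M hMX))
  have disjac : Disjoint Xa Xc := by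
    rw [Set.disjoint_left]
    rintro _ ⟨L', hL', rfl⟩ ⟨L'', hL'', he⟩
    apply fC_getD0_ne hl hL''
    rw [he, fA_getD0]
  have disjace : Disjoint (Xa ∪ Xc) Xe := by
    rw [Set.disjoint_left]
    rintro L (⟨L', hL', rfl⟩ | ⟨L', hL', rfl⟩) ⟨t, ht, he⟩
    · apply fA_getD1_ne hl hL'
      rw [← he, fE_getD1]
    · apply fC_getD0_ne hl hL'
      rw [← he, fE_getD0]
  have hfinQ := PP_finite l ({l} : Set ℕ)
  have hfinX : X.Finite := hfinQ.subset hXQ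
  have hfinY : Y.Finite := hfinQ.subset hYQ
  have h1 : (PP l ({l} : Set ℕ)).ncard = X.ncard + Y.ncard := by
    rw [cover, Set.ncard_union_eq disjXY hfinX hfinY]
  have h2 : Y.ncard = X.ncard := Set.ncard_image_of_injective _ List.reverse_injective
  have h3 : X.ncard = Xa.ncard + Xc.ncard + Xe.ncard := by
    rw [hX, Set.ncard_union_eq disjace (hfinQ.subset (Set.union_subset hXaQ hXcQ))
      (hfinQ.subset hXeQ), Set.ncard_union_eq disjac (hfinQ.subset hXaQ) (hfinQ.subset hXcQ)]
  have h4 : Xa.ncard = Q'.ncard := Set.ncard_image_of_injOn (fA_injOn hl)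
  have h5 : Xc.ncard = Q'.ncard := Set.ncard_image_of_injOn (fC_injOn hl)
  have h6 : Xe.ncard = Z.ncard := Set.ncard_image_of_injOn fE_injOn
  omega

lemma card_q : ∀ l : ℕ, 3 ≤ l → (PP l ({l} : Set ℕ)).ncard = 2^(l-2) * (2^(l-2) - 1) := by
  intro l
  induction l with
  | zero => omega
  | succ m ih =>
    intro hm
    by_cases h3 : m + 1 = 3
    · rw [h3]
      rw [card_q3]
      norm_num
    · have hm4 : 4 ≤ m + 1 := by omega
      have h1 := card_q_step (m+1) hm4
      rw [show m + 1 - 1 = m from rfl, show m + 1 - 2 = m - 1 by omega] at h1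
      rw [h1, ih (by omega), card_nopeak (m - 1) (by omega)]
      have e1 : m + 1 - 2 = m - 1 := by omega
      have e2 : m - 2 = m - 1 - 1 := by omega
      rw [e1, e2]
      set a := 2 ^ (m - 1 - 1) with ha
      have ha1 : 1 ≤ a := Nat.one_le_two_pow
      have h2 : 2 ^ (m - 1) = 2 * a := by
        rw [ha, ← pow_succ']
        congr 1
        omega
      rw [h2]
      have h2a : 1 ≤ 2 * a := by omega
      zify [ha1, h2a]
      ring

lemma card_main (l : ℕ) (hl : 3 ≤ l) :
    ∀ n : ℕ, l ≤ n → (PP n ({l} : Set ℕ)).ncard = 2^(n-2) * (2^(l-2) - 1) := by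
  intro n
  induction n with
  | zero => omega
  | succ m ih =>
    intro hmn
    by_cases heq : m + 1 = l
    · rw [heq, card_q l hl]
    · have hlt : l ≤ m := by omega
      have h1 := card_step (m+1) ({l} : Set ℕ) (by omega)
        (by simp only [Set.mem_singleton_iff]; omega)
      rw [show m + 1 - 1 = m from rfl] at h1
      rw [h1, ih hlt]
      have e1 : m + 1 - 2 = m - 1 := by omega
      rw [e1, show 2 ^ (m-1) = 2 * 2^(m-2) by rw [← pow_succ']; congr 1; omega]
      ring

/-! ### transfer between permutations and lists -/


lemma ofFn_perm_range' {n : ℕ} (w : Equiv.Perm (Fin n)) :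
    (List.ofFn (fun i => (w i).1 + 1)).Perm (List.range' 1 n) := by
  apply List.perm_of_nodup_nodup_toFinset_eq
  · rw [List.nodup_ofFn]
    intro a b hab
    simp only at hab
    exact w.injective (Fin.val_injective (by omega))
  · exact List.nodup_range' (s := 1) (n := n)
  · ext x
    simp only [List.mem_toFinset, List.mem_ofFn, Set.mem_range, List.mem_range'_1]
    constructor
    · rintro ⟨i, rfl⟩
      have := (w i).isLt
      omega
    · rintro ⟨h1, h2⟩
      refine ⟨w.symm ⟨x - 1, by omega⟩, ?_⟩
      rw [Equiv.apply_symm_apply]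
      simp only
      omega

lemma getD_ofFn {n : ℕ} (f : Fin n → ℕ) (j : ℕ) (hj : j < n) :
    (List.ofFn f).getD j 0 = f ⟨j, hj⟩ := by
  rw [List.getD_eq_getElem _ _ (by rw [List.length_ofFn]; exact hj), List.getElem_ofFn]

lemma pins_ofFn {n : ℕ} (w : Equiv.Perm (Fin n)) :
    pins (List.ofFn (fun i => (w i).1 + 1)) = Pin w := by
  have hget : ∀ (j : ℕ) (hj : j < n),
      (List.ofFn (fun i => (w i).1 + 1)).getD j 0 = (w ⟨j, hj⟩).1 + 1 :=
    fun j hj => getD_ofFn _ j hj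
  ext v
  simp only [pins, peakAt, Pin, IsPeak, Set.mem_setOf_eq, List.length_ofFn]
  constructor
  · rintro ⟨i, ⟨h0, h1, h2, h3⟩, hv⟩
    rw [hget (i-1) (by omega), hget i (by omega)] at h2
    rw [hget (i+1) h1, hget i (by omega)] at h3
    rw [hget i (by omega)] at hv
    refine ⟨⟨i, by omega⟩, ⟨h0, h1, ?_, ?_⟩, ?_⟩
    · rw [Fin.lt_def]
      exact Nat.succ_lt_succ_iff.mp h2
    · rw [Fin.lt_def]
      exact Nat.succ_lt_succ_iff.mp h3
    · exact hv
  · rintro ⟨i, ⟨h0, h1, h2, h3⟩, hv⟩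
    refine ⟨i.val, ⟨h0, h1, ?_, ?_⟩, ?_⟩
    · rw [hget (i.val-1) (by omega), hget i.val i.isLt, Fin.eta]
      exact Nat.succ_lt_succ_iff.mpr (Fin.lt_def.mp h2)
    · rw [hget (i.val+1) h1, hget i.val i.isLt, Fin.eta]
      exact Nat.succ_lt_succ_iff.mpr (Fin.lt_def.mp h3)
    · rw [hget i.val i.isLt, Fin.eta]
      exact hv

lemma pcount_eq (n : ℕ) (S : Set ℕ) : pcount n S = (PP n S).ncard := by
  rw [pcount, ← Nat.card_coe_set_eq]
  apply Nat.card_eq_of_bijective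
    (fun p => (⟨List.ofFn (fun i => (p.1 i).1 + 1),
      ofFn_perm_range' p.1, by rw [pins_ofFn]; exact p.2⟩ : (PP n S : Set (List ℕ))))
  constructor
  · rintro ⟨w1, h1⟩ ⟨w2, h2⟩ he
    replace he : List.ofFn (fun i => (w1 i).1 + 1) = List.ofFn (fun i => (w2 i).1 + 1) :=
      congrArg Subtype.val he
    rw [List.ofFn_inj] at he
    have hww : ∀ i, w1 i = w2 i := by
      intro i
      have := congrFun he i
      exact Fin.val_injective (by omega)
    exact Subtype.ext (Equiv.ext hww)
  · rintro ⟨L, hperm, hpins⟩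
    have hvals := mem_range'_perm hperm
    have hnd := nodup_of_perm_range' hperm
    have hlen : L.length = n := by simpa using hperm.length_eq
    have hmemD : ∀ i : Fin n, L.getD i.val 0 ∈ L := by
      intro i
      rw [List.getD_eq_getElem _ _ (by omega)]
      exact List.getElem_mem _
    have hbound : ∀ i : Fin n, L.getD i.val 0 - 1 < n := by
      intro i
      have := hvals _ (hmemD i)
      omega
    have hinj : Function.Injective (fun i : Fin n => (⟨L.getD i.val 0 - 1, hbound i⟩ : Fin n)) := by
      intro a b hab
      simp only [Fin.mk.injEq] at hab
      have ha1 := (hvals _ (hmemD a)).1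
      have hb1 := (hvals _ (hmemD b)).1
      have heq : L.getD a.val 0 = L.getD b.val 0 := by omega
      have heq' : L[(a.val)]'(by omega) = L[(b.val)]'(by omega) := by
        rw [← List.getD_eq_getElem L 0 (by omega : (a.val) < L.length),
            ← List.getD_eq_getElem L 0 (by omega : (b.val) < L.length)]
        exact heq
      exact Fin.val_injective (hnd.getElem_inj_iff.1 heq')
    set σ := Equiv.ofBijective _ (Finite.injective_iff_bijective.mp hinj) with hσ
    have hL : List.ofFn (fun i => (σ i).1 + 1) = L := by
      apply List.ext_getElem (by simp [hlen])
      intro j h1 h2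
      rw [List.getElem_ofFn]
      show (L.getD j 0 - 1) + 1 = L[j]
      have hj : j < n := by rw [List.length_ofFn] at h1; exact h1
      have h3 := (hvals _ (hmemD ⟨j, hj⟩)).1
      simp only at h3
      rw [List.getD_eq_getElem _ _ (by omega)] at h3 ⊢
      omega
    have hPin : Pin σ = S := by
      rw [← pins_ofFn σ, hL, hpins]
    exact ⟨⟨σ, hPin⟩, Subtype.ext hL⟩


theorem pcount_one_pinnacle (l n : ℕ) (hl : 3 ≤ l) (hn : l ≤ n) :
    pcount n ({l} : Set ℕ) = 2 ^ (n - 2) * (2 ^ (l - 2) - 1) := by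
  rw [pcount_eq, card_main l hl n hn]
end

section
/- For positive integers d, n with 2d < n, the number of permutations in S_n with pinnacle set M_d = {3, 5, 7, ..., 2d+1} equals 2^{n-d-1}. -/
set_option maxHeartbeats 1000000

namespace PinAux

/-- Pinnacle set of a list (values written 1-based in the list). -/
def PinL (l : List ℕ) : Set ℕ :=
  {v | ∃ i, 0 < i ∧ i + 1 < l.length ∧ l.getD (i - 1) 0 < l.getD i 0 ∧
       l.getD (i + 1) 0 < l.getD i 0 ∧ v = l.getD i 0}

def M (d : ℕ) : Set ℕ := {x : ℕ | ∃ k, 1 ≤ k ∧ k ≤ d ∧ x = 2 * k + 1}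

abbrev W (n : ℕ) (S : Set ℕ) : Type :=
  {l : List ℕ // l.Perm (List.range' 1 n) ∧ PinL l = S}

lemma getD_mem (l : List ℕ) {i : ℕ} (h : i < l.length) : l.getD i 0 ∈ l := by
  rw [List.getD_eq_getElem l 0 h]; exact List.getElem_mem h

lemma getD_inj {l : List ℕ} (hnd : l.Nodup) {i j : ℕ} (hi : i < l.length)
    (hj : j < l.length) (h : l.getD i 0 = l.getD j 0) : i = j := by
  rw [List.getD_eq_getElem l 0 hi, List.getD_eq_getElem l 0 hj] at h
  exact (hnd.getElem_inj_iff).1 h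

lemma M_ge {d x : ℕ} (hx : x ∈ M d) : 3 ≤ x ∧ x ≤ 2 * d + 1 := by
  obtain ⟨k, h1, h2, rfl⟩ := hx; omega

lemma M_succ (d : ℕ) : M (d + 1) = insert 3 ((· + 2) '' M d) := by
  ext x
  constructor
  · rintro ⟨k, h1, h2, rfl⟩
    rcases eq_or_lt_of_le h1 with h | h
    · exact Or.inl (by omega)
    · exact Or.inr ⟨2 * (k - 1) + 1, ⟨k - 1, by omega, by omega, rfl⟩,
        by show 2 * (k - 1) + 1 + 2 = 2 * k + 1; omega⟩
  · rintro (h | ⟨y, ⟨k, h1, h2, rfl⟩, rfl⟩)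
    · exact ⟨1, by omega, by omega, by omega⟩
    · exact ⟨k + 1, by omega, by omega, by show 2 * k + 1 + 2 = 2 * (k + 1) + 1; omega⟩

/-! ### range' helpers -/

lemma range'_one (s k : ℕ) : List.range' s (k + 1) = s :: List.range' (s + 1) k :=
  List.range'_succ (s := s) (n := k) (step := 1)

lemma range'_three (s k : ℕ) :
    List.range' s (k + 3) = s :: (s + 1) :: (s + 2) :: List.range' (s + 3) k := by
  rw [show k + 3 = (k + 2) + 1 by omega, List.range'_succ,
      show k + 2 = (k + 1) + 1 by omega, List.range'_succ, List.range'_succ,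
      show s + 1 + 1 = s + 2 by omega, show s + 2 + 1 = s + 3 by omega]

lemma range'_snoc (n : ℕ) : List.range' 1 (n + 1) = List.range' 1 n ++ [n + 1] := by
  rw [List.range'_concat, show 1 + 1 * n = n + 1 by omega]

lemma map_add2_range' (s k : ℕ) :
    (List.range' s k).map (· + 2) = List.range' (2 + s) k := by
  rw [List.map_congr_left (fun a _ => Nat.add_comm a 2)]
  exact List.map_add_range' (a := 2) s k 1

lemma map_sub2_range' (k : ℕ) :
    (List.range' 4 k).map (· - 2) = List.range' 2 k := by
  have h := map_add2_range' 2 k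
  norm_num at h
  rw [← h, List.map_map]
  exact (List.map_congr_left fun a _ => by simp).trans (List.map_id _)

/-! ### bridge: permutations vs lists -/

def listOf {n : ℕ} (w : Equiv.Perm (Fin n)) : List ℕ :=
  (List.finRange n).map (fun i => (w i).val + 1)

lemma length_listOf {n : ℕ} (w : Equiv.Perm (Fin n)) : (listOf w).length = n := by
  simp [listOf]

lemma getD_listOf {n : ℕ} (w : Equiv.Perm (Fin n)) {i : ℕ} (h : i < n) :
    (listOf w).getD i 0 = (w ⟨i, h⟩).val + 1 := by
  rw [List.getD_eq_getElem _ 0 (by simpa [listOf] using h)]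
  simp [listOf]

lemma pin_eq {n : ℕ} (w : Equiv.Perm (Fin n)) : Pin w = PinL (listOf w) := by
  ext v
  constructor
  · rintro ⟨i, ⟨h0, hlt, h1, h2⟩, rfl⟩
    refine ⟨i.val, h0, by rw [length_listOf]; exact hlt, ?_, ?_, ?_⟩
    · rw [getD_listOf w (show i.val - 1 < n by omega), getD_listOf w i.isLt]
      exact Nat.add_lt_add_right h1 1
    · rw [getD_listOf w hlt, getD_listOf w i.isLt]
      exact Nat.add_lt_add_right h2 1
    · exact (getD_listOf w i.isLt).symm
  · rintro ⟨i, h0, hL, h1, h2, rfl⟩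
    rw [length_listOf] at hL
    refine ⟨⟨i, by omega⟩, ⟨h0, hL, ?_, ?_⟩, getD_listOf w (by omega)⟩
    · rw [getD_listOf w (show i - 1 < n by omega), getD_listOf w (show i < n by omega)] at h1
      exact Nat.lt_of_add_lt_add_right h1
    · rw [getD_listOf w hL, getD_listOf w (show i < n by omega)] at h2
      exact Nat.lt_of_add_lt_add_right h2

lemma listOf_perm {n : ℕ} (w : Equiv.Perm (Fin n)) :
    (listOf w).Perm (List.range' 1 n) := by
  apply List.perm_of_nodup_nodup_toFinset_eq
  · refine (List.nodup_finRange n).map ?_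
    intro i j hij
    have h2 : (w i).val + 1 = (w j).val + 1 := hij
    exact w.injective (Fin.ext (by omega))
  · exact List.nodup_range' (s := 1) (n := n)
  · ext a
    simp only [List.mem_toFinset, listOf, List.mem_map, List.mem_finRange, true_and,
      List.mem_range'_1]
    constructor
    · rintro ⟨i, rfl⟩
      have := (w i).isLt; omega
    · rintro ⟨h1, h2⟩
      refine ⟨w.symm ⟨a - 1, by omega⟩, ?_⟩
      rw [Equiv.apply_symm_apply]
      simp; omega

lemma bridge (n : ℕ) (S : Set ℕ) : pcount n S = Nat.card (W n S) := by
  apply Nat.card_eq_of_bijective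
    (fun w => (⟨listOf w.1, listOf_perm w.1, by rw [← pin_eq]; exact w.2⟩ : W n S))
  constructor
  · rintro ⟨w, hw⟩ ⟨w', hw'⟩ h
    have h' : listOf w = listOf w' := congrArg Subtype.val h
    refine Subtype.ext (Equiv.ext fun i => ?_)
    have h2 := congrArg (fun l => l.getD i.val 0) h'
    rw [getD_listOf w i.isLt, getD_listOf w' i.isLt] at h2
    have : w ⟨i.val, i.isLt⟩ = w' ⟨i.val, i.isLt⟩ := Fin.ext (by omega)
    simpa [Fin.eta] using this
  · rintro ⟨l, hp, hq⟩
    have hlen : l.length = n := by rw [hp.length_eq, List.length_range']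
    have hnd : l.Nodup := hp.nodup_iff.mpr (List.nodup_range' (s := 1) (n := n))
    have hmem : ∀ {i : ℕ}, i < n → 1 ≤ l.getD i 0 ∧ l.getD i 0 < 1 + n := by
      intro i hi
      have h := getD_mem l (show i < l.length by omega)
      rw [hp.mem_iff, List.mem_range'_1] at h
      exact h
    have hinj : Function.Injective
        (fun i : Fin n => (⟨l.getD i.val 0 - 1, by have := hmem i.isLt; omega⟩ : Fin n)) := by
      intro i j hij
      have h1 := hmem i.isLt
      have h2 := hmem j.isLt
      have hv : l.getD i.val 0 - 1 = l.getD j.val 0 - 1 := congrArg Fin.val hij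
      exact Fin.ext (getD_inj hnd (by omega) (by omega) (by omega))
    set w := Equiv.ofBijective _ (Finite.injective_iff_bijective.mp hinj) with hw
    have hlw : listOf w = l := by
      apply List.ext_getElem (by rw [length_listOf, hlen])
      intro i h1' h2'
      rw [← List.getD_eq_getElem (listOf w) 0 h1', ← List.getD_eq_getElem l 0 h2']
      rw [getD_listOf w (by rwa [length_listOf] at h1')]
      have := hmem (i := i) (by rwa [length_listOf] at h1')
      simp only [hw, Equiv.ofBijective_apply]
      omega
    exact ⟨⟨w, by rw [pin_eq, hlw]; exact hq⟩, Subtype.ext hlw⟩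

/-! ### counting helper -/

lemma card_two_mul {α β : Type} (f : Bool × α → β) (hf : Function.Bijective f) :
    Nat.card β = 2 * Nat.card α := by
  rw [← Nat.card_eq_of_bijective f hf, Nat.card_prod]
  simp [Nat.card_eq_fintype_card]

/-! ### step A : adding the max at either end -/

lemma entries_lt {n : ℕ} {l : List ℕ} (hp : l.Perm (List.range' 1 n)) :
    ∀ x ∈ l, x < n + 1 := by
  intro x hx; rw [hp.mem_iff, List.mem_range'_1] at hx; omega

lemma pin_cons_big {K : ℕ} {l : List ℕ} (hl : 1 ≤ l.length) (hK : ∀ x ∈ l, x < K) :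
    PinL (K :: l) = PinL l := by
  ext v
  constructor
  · rintro ⟨i, h0, hL, h1, h2, rfl⟩
    simp only [List.length_cons] at hL
    rcases (show i = 1 ∨ 2 ≤ i by omega) with rfl | hi2
    · exfalso
      rw [List.getD_cons_zero, List.getD_cons_succ] at h1
      have := hK _ (getD_mem l (show 0 < l.length by omega))
      omega
    · obtain ⟨k, rfl⟩ : ∃ k, i = k + 2 := ⟨i - 2, by omega⟩
      rw [show k + 2 - 1 = k + 1 by omega, List.getD_cons_succ, List.getD_cons_succ] at h1
      rw [show k + 2 + 1 = (k + 2) + 1 by omega, List.getD_cons_succ, List.getD_cons_succ] at h2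
      refine ⟨k + 1, by omega, by omega, ?_, ?_, ?_⟩
      · rw [show k + 1 - 1 = k by omega]; exact h1
      · exact h2
      · rw [List.getD_cons_succ]
  · rintro ⟨i, h0, hL, h1, h2, rfl⟩
    obtain ⟨j, rfl⟩ : ∃ j, i = j + 1 := ⟨i - 1, by omega⟩
    refine ⟨j + 2, by omega, by simp; omega, ?_, ?_, ?_⟩
    · rw [show j + 2 - 1 = j + 1 by omega, List.getD_cons_succ, List.getD_cons_succ,
        show j + 1 - 1 = j by omega] at *
      exact h1
    · rw [show j + 2 + 1 = (j + 2) + 1 by omega, List.getD_cons_succ, List.getD_cons_succ]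
      exact h2
    · rw [List.getD_cons_succ]

lemma pin_concat_big {K : ℕ} {l : List ℕ} (hK : ∀ x ∈ l, x < K) :
    PinL (l ++ [K]) = PinL l := by
  ext v
  constructor
  · rintro ⟨i, h0, hL, h1, h2, rfl⟩
    have hlen : (l ++ [K]).length = l.length + 1 := by simp
    rw [hlen] at hL
    rcases Nat.lt_or_ge (i + 1) l.length with hc | hc
    · rw [List.getD_append _ _ _ _ (show i - 1 < l.length by omega),
        List.getD_append _ _ _ _ (show i < l.length by omega)] at h1
      rw [List.getD_append _ _ _ _ hc,
        List.getD_append _ _ _ _ (show i < l.length by omega)] at h2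
      exact ⟨i, h0, hc, h1, h2, by rw [List.getD_append _ _ _ _ (show i < l.length by omega)]⟩
    · exfalso
      have hc' : i + 1 = l.length := by omega
      have hK' : (l ++ [K]).getD (i + 1) 0 = K := by
        rw [List.getD_append_right _ _ _ _ (by omega), show i + 1 - l.length = 0 by omega]
        rfl
      rw [hK', List.getD_append _ _ _ _ (show i < l.length by omega)] at h2
      have := hK _ (getD_mem l (show i < l.length by omega))
      omega
  · rintro ⟨i, h0, hL, h1, h2, rfl⟩
    refine ⟨i, h0, by simp; omega, ?_, ?_, ?_⟩
    · rw [List.getD_append _ _ _ _ (show i - 1 < l.length by omega),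
        List.getD_append _ _ _ _ (show i < l.length by omega)]
      exact h1
    · rw [List.getD_append _ _ _ _ (show i + 1 < l.length by omega),
        List.getD_append _ _ _ _ (show i < l.length by omega)]
      exact h2
    · rw [List.getD_append _ _ _ _ (show i < l.length by omega)]

def consEl (n : ℕ) (S : Set ℕ) (p : Bool × W n S) : List ℕ :=
  if p.1 then (n + 1) :: p.2.1 else p.2.1 ++ [n + 1]

lemma consEl_perm {n : ℕ} {S : Set ℕ} (p : Bool × W n S) :
    (consEl n S p).Perm (List.range' 1 (n + 1)) := by
  obtain ⟨b, l, hp, hq⟩ := p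
  rw [range'_snoc]
  cases b
  · simp only [consEl, Bool.false_eq_true, if_false]
    exact hp.append_right [n + 1]
  · simp only [consEl, if_true]
    exact (hp.cons (n + 1)).trans (List.perm_append_singleton (n + 1) (List.range' 1 n)).symm

lemma consEl_pin {n : ℕ} {S : Set ℕ} (hn : 1 ≤ n) (p : Bool × W n S) :
    PinL (consEl n S p) = S := by
  obtain ⟨b, l, hp, hq⟩ := p
  have hlt := entries_lt hp
  have hlen : l.length = n := by rw [hp.length_eq, List.length_range']
  cases b
  · simp only [consEl, Bool.false_eq_true, if_false]
    rw [pin_concat_big hlt]; exact hq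
  · simp only [consEl, if_true]
    rw [pin_cons_big (by omega) hlt]; exact hq

lemma stepA (n : ℕ) (S : Set ℕ) (hn : 1 ≤ n) (hS : (n + 1) ∉ S) :
    Nat.card (W (n + 1) S) = 2 * Nat.card (W n S) := by
  apply card_two_mul (fun p => (⟨consEl n S p, consEl_perm p, consEl_pin hn p⟩ : W (n + 1) S))
  constructor
  · rintro ⟨b, l, hp, hq⟩ ⟨b', l', hp', hq'⟩ hEq
    have hv : consEl n S (b, ⟨l, hp, hq⟩) = consEl n S (b', ⟨l', hp', hq'⟩) :=
      congrArg Subtype.val hEq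
    have hll : 0 < l.length := by rw [hp.length_eq, List.length_range']; omega
    have hll' : 0 < l'.length := by rw [hp'.length_eq, List.length_range']; omega
    cases b <;> cases b' <;> simp only [consEl, if_true, Bool.false_eq_true, if_false] at hv
    · have hll2 : (⟨l, hp, hq⟩ : W n S) = ⟨l', hp', hq'⟩ :=
        Subtype.ext (List.append_cancel_right hv)
      rw [hll2]
    · exfalso
      have h0 := congrArg (fun t => t.getD 0 0) hv
      rw [List.getD_append _ _ _ _ hll] at h0
      have := entries_lt hp _ (getD_mem l hll)
      rw [List.getD_cons_zero] at h0
      omega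
    · exfalso
      have h0 := congrArg (fun t => t.getD 0 0) hv
      rw [List.getD_append _ _ _ _ hll'] at h0
      have := entries_lt hp' _ (getD_mem l' hll')
      rw [List.getD_cons_zero] at h0
      omega
    · have hll2 : (⟨l, hp, hq⟩ : W n S) = ⟨l', hp', hq'⟩ :=
        Subtype.ext (by simpa using hv)
      rw [hll2]
  · rintro ⟨m, hp, hq⟩
    have hnd : m.Nodup := hp.nodup_iff.mpr (List.nodup_range' (s := 1) (n := n + 1))
    have hmem : (n + 1) ∈ m := hp.mem_iff.mpr (by rw [List.mem_range'_1]; omega)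
    obtain ⟨s, t, rfl⟩ := List.append_of_mem hmem
    have hlen : s.length + (t.length + 1) = n + 1 := by
      have := hp.length_eq; simpa using this
    have hnotins : (n + 1) ∉ s ∧ (n + 1) ∉ t := by
      rw [List.nodup_append] at hnd
      exact ⟨fun h => hnd.2.2 _ h _ (by simp) rfl, by
        have := hnd.2.1; rw [List.nodup_cons] at this; exact this.1⟩
    have hentm := entries_lt hp
    have hcase : s = [] ∨ t = [] := by
      by_contra hc
      push_neg at hc
      have hsl : 0 < s.length := List.length_pos_iff.mpr hc.1
      have htl : 0 < t.length := List.length_pos_iff.mpr hc.2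
      apply hS
      rw [← hq]
      have e1 : (s ++ (n + 1) :: t).getD s.length 0 = n + 1 := by
        rw [List.getD_append_right _ _ _ _ le_rfl, Nat.sub_self, List.getD_cons_zero]
      have e2 : (s ++ (n + 1) :: t).getD (s.length - 1) 0 = s.getD (s.length - 1) 0 :=
        List.getD_append _ _ _ _ (by omega)
      have e3 : (s ++ (n + 1) :: t).getD (s.length + 1) 0 = t.getD 0 0 := by
        rw [List.getD_append_right _ _ _ _ (by omega),
          show s.length + 1 - s.length = 1 by omega, List.getD_cons_succ]
      refine ⟨s.length, by omega, by simp; omega, ?_, ?_, e1.symm⟩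
      · rw [e1, e2]
        have hmem2 : s.getD (s.length - 1) 0 ∈ s := getD_mem s (by omega)
        have := hentm (s.getD (s.length - 1) 0) (List.mem_append.mpr (Or.inl hmem2))
        have hne : s.getD (s.length - 1) 0 ≠ n + 1 := fun h => hnotins.1 (h ▸ hmem2)
        omega
      · rw [e1, e3]
        have hmem2 : t.getD 0 0 ∈ t := getD_mem t (by omega)
        have := hentm (t.getD 0 0) (List.mem_append.mpr (Or.inr (List.mem_cons_of_mem _ hmem2)))
        have hne : t.getD 0 0 ≠ n + 1 := fun h => hnotins.2 (h ▸ hmem2)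
        omega
    have hperm' : ((n + 1) :: (s ++ t)).Perm ((n + 1) :: List.range' 1 n) := by
      refine (List.perm_middle.symm.trans hp).trans ?_
      rw [range'_snoc]
      exact List.perm_append_singleton (n + 1) (List.range' 1 n)
    have hst : (s ++ t).Perm (List.range' 1 n) := hperm'.cons_inv
    rcases hcase with rfl | rfl
    · simp only [List.nil_append] at hq hp ⊢
      have hts : t.Perm (List.range' 1 n) := by simpa using hst
      have hpin : PinL t = S := by
        rw [← pin_cons_big (K := n + 1) (by rw [hts.length_eq, List.length_range']; omega)
          (fun x hx => by
            have := hentm x (by simp [hx])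
            have hne : x ≠ n + 1 := fun h => hnotins.2 (h ▸ hx)
            omega)]
        exact hq
      exact ⟨(true, ⟨t, hts, hpin⟩), Subtype.ext (by simp [consEl])⟩
    · simp only [List.append_nil] at hst
      have hpin : PinL s = S := by
        rw [← pin_concat_big (K := n + 1) (fun x hx => by
          have := hentm x (by simp [hx])
          have hne : x ≠ n + 1 := fun h => hnotins.1 (h ▸ hx)
          omega)]
        exact hq
      exact ⟨(false, ⟨s, hst, hpin⟩), Subtype.ext (by simp [consEl])⟩

/-! ### step B : the 1-3-2 surgery -/

lemma pull3 (A B : List ℕ) (u v w : ℕ) :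
    (A ++ u :: v :: w :: B).Perm (u :: v :: w :: (A ++ B)) :=
  List.perm_middle.trans
    (((List.perm_middle.trans (List.perm_middle.cons v)).cons u))

lemma insert_cancel {X Y : Set ℕ} {a : ℕ} (hX : a ∉ X) (hY : a ∉ Y)
    (h : insert a X = insert a Y) : X = Y := by
  ext v
  constructor <;> intro hv
  · have h2 : v ∈ insert a Y := h ▸ Set.mem_insert_iff.mpr (Or.inr hv)
    rcases Set.mem_insert_iff.mp h2 with rfl | h3
    · exact absurd hv hX
    · exact h3
  · have h2 : v ∈ insert a X := h.symm ▸ Set.mem_insert_iff.mpr (Or.inr hv)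
    rcases Set.mem_insert_iff.mp h2 with rfl | h3
    · exact absurd hv hY
    · exact h3

lemma getD_map_add2 (l : List ℕ) {i : ℕ} (h : i < l.length) :
    (l.map (· + 2)).getD i 0 = l.getD i 0 + 2 := by
  rw [List.getD_eq_getElem _ _ (by simpa using h), List.getD_eq_getElem _ _ h,
    List.getElem_map]

lemma pin_map_add2 (l : List ℕ) : PinL (l.map (· + 2)) = (· + 2) '' PinL l := by
  ext v
  constructor
  · rintro ⟨i, h0, hL, h1, h2, rfl⟩
    rw [List.length_map] at hL
    rw [getD_map_add2 l (by omega), getD_map_add2 l (by omega)] at h1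
    rw [getD_map_add2 l (by omega), getD_map_add2 l (by omega)] at h2
    exact ⟨l.getD i 0, ⟨i, h0, hL, by omega, by omega, rfl⟩,
      (getD_map_add2 l (by omega)).symm⟩
  · rintro ⟨u, ⟨i, h0, hL, h1, h2, rfl⟩, rfl⟩
    refine ⟨i, h0, by rw [List.length_map]; omega, ?_, ?_, ?_⟩
    · rw [getD_map_add2 l (by omega), getD_map_add2 l (by omega)]; omega
    · rw [getD_map_add2 l (by omega), getD_map_add2 l (by omega)]; omega
    · exact (getD_map_add2 l (by omega)).symm

lemma pin_splice (p q : List ℕ) (x y : ℕ) (h4p : ∀ a ∈ p, 4 ≤ a) (h4q : ∀ a ∈ q, 4 ≤ a)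
    (hx : x < 3) (hy : y < 3) :
    PinL (p ++ x :: 3 :: y :: q) = insert 3 (PinL (p ++ 3 :: q)) := by
  have hp4 : ∀ i, i < p.length → 4 ≤ p.getD i 0 := fun i h => h4p _ (getD_mem p h)
  have hq4 : ∀ i, i < q.length → 4 ≤ q.getD i 0 := fun i h => h4q _ (getD_mem q h)
  have len1 : (p ++ x :: 3 :: y :: q).length = p.length + q.length + 3 := by simp; omega
  have len2 : (p ++ 3 :: q).length = p.length + q.length + 1 := by simp; omega
  have g0 : ∀ i, i < p.length → (p ++ x :: 3 :: y :: q).getD i 0 = p.getD i 0 :=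
    fun i h => List.getD_append _ _ _ _ h
  have k0 : ∀ i, i < p.length → (p ++ 3 :: q).getD i 0 = p.getD i 0 :=
    fun i h => List.getD_append _ _ _ _ h
  have gx : (p ++ x :: 3 :: y :: q).getD p.length 0 = x := by
    rw [List.getD_append_right _ _ _ _ le_rfl, Nat.sub_self, List.getD_cons_zero]
  have g3 : (p ++ x :: 3 :: y :: q).getD (p.length + 1) 0 = 3 := by
    rw [List.getD_append_right _ _ _ _ (by omega),
      show p.length + 1 - p.length = 1 by omega]
    rfl
  have gy : (p ++ x :: 3 :: y :: q).getD (p.length + 2) 0 = y := by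
    rw [List.getD_append_right _ _ _ _ (by omega),
      show p.length + 2 - p.length = 2 by omega]
    rfl
  have gq : ∀ j, (p ++ x :: 3 :: y :: q).getD (p.length + 3 + j) 0 = q.getD j 0 := by
    intro j
    rw [List.getD_append_right _ _ _ _ (by omega),
      show p.length + 3 + j - p.length = j + 3 by omega]
    rfl
  have k3 : (p ++ 3 :: q).getD p.length 0 = 3 := by
    rw [List.getD_append_right _ _ _ _ le_rfl, Nat.sub_self, List.getD_cons_zero]
  have kq : ∀ j, (p ++ 3 :: q).getD (p.length + 1 + j) 0 = q.getD j 0 := by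
    intro j
    rw [List.getD_append_right _ _ _ _ (by omega),
      show p.length + 1 + j - p.length = j + 1 by omega]
    rfl
  ext v
  simp only [Set.mem_insert_iff]
  constructor
  · rintro ⟨i, h0, hL, h1, h2, rfl⟩
    rw [len1] at hL
    rcases Nat.lt_or_ge i p.length with hi | hi
    · right
      have hv4 : 4 ≤ p.getD i 0 := hp4 i hi
      rcases Nat.lt_or_ge (i + 1) p.length with hc | hc
      · rw [g0 _ (by omega), g0 _ hi] at h1
        rw [g0 _ hc, g0 _ hi] at h2
        exact ⟨i, h0, by rw [len2]; omega,
          by rw [k0 _ (by omega), k0 _ hi]; exact h1,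
          by rw [k0 _ hc, k0 _ hi]; exact h2,
          by rw [g0 _ hi, k0 _ hi]⟩
      · have hiP : i + 1 = p.length := by omega
        rw [g0 _ (by omega), g0 _ hi] at h1
        refine ⟨i, h0, by rw [len2]; omega,
          by rw [k0 _ (by omega), k0 _ hi]; exact h1, ?_,
          by rw [g0 _ hi, k0 _ hi]⟩
        rw [hiP, k3, k0 _ hi]
        omega
    · obtain ⟨j, rfl⟩ : ∃ j, i = p.length + j := ⟨i - p.length, by omega⟩
      rcases (show j = 0 ∨ j = 1 ∨ j = 2 ∨ 3 ≤ j by omega) with rfl | rfl | rfl | hj3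
      · exfalso
        rw [show p.length + 0 + 1 = p.length + 1 by omega, g3,
          show p.length + 0 = p.length by omega, gx] at h2
        omega
      · exact Or.inl g3
      · exfalso
        have hQ : 0 < q.length := by omega
        rw [show p.length + 2 + 1 = p.length + 3 + 0 by omega, gq 0, gy] at h2
        have := hq4 0 hQ
        omega
      · obtain ⟨j', rfl⟩ : ∃ j', j = 3 + j' := ⟨j - 3, by omega⟩
        have hj'Q : j' + 1 < q.length := by omega
        right
        rw [show p.length + (3 + j') = p.length + 3 + j' by omega] at h0 h1 h2 ⊢
        refine ⟨p.length + 1 + j', by omega, by rw [len2]; omega, ?_, ?_, ?_⟩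
        · rcases Nat.eq_zero_or_pos j' with rfl | hj'
          · rw [show p.length + 1 + 0 - 1 = p.length by omega, k3, kq 0]
            have := hq4 0 (by omega)
            omega
          · obtain ⟨j'', rfl⟩ : ∃ j'', j' = j'' + 1 := ⟨j' - 1, by omega⟩
            rw [show p.length + 3 + (j'' + 1) - 1 = p.length + 3 + j'' by omega, gq j'',
              gq (j'' + 1)] at h1
            rw [show p.length + 1 + (j'' + 1) - 1 = p.length + 1 + j'' by omega, kq j'',
              kq (j'' + 1)]
            exact h1
        · rw [show p.length + 3 + j' + 1 = p.length + 3 + (j' + 1) by omega, gq (j' + 1),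
            gq j'] at h2
          rw [show p.length + 1 + j' + 1 = p.length + 1 + (j' + 1) by omega, kq (j' + 1),
            kq j']
          exact h2
        · rw [gq j', kq j']
  · rintro (rfl | ⟨i, h0, hL, h1, h2, rfl⟩)
    · exact ⟨p.length + 1, by omega, by rw [len1]; omega,
        by rw [show p.length + 1 - 1 = p.length by omega, gx, g3]; omega,
        by rw [show p.length + 1 + 1 = p.length + 2 by omega, gy, g3]; omega, g3.symm⟩
    · rw [len2] at hL
      rcases Nat.lt_or_ge i p.length with hi | hi
      · have hv4 : 4 ≤ p.getD i 0 := hp4 i hi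
        rcases Nat.lt_or_ge (i + 1) p.length with hc | hc
        · rw [k0 _ (by omega), k0 _ hi] at h1
          rw [k0 _ hc, k0 _ hi] at h2
          exact ⟨i, h0, by rw [len1]; omega,
            by rw [g0 _ (by omega), g0 _ hi]; exact h1,
            by rw [g0 _ hc, g0 _ hi]; exact h2,
            by rw [k0 _ hi, g0 _ hi]⟩
        · have hiP : i + 1 = p.length := by omega
          rw [k0 _ (by omega), k0 _ hi] at h1
          refine ⟨i, h0, by rw [len1]; omega,
            by rw [g0 _ (by omega), g0 _ hi]; exact h1, ?_,
            by rw [k0 _ hi, g0 _ hi]⟩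
          rw [hiP, gx, g0 _ hi]
          omega
      · obtain ⟨j, rfl⟩ : ∃ j, i = p.length + j := ⟨i - p.length, by omega⟩
        rcases Nat.eq_zero_or_pos j with rfl | hj
        · exfalso
          have hP : 0 < p.length := by omega
          rw [show p.length + 0 - 1 = p.length - 1 by omega, k0 _ (by omega),
            show p.length + 0 = p.length by omega, k3] at h1
          have := hp4 (p.length - 1) (by omega)
          omega
        · obtain ⟨j', rfl⟩ : ∃ j', j = j' + 1 := ⟨j - 1, by omega⟩
          have hjq : j' + 1 < q.length := by omega
          rw [show p.length + (j' + 1) = p.length + 1 + j' by omega] at h0 h1 h2 ⊢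
          refine ⟨p.length + 3 + j', by omega, by rw [len1]; omega, ?_, ?_, ?_⟩
          · rcases Nat.eq_zero_or_pos j' with rfl | hj'
            · rw [show p.length + 3 + 0 - 1 = p.length + 2 by omega, gy, gq 0]
              have := hq4 0 (by omega)
              omega
            · obtain ⟨j'', rfl⟩ : ∃ j'', j' = j'' + 1 := ⟨j' - 1, by omega⟩
              rw [show p.length + 1 + (j'' + 1) - 1 = p.length + 1 + j'' by omega, kq j'',
                kq (j'' + 1)] at h1
              rw [show p.length + 3 + (j'' + 1) - 1 = p.length + 3 + j'' by omega, gq j'',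
                gq (j'' + 1)]
              exact h1
          · rw [show p.length + 1 + j' + 1 = p.length + 1 + (j' + 1) by omega, kq (j' + 1),
              kq j'] at h2
            rw [show p.length + 3 + j' + 1 = p.length + 3 + (j' + 1) by omega, gq (j' + 1),
              gq j']
            exact h2
          · rw [kq j', gq j']

lemma pin_no3 (p q : List ℕ) (h4p : ∀ a ∈ p, 4 ≤ a) (h4q : ∀ a ∈ q, 4 ≤ a) :
    (3 : ℕ) ∉ PinL (p ++ 3 :: q) := by
  rintro ⟨i, h0, hL, h1, h2, hv⟩
  have len2 : (p ++ 3 :: q).length = p.length + q.length + 1 := by simp; omega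
  have k3 : (p ++ 3 :: q).getD p.length 0 = 3 := by
    rw [List.getD_append_right _ _ _ _ le_rfl, Nat.sub_self, List.getD_cons_zero]
  rw [len2] at hL
  rcases Nat.lt_or_ge i p.length with hi | hi
  · rw [List.getD_append _ _ _ _ hi] at hv
    have := h4p _ (getD_mem p hi)
    omega
  · rcases Nat.eq_or_lt_of_le hi with heq | hlt
    · have hP : 0 < p.length := by omega
      rw [← heq] at h1
      rw [List.getD_append _ _ _ _ (show p.length - 1 < p.length by omega), k3] at h1
      have := h4p _ (getD_mem p (show p.length - 1 < p.length by omega))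
      omega
    · obtain ⟨j, hj⟩ : ∃ j, i - p.length = j + 1 := ⟨i - p.length - 1, by omega⟩
      have he : (p ++ 3 :: q).getD i 0 = q.getD j 0 := by
        rw [List.getD_append_right _ _ _ _ (by omega), hj, List.getD_cons_succ]
      rw [he] at hv
      have := h4q _ (getD_mem q (show j < q.length by omega))
      omega

def blk (b : Bool) : List ℕ := if b then [1, 3, 2] else [2, 3, 1]

def ins (b : Bool) (l : List ℕ) : List ℕ :=
  l.flatMap fun a => if a = 1 then blk b else [a + 2]

lemma ins_append (b : Bool) (l1 l2 : List ℕ) :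
    ins b (l1 ++ l2) = ins b l1 ++ ins b l2 := List.flatMap_append

lemma ins_cons (b : Bool) (a : ℕ) (l : List ℕ) :
    ins b (a :: l) = (if a = 1 then blk b else [a + 2]) ++ ins b l :=
  List.flatMap_cons

lemma ins_one (b : Bool) : ins b [1] = blk b := by simp [ins]

lemma ins_no_one {b : Bool} {l : List ℕ} (h : (1 : ℕ) ∉ l) :
    ins b l = l.map (· + 2) := by
  induction l with
  | nil => rfl
  | cons a t ih =>
    simp only [List.mem_cons, not_or] at h
    rw [ins_cons, if_neg (Ne.symm h.1), ih h.2, List.map_cons, List.singleton_append]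

def rec2 (m : List ℕ) : List ℕ := (m.filter fun a => decide (3 ≤ a)).map (· - 2)

lemma rec2_append (m1 m2 : List ℕ) : rec2 (m1 ++ m2) = rec2 m1 ++ rec2 m2 := by
  simp [rec2, List.filter_append]

lemma rec2_ins (b : Bool) {l : List ℕ} (h : ∀ a ∈ l, 1 ≤ a) : rec2 (ins b l) = l := by
  induction l with
  | nil => rfl
  | cons a t ih =>
    have ht : rec2 (ins b t) = t := ih fun z hz => h z (List.mem_cons_of_mem a hz)
    rw [ins_cons, rec2_append, ht]
    by_cases h1 : a = 1
    · subst h1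
      rw [if_pos rfl]
      cases b <;> rfl
    · rw [if_neg h1]
      have ha : 1 ≤ a := h a (List.mem_cons_self)
      have hr : rec2 [a + 2] = [a] := by
        simp [rec2, List.filter, show 3 ≤ a + 2 by omega, show a + 2 - 2 = a by omega]
      rw [hr, List.singleton_append]

lemma one_split {n : ℕ} {l : List ℕ} (hp : l.Perm (List.range' 1 n)) (hn : 1 ≤ n) :
    ∃ l1 l2, l = l1 ++ 1 :: l2 ∧ (1 : ℕ) ∉ l1 ∧ (1 : ℕ) ∉ l2 ∧
      (∀ a ∈ l1, 2 ≤ a ∧ a ≤ n) ∧ (∀ a ∈ l2, 2 ≤ a ∧ a ≤ n) := by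
  have h1l : (1 : ℕ) ∈ l := hp.mem_iff.mpr (by rw [List.mem_range'_1]; omega)
  obtain ⟨l1, l2, rfl⟩ := List.append_of_mem h1l
  have hnd : (l1 ++ 1 :: l2).Nodup := hp.nodup_iff.mpr (List.nodup_range' (s := 1) (n := n))
  rw [List.nodup_append] at hnd
  have h1 : (1 : ℕ) ∉ l1 := fun h => hnd.2.2 _ h _ List.mem_cons_self rfl
  have h2 : (1 : ℕ) ∉ l2 := by
    have := hnd.2.1
    rw [List.nodup_cons] at this
    exact this.1
  have hent : ∀ a ∈ l1 ++ 1 :: l2, 1 ≤ a ∧ a ≤ n := by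
    intro a ha
    have hm := hp.mem_iff.mp ha
    rw [List.mem_range'_1] at hm
    omega
  refine ⟨l1, l2, rfl, h1, h2, ?_, ?_⟩
  · intro a ha
    have hb := hent a (List.mem_append.mpr (Or.inl ha))
    have hne : a ≠ 1 := fun e => h1 (e ▸ ha)
    omega
  · intro a ha
    have hb := hent a (List.mem_append.mpr (Or.inr (List.mem_cons_of_mem _ ha)))
    have hne : a ≠ 1 := fun e => h2 (e ▸ ha)
    omega

lemma stepB (d : ℕ) :
    Nat.card (W (2 * d + 3) (M (d + 1))) = 2 * Nat.card (W (2 * d + 1) (M d)) := by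
  have hr3 : List.range' 1 (2 * d + 3) = 1 :: 2 :: 3 :: List.range' 4 (2 * d) := by
    have h := range'_three 1 (2 * d)
    norm_num at h
    exact h
  have hr1 : List.range' 1 (2 * d + 1) = 1 :: List.range' 2 (2 * d) := by
    have h := range'_one 1 (2 * d)
    norm_num at h
    exact h
  have hmr : (List.range' 2 (2 * d)).map (· + 2) = List.range' 4 (2 * d) := by
    have h := map_add2_range' 2 (2 * d)
    norm_num at h
    exact h
  have key : ∀ (b : Bool) (l : List ℕ), l.Perm (List.range' 1 (2 * d + 1)) → PinL l = M d →
      (ins b l).Perm (List.range' 1 (2 * d + 3)) ∧ PinL (ins b l) = M (d + 1) := by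
    intro b l hp hq
    obtain ⟨l1, l2, rfl, h1a, h1b, hb1, hb2⟩ := one_split hp (by omega)
    have hA : ∀ a ∈ l1.map (· + 2), 4 ≤ a := by
      intro a ha
      rw [List.mem_map] at ha
      obtain ⟨z, hz, rfl⟩ := ha
      have := (hb1 z hz).1
      show 4 ≤ z + 2
      omega
    have hB : ∀ a ∈ l2.map (· + 2), 4 ≤ a := by
      intro a ha
      rw [List.mem_map] at ha
      obtain ⟨z, hz, rfl⟩ := ha
      have := (hb2 z hz).1
      show 4 ≤ z + 2
      omega
    obtain ⟨x, y, hx3, hy3, hblk, hperm3⟩ :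
        ∃ x y : ℕ, x < 3 ∧ y < 3 ∧ blk b = [x, 3, y] ∧
          ∀ Z : List ℕ, (x :: 3 :: y :: Z).Perm (1 :: 2 :: 3 :: Z) := by
      cases b
      · exact ⟨2, 1, by omega, by omega, rfl, fun Z => List.perm_middle (l₁ := [2, 3])⟩
      · exact ⟨1, 2, by omega, by omega, rfl, fun Z => (List.Perm.swap 2 3 Z).cons 1⟩
    have hinseq : ins b (l1 ++ 1 :: l2) =
        (l1.map (· + 2)) ++ x :: 3 :: y :: (l2.map (· + 2)) := by
      rw [show l1 ++ 1 :: l2 = l1 ++ [1] ++ l2 by simp, ins_append, ins_append, ins_one,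
        ins_no_one h1a, ins_no_one h1b, hblk]
      simp
    have hll : (l1 ++ l2).Perm (List.range' 2 (2 * d)) := by
      have ha : (1 :: (l1 ++ l2)).Perm (List.range' 1 (2 * d + 1)) :=
        List.perm_middle.symm.trans hp
      rw [hr1] at ha
      exact ha.cons_inv
    have hAB : (l1.map (· + 2) ++ l2.map (· + 2)).Perm (List.range' 4 (2 * d)) := by
      rw [← List.map_append, ← hmr]
      exact hll.map _
    constructor
    · rw [hinseq, hr3]
      exact (pull3 _ _ x 3 y).trans ((hperm3 _).trans (((hAB.cons 3).cons 2).cons 1))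
    · rw [hinseq, pin_splice _ _ x y hA hB hx3 hy3]
      have hmapeq : (l1.map (· + 2)) ++ 3 :: (l2.map (· + 2)) = (l1 ++ 1 :: l2).map (· + 2) := by
        simp
      rw [hmapeq, pin_map_add2, hq]
      exact (M_succ d).symm
  apply card_two_mul (fun pr => (⟨ins pr.1 pr.2.1,
    (key pr.1 pr.2.1 pr.2.2.1 pr.2.2.2).1, (key pr.1 pr.2.1 pr.2.2.1 pr.2.2.2).2⟩ :
    W (2 * d + 3) (M (d + 1))))
  constructor
  · rintro ⟨b, l, hp, hq⟩ ⟨b', l', hp', hq'⟩ hEq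
    have hv : ins b l = ins b' l' := congrArg Subtype.val hEq
    have he1 : ∀ a ∈ l, 1 ≤ a := by
      intro a ha
      have := hp.mem_iff.mp ha
      rw [List.mem_range'_1] at this
      omega
    have he1' : ∀ a ∈ l', 1 ≤ a := by
      intro a ha
      have := hp'.mem_iff.mp ha
      rw [List.mem_range'_1] at this
      omega
    have hleq : l = l' := by rw [← rec2_ins b he1, hv, rec2_ins b' he1']
    subst hleq
    have hbeq : b = b' := by
      by_contra hbne
      obtain ⟨l1, l2, rfl, h1a, h1b, _, _⟩ := one_split hp (by omega)
      rw [show l1 ++ 1 :: l2 = l1 ++ [1] ++ l2 by simp, ins_append, ins_append,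
        ins_append, ins_append, ins_one, ins_one,
        ins_no_one (b := b) h1a, ins_no_one (b := b') h1a,
        ins_no_one (b := b) h1b, ins_no_one (b := b') h1b] at hv
      have h3 := List.append_cancel_right hv
      have h4 := List.append_cancel_left h3
      cases b <;> cases b'
      · exact hbne rfl
      · simp [blk] at h4
      · simp [blk] at h4
      · exact hbne rfl
    subst hbeq
    have : (⟨l, hp, hq⟩ : W (2 * d + 1) (M d)) = ⟨l, hp', hq'⟩ := Subtype.ext rfl
    rw [this]
  · rintro ⟨m, hp, hq⟩
    have hlenm : m.length = 2 * d + 3 := by rw [hp.length_eq, List.length_range']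
    have hnd : m.Nodup := hp.nodup_iff.mpr (List.nodup_range' (s := 1) (n := 2 * d + 3))
    have hment : ∀ a ∈ m, 1 ≤ a ∧ a ≤ 2 * d + 3 := by
      intro a ha
      have := hp.mem_iff.mp ha
      rw [List.mem_range'_1] at this
      omega
    have h3pin : (3 : ℕ) ∈ PinL m := by
      rw [hq]
      exact ⟨1, by omega, by omega, rfl⟩
    obtain ⟨i, hi0, hiL, h1, h2, h3v⟩ := h3pin
    rw [hlenm] at hiL
    rw [← h3v] at h1 h2
    obtain ⟨s, t, hst⟩ := List.append_of_mem (show (3 : ℕ) ∈ m by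
      rw [h3v]; exact getD_mem m (by omega))
    have hslen : s.length + (t.length + 1) = 2 * d + 3 := by
      rw [← hlenm, hst]
      simp
    have hgs : m.getD s.length 0 = 3 := by
      rw [hst, List.getD_append_right _ _ _ _ le_rfl, Nat.sub_self, List.getD_cons_zero]
    have hsl : s.length = i :=
      getD_inj hnd (by omega) (by omega) (by rw [hgs, ← h3v])
    have hs_ne : s ≠ [] := by
      intro h
      rw [h] at hsl
      simp at hsl
      omega
    have ht_ne : t ≠ [] := by
      intro h
      rw [h] at hslen
      simp at hslen
      omega
    obtain ⟨y, q, rfl⟩ : ∃ y q, t = y :: q :=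
      ⟨t.head ht_ne, t.tail, (List.cons_head_tail ht_ne).symm⟩
    obtain ⟨p, x, rfl⟩ : ∃ p x, s = p ++ [x] :=
      ⟨s.dropLast, s.getLast hs_ne, (List.dropLast_append_getLast hs_ne).symm⟩
    have hm2 : m = p ++ x :: 3 :: y :: q := by
      rw [hst]
      simp
    have hplen : p.length = i - 1 := by
      have := hsl
      simp at this
      omega
    have hgx : m.getD (i - 1) 0 = x := by
      rw [hm2, List.getD_append_right _ _ _ _ (show p.length ≤ i - 1 by omega),
        show i - 1 - p.length = 0 by omega, List.getD_cons_zero]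
    have hgy : m.getD (i + 1) 0 = y := by
      rw [hm2, List.getD_append_right _ _ _ _ (show p.length ≤ i + 1 by omega),
        show i + 1 - p.length = 2 by omega]
      rfl
    have hx3 : x < 3 := by rw [← hgx]; exact h1
    have hy3 : y < 3 := by rw [← hgy]; exact h2
    have hnd2 : (p ++ x :: 3 :: y :: q).Nodup := by rw [← hm2]; exact hnd
    rw [List.nodup_append] at hnd2
    have hndc : (x :: 3 :: y :: q).Nodup := hnd2.2.1
    have hdisj : p.Disjoint (x :: 3 :: y :: q) := fun _ ha hb => hnd2.2.2 _ ha _ hb rfl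
    have hxy : x ≠ y := by
      intro e
      exact (List.nodup_cons.mp hndc).1 (by simp [e])
    have hx1 : 1 ≤ x := (hment x (by rw [hm2]; simp)).1
    have hy1 : 1 ≤ y := (hment y (by rw [hm2]; simp)).1
    have hxycase : (x = 1 ∧ y = 2) ∨ (x = 2 ∧ y = 1) := by omega
    have h4p : ∀ a ∈ p, 4 ≤ a := by
      intro a ha
      have hma : a ∈ m := by
        rw [hm2]
        exact List.mem_append.mpr (Or.inl ha)
      have h1a := (hment a hma).1
      have hnot := hdisj ha
      have hax : a ≠ x := fun e => hnot (by simp [e])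
      have ha3 : a ≠ 3 := fun e => hnot (by simp [e])
      have hay : a ≠ y := fun e => hnot (by simp [e])
      rcases hxycase with ⟨hx', hy'⟩ | ⟨hx', hy'⟩ <;> omega
    have h4q : ∀ a ∈ q, 4 ≤ a := by
      intro a ha
      have hma : a ∈ m := by rw [hm2]; simp [ha]
      have h1a := (hment a hma).1
      have hxq : x ∉ 3 :: y :: q := (List.nodup_cons.mp hndc).1
      have h3q : (3 : ℕ) ∉ y :: q := (List.nodup_cons.mp (List.nodup_cons.mp hndc).2).1
      have hyq : y ∉ q :=
        (List.nodup_cons.mp (List.nodup_cons.mp (List.nodup_cons.mp hndc).2).2).1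
      have hax : a ≠ x := fun e => hxq (by simp [← e, ha])
      have ha3 : a ≠ 3 := fun e => h3q (by simp [← e, ha])
      have hay : a ≠ y := fun e => hyq (e ▸ ha)
      rcases hxycase with ⟨hx', hy'⟩ | ⟨hx', hy'⟩ <;> omega
    have hblk : blk (x == 1) = [x, 3, y] := by
      rcases hxycase with ⟨hx', hy'⟩ | ⟨hx', hy'⟩ <;> subst hx' <;> subst hy' <;> rfl
    have hmap_p : (p.map (· - 2)).map (· + 2) = p := by
      rw [List.map_map]
      exact (List.map_congr_left fun a ha => by
        have := h4p a ha
        show a - 2 + 2 = a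
        omega).trans (List.map_id p)
    have hmap_q : (q.map (· - 2)).map (· + 2) = q := by
      rw [List.map_map]
      exact (List.map_congr_left fun a ha => by
        have := h4q a ha
        show a - 2 + 2 = a
        omega).trans (List.map_id q)
    have h1p : (1 : ℕ) ∉ p.map (· - 2) := by
      intro h
      rw [List.mem_map] at h
      obtain ⟨z, hz, he⟩ := h
      have h4 := h4p z hz
      have he' : z - 2 = 1 := he
      omega
    have h1q : (1 : ℕ) ∉ q.map (· - 2) := by
      intro h
      rw [List.mem_map] at h
      obtain ⟨z, hz, he⟩ := h
      have h4 := h4q z hz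
      have he' : z - 2 = 1 := he
      omega
    have hins : ins (x == 1) (p.map (· - 2) ++ 1 :: q.map (· - 2)) = m := by
      rw [show p.map (· - 2) ++ 1 :: q.map (· - 2)
            = p.map (· - 2) ++ [1] ++ q.map (· - 2) by simp,
        ins_append, ins_append, ins_one, ins_no_one h1p, ins_no_one h1q, hblk,
        hmap_p, hmap_q, hm2]
      simp
    have hppq : (p ++ q).Perm (List.range' 4 (2 * d)) := by
      have hbig : (x :: 3 :: y :: (p ++ q)).Perm (1 :: 2 :: 3 :: List.range' 4 (2 * d)) := by
        refine (pull3 p q x 3 y).symm.trans ?_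
        rw [← hm2, ← hr3]
        exact hp
      have hstep : (1 :: 2 :: 3 :: (p ++ q)).Perm (x :: 3 :: y :: (p ++ q)) := by
        rcases hxycase with ⟨hx', hy'⟩ | ⟨hx', hy'⟩ <;> subst hx' <;> subst hy'
        · exact (List.Perm.swap 3 2 (p ++ q)).cons 1
        · exact (List.perm_middle (l₁ := [2, 3]) (a := 1) (l₂ := p ++ q)).symm
      exact (((hstep.trans hbig).cons_inv).cons_inv).cons_inv
    have hlperm : (p.map (· - 2) ++ 1 :: q.map (· - 2)).Perm (List.range' 1 (2 * d + 1)) := by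
      rw [hr1]
      refine List.perm_middle.trans (List.Perm.cons 1 ?_)
      rw [← List.map_append]
      have hh := hppq.map (· - 2)
      rwa [map_sub2_range'] at hh
    have hpinl : PinL (p.map (· - 2) ++ 1 :: q.map (· - 2)) = M d := by
      have hsp := pin_splice p q x y h4p h4q hx3 hy3
      rw [← hm2, hq] at hsp
      have hno3 : (3 : ℕ) ∉ PinL (p ++ 3 :: q) := pin_no3 p q h4p h4q
      have hno3' : (3 : ℕ) ∉ (· + 2) '' M d := by
        rintro ⟨z, hz, hze⟩
        have := M_ge hz
        have hze' : z + 2 = 3 := hze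
        omega
      have hmid : PinL (p ++ 3 :: q) = (· + 2) '' M d := by
        refine insert_cancel hno3 hno3' ?_
        rw [← hsp]
        exact M_succ d
      have hmap_l : (p.map (· - 2) ++ 1 :: q.map (· - 2)).map (· + 2) = p ++ 3 :: q := by
        rw [List.map_append, List.map_cons, hmap_p, hmap_q]
      have himg : (· + 2) '' PinL (p.map (· - 2) ++ 1 :: q.map (· - 2))
          = (· + 2) '' M d := by
        rw [← pin_map_add2, hmap_l, hmid]
      exact Set.image_injective.mpr (fun a b h => by omega) himg
    exact ⟨((x == 1), ⟨p.map (· - 2) ++ 1 :: q.map (· - 2), hlperm, hpinl⟩),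
      Subtype.ext hins⟩

lemma base : Nat.card (W 1 (M 0)) = 1 := by
  have hM : M 0 = ∅ := by
    ext z
    constructor
    · rintro ⟨k, h1, h2, rfl⟩
      exact absurd h2 (by omega)
    · intro h
      exact absurd h (Set.notMem_empty z)
  have hpin : PinL [1] = ∅ := by
    ext v
    constructor
    · rintro ⟨i, h0, hL, _⟩
      exact absurd hL (by simp)
    · intro h
      exact absurd h (Set.notMem_empty v)
  have hr : List.range' 1 1 = [1] := rfl
  have e : W 1 (M 0) := ⟨[1], by rw [hr], by rw [hpin, hM]⟩
  haveI : Nonempty (W 1 (M 0)) := ⟨e⟩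
  haveI : Subsingleton (W 1 (M 0)) := ⟨by
    rintro ⟨l, hp, _⟩ ⟨l', hp', _⟩
    have h1 : l = [1] := List.perm_singleton.mp (by rwa [hr] at hp)
    have h2 : l' = [1] := List.perm_singleton.mp (by rwa [hr] at hp')
    exact Subtype.ext (h1.trans h2.symm)⟩
  exact Nat.card_unique

lemma chain2 (d : ℕ) : Nat.card (W (2 * d + 1) (M d)) = 2 ^ d := by
  induction d with
  | zero => exact base
  | succ k ih =>
    have h := stepB k
    rw [show 2 * (k + 1) + 1 = 2 * k + 3 by ring, h, ih, pow_succ]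
    ring

lemma chain1 (m d : ℕ) : Nat.card (W (2 * d + 1 + m) (M d)) = 2 ^ m * 2 ^ d := by
  induction m with
  | zero => simpa using chain2 d
  | succ k ih =>
    rw [show 2 * d + 1 + (k + 1) = (2 * d + 1 + k) + 1 by ring,
      stepA (2 * d + 1 + k) (M d) (by omega) (fun hmem => by have := M_ge hmem; omega),
      ih, pow_succ]
    ring

end PinAux

theorem pcount_minimal_set (d n : ℕ) (hd : 0 < d) (h : 2 * d < n) :
    pcount n {x : ℕ | ∃ k, 1 ≤ k ∧ k ≤ d ∧ x = 2 * k + 1} = 2 ^ (n - d - 1) := by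
  obtain ⟨m, rfl⟩ : ∃ m, n = 2 * d + 1 + m := ⟨n - (2 * d + 1), by omega⟩
  have hM : {x : ℕ | ∃ k, 1 ≤ k ∧ k ≤ d ∧ x = 2 * k + 1} = PinAux.M d := rfl
  rw [hM, PinAux.bridge, PinAux.chain1 m d, ← pow_add]
  congr 1
  omega
end
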